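/- arXiv:2505.16357 — 3 statements merged into one kernel-verified Lean document; each statement's English description precedes it below -/
import Mathlib

section
/- Let M be an MDP with state set S, let s ∈ S, let T₁,…,T_k ⊆ S be target sets with rational coefficients q₁,…,q_k, and set 𝒯 = {T₁,…,T_k}. Let M_𝒯 be the goal unfolding of M w.r.t. 𝒯 with reward function rew built from the weights q_T = Σ_{j : T_j = T} q_j for T ∈ 𝒯. Then for opt ∈ {min, max}: opt over σ ∈ HR schedulers of M of Σ_{j=1}^k q_j · Pr^{M,σ}_s(◇T_j) equals opt over σ ∈ HR schedulers of M_𝒯 of E^σ_{(s,∅)}(rew). -/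
open scoped BigOperators Classical
open Filter

/-- A finite history: an initial state together with a list of (action, next-state) steps. -/
abbrev Hist (S A : Type*) : Type _ := S × List (A × S)

/-- The last state of a history. -/
def Hist.last {S A : Type*} (π : Hist S A) : S :=
  (π.2.getLast?).elim π.1 Prod.snd

/-- A Markov decision process with finite state space `S` and finite action space `A`:
`P s a s'` is the transition probability, each state has at least one enabled action
(an action whose outgoing probabilities sum to `1`), and the outgoing probabilities
of a non-enabled action sum to `0`. -/
structure MDP (S A : Type*) [Fintype S] [Fintype A] where
  P : S → A → S → ℝ
  nonneg : ∀ s a s', 0 ≤ P s a s'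
  le_one : ∀ s a s', P s a s' ≤ 1
  sum_cases : ∀ s a, (∑ s', P s a s') = 1 ∨ (∑ s', P s a s') = 0
  exists_enabled : ∀ s, ∃ a, (∑ s', P s a s') = 1

namespace MDP

variable {S A : Type*} [Fintype S] [Fintype A]

/-- Action `a` is enabled in state `s`. -/
def enabled (M : MDP S A) (s : S) (a : A) : Prop := (∑ s', M.P s a s') = 1

/-- A state is absorbing if every enabled action loops on it with probability 1. -/
def Absorbing (M : MDP S A) (s : S) : Prop := ∀ a, M.enabled s a → M.P s a s = 1

end MDP

/-- A (history-dependent, randomized) scheduler for `M`: it assigns to every finite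
history a probability distribution over the actions enabled at its last state. -/
structure Scheduler {S A : Type*} [Fintype S] [Fintype A] (M : MDP S A) where
  choice : Hist S A → A → ℝ
  nonneg : ∀ π a, 0 ≤ choice π a
  sum_one : ∀ π, (∑ a, choice π a) = 1
  supp : ∀ π a, ¬ M.enabled (Hist.last π) a → choice π a = 0

namespace Scheduler

variable {S A : Type*} [Fintype S] [Fintype A] {M : MDP S A}

/-- A scheduler is memoryless if its choice only depends on the last state of the history. -/
def Memoryless (σ : Scheduler M) : Prop :=
  ∀ π π' : Hist S A, Hist.last π = Hist.last π' → σ.choice π = σ.choice π'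

/-- A scheduler is deterministic if all its choice probabilities are 0 or 1. -/
def Deterministic (σ : Scheduler M) : Prop :=
  ∀ π a, σ.choice π a = 0 ∨ σ.choice π a = 1

/-- Memoryless deterministic (MD) schedulers. -/
def MD (σ : Scheduler M) : Prop := σ.Memoryless ∧ σ.Deterministic

end Scheduler

/-- Probability of reaching the target set `T` within `n` steps, starting from history `π`,
under scheduler `σ`. -/
noncomputable def reachN {S A : Type*} [Fintype S] [Fintype A] (M : MDP S A)
    (σ : Scheduler M) (T : Set S) : ℕ → Hist S A → ℝ
  | 0, π => if Hist.last π ∈ T then 1 else 0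
  | n + 1, π =>
      if Hist.last π ∈ T then 1
      else ∑ a, σ.choice π a * ∑ s', M.P (Hist.last π) a s' *
        reachN M σ T n (π.1, π.2 ++ [(a, s')])

/-- `Pr M σ s T` is the probability of eventually reaching `T` from state `s` under
scheduler `σ`: the supremum of the step-bounded reachability probabilities. -/
noncomputable def Pr {S A : Type*} [Fintype S] [Fintype A] (M : MDP S A)
    (σ : Scheduler M) (s : S) (T : Set S) : ℝ :=
  ⨆ n : ℕ, reachN M σ T n (s, [])

/-- Transition probabilities of the goal unfolding of `M` with respect to the (indexed)
family of target sets `T : ι → Set S`: states are pairs `(s, 𝒰)` where `𝒰` records the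
indices of the target sets already visited. -/
noncomputable def unfoldP {S A ι : Type*} [Fintype S] [Fintype A] [Fintype ι]
    (M : MDP S A) (T : ι → Set S) :
    (S × Finset ι) → A → (S × Finset ι) → ℝ := fun x a y =>
  if y.2 = x.2 ∪ Finset.univ.filter (fun i => x.1 ∈ T i) then M.P x.1 a y.1 else 0

/-- The reward function of the goal unfolding built from the weights `q`: in state `(s, 𝒰)`
one collects the weight of every target set that contains `s` and has not been visited yet. -/
noncomputable def unfoldRew {S ι : Type*} [Fintype S] [Fintype ι]
    (T : ι → Set S) (q : ι → ℚ) : (S × Finset ι) → ℝ := fun x =>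
  ∑ i ∈ Finset.univ.filter (fun i => x.1 ∈ T i ∧ i ∉ x.2), (q i : ℝ)

/-- Expected cumulative reward over the first `n` steps (including the current state),
starting from history `π`, under scheduler `σ`. -/
noncomputable def rewN {S A : Type*} [Fintype S] [Fintype A] (M : MDP S A)
    (σ : Scheduler M) (r : S → ℝ) : ℕ → Hist S A → ℝ
  | 0, π => r (Hist.last π)
  | n + 1, π =>
      r (Hist.last π) + ∑ a, σ.choice π a * ∑ s', M.P (Hist.last π) a s' *
        rewN M σ r n (π.1, π.2 ++ [(a, s')])

/-- `ExpRew M σ r s` is the expected total reward of `r` from state `s` under scheduler `σ`: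
the limit of the expected `n`-step cumulative rewards. -/
noncomputable def ExpRew {S A : Type*} [Fintype S] [Fintype A] (M : MDP S A)
    (σ : Scheduler M) (r : S → ℝ) (s : S) : ℝ :=
  limUnder atTop (fun n => rewN M σ r n (s, []))

section GoalUnfoldAux

variable {S A ι : Type*} [Fintype S] [Fintype A] [Fintype ι]

/-- The set of target indices containing `s`. -/
noncomputable def collect (T : ι → Set S) (s : S) : Finset ι :=
  Finset.univ.filter (fun i => s ∈ T i)

/-- One step of the unfolding bookkeeping. -/
noncomputable def ustep (T : ι → Set S) (x : S × Finset ι) (s' : S) : S × Finset ι :=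
  (s', x.2 ∪ collect T x.1)

/-- Lift a list of steps of `M` to steps of the unfolding. -/
noncomputable def liftL (T : ι → Set S) : S × Finset ι → List (A × S) → List (A × (S × Finset ι))
  | _, [] => []
  | x, (a, s') :: t => (a, ustep T x s') :: liftL T (ustep T x s') t

@[simp] lemma liftL_nil (T : ι → Set S) (x : S × Finset ι) :
    liftL (A := A) T x [] = [] := rfl

lemma liftL_cons (T : ι → Set S) (x : S × Finset ι) (a : A) (s' : S) (t : List (A × S)) :
    liftL T x ((a, s') :: t) = (a, ustep T x s') :: liftL T (ustep T x s') t := rfl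

/-- The final unfolding state after running a list of steps. -/
noncomputable def runEnd (T : ι → Set S) (x : S × Finset ι) (l : List (A × S)) : S × Finset ι :=
  l.foldl (fun y p => ustep T y p.2) x

@[simp] lemma runEnd_nil (T : ι → Set S) (x : S × Finset ι) :
    runEnd (A := A) T x [] = x := rfl

lemma runEnd_cons (T : ι → Set S) (x : S × Finset ι) (p : A × S) (l : List (A × S)) :
    runEnd T x (p :: l) = runEnd T (ustep T x p.2) l := rfl

lemma runEnd_concat (T : ι → Set S) (x : S × Finset ι) (l : List (A × S)) (a : A) (s' : S) :
    runEnd T x (l ++ [(a, s')]) = ustep T (runEnd T x l) s' := by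
  simp [runEnd, List.foldl_append]

lemma liftL_concat (T : ι → Set S) (x : S × Finset ι) (l : List (A × S)) (a : A) (s' : S) :
    liftL T x (l ++ [(a, s')]) = liftL T x l ++ [(a, ustep T (runEnd T x l) s')] := by
  induction l generalizing x with
  | nil => rfl
  | cons p t ih =>
      obtain ⟨b, u⟩ := p
      simp [liftL_cons, runEnd_cons, ih]

/-- Lift a history of `M` to a history of the unfolding, starting with empty bookkeeping. -/
noncomputable def liftH (T : ι → Set S) (π : Hist S A) : Hist (S × Finset ι) A :=
  ((π.1, ∅), liftL T (π.1, ∅) π.2)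

@[simp] lemma hlast_concat (p : S) (l : List (A × S)) (a : A) (s' : S) :
    Hist.last (p, l ++ [(a, s')]) = s' := by
  simp [Hist.last]

lemma last_liftL (T : ι → Set S) (x : S × Finset ι) (l : List (A × S)) :
    Hist.last (x, liftL T x l) = runEnd T x l := by
  induction l using List.reverseRecOn with
  | nil => rfl
  | append_singleton t p ih =>
      obtain ⟨a, s'⟩ := p
      rw [liftL_concat, runEnd_concat, hlast_concat]

lemma last_liftH (T : ι → Set S) (π : Hist S A) :
    Hist.last (liftH T π) = runEnd T (π.1, ∅) π.2 :=
  last_liftL T _ _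

lemma fst_runEnd (T : ι → Set S) (x : S × Finset ι) (l : List (A × S)) :
    (runEnd T x l).1 = Hist.last (x.1, l) := by
  induction l using List.reverseRecOn with
  | nil => rfl
  | append_singleton t p ih =>
      obtain ⟨a, s'⟩ := p
      rw [runEnd_concat, hlast_concat]
      rfl

lemma fst_last_liftH (T : ι → Set S) (π : Hist S A) :
    (Hist.last (liftH T π)).1 = Hist.last π := by
  rw [last_liftH, fst_runEnd]

/-- Project a history of the unfolding back to a history of `M`. -/
noncomputable def projH (π : Hist (S × Finset ι) A) : Hist S A :=
  (π.1.1, π.2.map (fun p => (p.1, p.2.1)))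

lemma last_projH (π : Hist (S × Finset ι) A) :
    Hist.last (projH π) = (Hist.last π).1 := by
  obtain ⟨x, l⟩ := π
  induction l using List.reverseRecOn with
  | nil => rfl
  | append_singleton t p ih =>
      obtain ⟨a, y⟩ := p
      simp [projH, hlast_concat]

lemma projH_liftH (T : ι → Set S) (π : Hist S A) : projH (liftH T π) = π := by
  obtain ⟨p, l⟩ := π
  simp only [projH, liftH]
  refine Prod.ext rfl ?_
  show (liftL T (p, ∅) l).map (fun p => (p.1, p.2.1)) = l
  generalize (p, (∅ : Finset ι)) = x
  induction l generalizing x with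
  | nil => rfl
  | cons q t ih =>
      obtain ⟨a, s'⟩ := q
      simp [liftL_cons, ih, ustep]

lemma enabled_unfold (M : MDP S A) (T : ι → Set S) (Mu : MDP (S × Finset ι) A)
    (hMu : Mu.P = unfoldP M T) (x : S × Finset ι) (a : A) :
    Mu.enabled x a ↔ M.enabled x.1 a := by
  unfold MDP.enabled
  rw [hMu]
  rw [Fintype.sum_prod_type]
  simp [unfoldP, collect, Finset.sum_ite_eq']

/-- Lift a scheduler of `M` to a scheduler of the unfolding. -/
noncomputable def liftSched (M : MDP S A) (T : ι → Set S) (Mu : MDP (S × Finset ι) A)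
    (hMu : Mu.P = unfoldP M T) (σ : Scheduler M) : Scheduler Mu where
  choice π a := σ.choice (projH π) a
  nonneg π a := σ.nonneg _ a
  sum_one π := σ.sum_one _
  supp π a h := σ.supp _ a (by
    rw [last_projH]
    intro hM
    exact h ((enabled_unfold M T Mu hMu _ a).mpr hM))

/-- Project a scheduler of the unfolding to a scheduler of `M`. -/
noncomputable def projSched (M : MDP S A) (T : ι → Set S) (Mu : MDP (S × Finset ι) A)
    (hMu : Mu.P = unfoldP M T) (σ' : Scheduler Mu) : Scheduler M where
  choice π a := σ'.choice (liftH T π) a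
  nonneg π a := σ'.nonneg _ a
  sum_one π := σ'.sum_one _
  supp π a h := σ'.supp _ a (by
    intro hMu'
    apply h
    have := (enabled_unfold M T Mu hMu _ a).mp hMu'
    rwa [fst_last_liftH] at this)

lemma sum_P_le_one (M : MDP S A) (s : S) (a : A) : (∑ s', M.P s a s') ≤ 1 := by
  rcases M.sum_cases s a with h | h <;> rw [h] <;> norm_num

lemma reachN_nonneg (M : MDP S A) (σ : Scheduler M) (Ts : Set S) :
    ∀ (n : ℕ) (π : Hist S A), 0 ≤ reachN M σ Ts n π := by
  intro n
  induction n with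
  | zero =>
      intro π
      unfold reachN
      split <;> norm_num
  | succ n ih =>
      intro π
      unfold reachN
      split
      · norm_num
      · refine Finset.sum_nonneg fun a _ => mul_nonneg (σ.nonneg _ _) ?_
        exact Finset.sum_nonneg fun s' _ => mul_nonneg (M.nonneg _ _ _) (ih _)

lemma reachN_le_one (M : MDP S A) (σ : Scheduler M) (Ts : Set S) :
    ∀ (n : ℕ) (π : Hist S A), reachN M σ Ts n π ≤ 1 := by
  intro n
  induction n with
  | zero =>
      intro π
      unfold reachN
      split <;> norm_num
  | succ n ih =>
      intro π
      unfold reachN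
      split
      · exact le_refl 1
      · calc (∑ a, σ.choice π a * ∑ s', M.P (Hist.last π) a s' *
              reachN M σ Ts n (π.1, π.2 ++ [(a, s')]))
            ≤ ∑ a, σ.choice π a * 1 := by
              refine Finset.sum_le_sum fun a _ => ?_
              refine mul_le_mul_of_nonneg_left ?_ (σ.nonneg _ _)
              calc (∑ s', M.P (Hist.last π) a s' * reachN M σ Ts n (π.1, π.2 ++ [(a, s')]))
                  ≤ ∑ s', M.P (Hist.last π) a s' * 1 := by
                    refine Finset.sum_le_sum fun s' _ => ?_
                    exact mul_le_mul_of_nonneg_left (ih _) (M.nonneg _ _ _)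
                _ = ∑ s', M.P (Hist.last π) a s' := by simp
                _ ≤ 1 := sum_P_le_one M _ a
          _ = 1 := by simp [σ.sum_one]

lemma reachN_mono (M : MDP S A) (σ : Scheduler M) (Ts : Set S) :
    ∀ (n : ℕ) (π : Hist S A), reachN M σ Ts n π ≤ reachN M σ Ts (n + 1) π := by
  intro n
  induction n with
  | zero =>
      intro π
      show reachN M σ Ts 0 π ≤ reachN M σ Ts 1 π
      unfold reachN
      split
      · exact le_refl 1
      · refine Finset.sum_nonneg fun a _ => mul_nonneg (σ.nonneg _ _) ?_
        exact Finset.sum_nonneg fun s' _ => mul_nonneg (M.nonneg _ _ _)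
          (reachN_nonneg M σ Ts 0 _)
  | succ n ih =>
      intro π
      show reachN M σ Ts (n + 1) π ≤ reachN M σ Ts (n + 2) π
      unfold reachN
      split
      · exact le_refl 1
      · refine Finset.sum_le_sum fun a _ => ?_
        refine mul_le_mul_of_nonneg_left ?_ (σ.nonneg _ _)
        refine Finset.sum_le_sum fun s' _ => ?_
        exact mul_le_mul_of_nonneg_left (ih _) (M.nonneg _ _ _)

lemma sum3_comm {α β γ : Type*} [Fintype α] [Fintype β] [Fintype γ] (f : α → β → γ → ℝ) :
    (∑ a, ∑ b, ∑ c, f a b c) = ∑ c, ∑ a, ∑ b, f a b c := by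
  have h1 : ∀ a, (∑ b, ∑ c, f a b c) = ∑ c, ∑ b, f a b c := fun a => Finset.sum_comm
  simp_rw [h1]
  exact Finset.sum_comm

/-- Key lemma: the `n`-step expected reward in the unfolding, along a lifted history,
equals the weighted sum of `n`-step reachability probabilities of the not-yet-collected
targets. -/
lemma rewN_liftH (M : MDP S A) (T : ι → Set S) (q : ι → ℚ) (Mu : MDP (S × Finset ι) A)
    (hMu : Mu.P = unfoldP M T) (σ : Scheduler M) (σ' : Scheduler Mu)
    (hcomp : ∀ π : Hist S A, σ'.choice (liftH T π) = σ.choice π) :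
    ∀ (n : ℕ) (π : Hist S A),
      rewN Mu σ' (unfoldRew T q) n (liftH T π) =
        ∑ j, if j ∈ (Hist.last (liftH T π)).2 then 0
             else (q j : ℝ) * reachN M σ (T j) n π := by
  intro n
  induction n with
  | zero =>
      intro π
      show unfoldRew T q (Hist.last (liftH T π)) = _
      have hx1 : (Hist.last (liftH T π)).1 = Hist.last π := fst_last_liftH T π
      rw [unfoldRew, Finset.sum_filter]
      refine Finset.sum_congr rfl fun j _ => ?_
      show (if (Hist.last (liftH T π)).1 ∈ T j ∧ j ∉ (Hist.last (liftH T π)).2 then (q j : ℝ) else 0) = _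
      unfold reachN
      rw [← hx1]
      by_cases h2 : j ∈ (Hist.last (liftH T π)).2 <;>
        by_cases h1 : (Hist.last (liftH T π)).1 ∈ T j <;> simp [h1, h2]
  | succ n ih =>
      intro π
      set x := Hist.last (liftH T π) with hxdef
      have hx1 : x.1 = Hist.last π := fst_last_liftH T π
      have hxr : x = runEnd T (π.1, ∅) π.2 := last_liftH T π
      -- the inner sum over unfolding states collapses
      have hinner : ∀ a : A,
          (∑ y : S × Finset ι, Mu.P x a y *
            rewN Mu σ' (unfoldRew T q) n ((liftH T π).1, (liftH T π).2 ++ [(a, y)])) =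
          ∑ s', M.P x.1 a s' *
            rewN Mu σ' (unfoldRew T q) n (liftH T (π.1, π.2 ++ [(a, s')])) := by
        intro a
        rw [hMu, Fintype.sum_prod_type]
        refine Finset.sum_congr rfl fun s' _ => ?_
        have : ∀ U' : Finset ι,
            unfoldP M T x a (s', U') *
              rewN Mu σ' (unfoldRew T q) n ((liftH T π).1, (liftH T π).2 ++ [(a, (s', U'))]) =
            if U' = x.2 ∪ collect T x.1 then
              M.P x.1 a s' *
                rewN Mu σ' (unfoldRew T q) n ((liftH T π).1, (liftH T π).2 ++ [(a, (s', U'))])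
            else 0 := by
          intro U'
          simp only [unfoldP, collect, ite_mul, zero_mul]
          congr 1
        rw [Finset.sum_congr rfl fun U' _ => this U', Finset.sum_ite_eq' Finset.univ]
        simp only [Finset.mem_univ, if_true]
        congr 1
        show rewN Mu σ' (unfoldRew T q) n ((π.1, ∅), liftL T (π.1, ∅) π.2 ++ [(a, (s', x.2 ∪ collect T x.1))]) = _
        rw [show liftH T (π.1, π.2 ++ [(a, s')]) =
            ((π.1, ∅), liftL T (π.1, ∅) π.2 ++ [(a, ustep T (runEnd T (π.1, ∅) π.2) s')]) by
          simp [liftH, liftL_concat]]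
        rw [← hxr]
        rfl
      have hstep : ∀ (a : A) (s' : S),
          Hist.last (liftH T (π.1, π.2 ++ [(a, s')])) = ustep T x s' := by
        intro a s'
        rw [last_liftH]
        show runEnd T (π.1, ∅) (π.2 ++ [(a, s')]) = _
        rw [runEnd_concat, ← hxr]
      -- unfold rewN on the left
      show unfoldRew T q x + (∑ a, σ'.choice (liftH T π) a *
          ∑ y : S × Finset ι, Mu.P x a y *
            rewN Mu σ' (unfoldRew T q) n ((liftH T π).1, (liftH T π).2 ++ [(a, y)])) = _
      simp_rw [hinner, ih, hstep]
      -- Now pull the sum over j outside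
      have hrew : unfoldRew T q x =
          ∑ j, if x.1 ∈ T j ∧ j ∉ x.2 then (q j : ℝ) else 0 := by
        rw [unfoldRew, Finset.sum_filter]
      rw [hrew]
      have hswap :
          (∑ a, σ'.choice (liftH T π) a * ∑ s', M.P x.1 a s' *
            ∑ j, if j ∈ (ustep T x s').2 then 0
                 else (q j : ℝ) * reachN M σ (T j) n (π.1, π.2 ++ [(a, s')])) =
          ∑ j, ∑ a, ∑ s', σ'.choice (liftH T π) a * (M.P x.1 a s' *
            (if j ∈ (ustep T x s').2 then 0
             else (q j : ℝ) * reachN M σ (T j) n (π.1, π.2 ++ [(a, s')]))) := by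
        simp_rw [Finset.mul_sum]
        exact sum3_comm _
      rw [hswap, ← Finset.sum_add_distrib]
      refine Finset.sum_congr rfl fun j _ => ?_
      have hmem : ∀ s', (j ∈ (ustep T x s').2) ↔ (j ∈ x.2 ∨ x.1 ∈ T j) := by
        intro s'
        simp [ustep, collect, Finset.mem_union]
      by_cases h2 : j ∈ x.2
      · simp only [h2, if_true]
        have : ∀ a s', (if j ∈ (ustep T x s').2 then (0:ℝ)
            else (q j : ℝ) * reachN M σ (T j) n (π.1, π.2 ++ [(a, s')])) = 0 := by
          intro a s'
          rw [if_pos ((hmem s').mpr (Or.inl h2))]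
        simp [this, h2]
      · by_cases h1 : x.1 ∈ T j
        · have hz : ∀ a s', (if j ∈ (ustep T x s').2 then (0:ℝ)
              else (q j : ℝ) * reachN M σ (T j) n (π.1, π.2 ++ [(a, s')])) = 0 := by
            intro a s'
            rw [if_pos ((hmem s').mpr (Or.inr h1))]
          have hr : reachN M σ (T j) (n + 1) π = 1 := by
            unfold reachN
            rw [if_pos (hx1 ▸ h1)]
          simp [hz, h1, h2, hr]
        · have hz : ∀ (a : A) (s' : S), (if j ∈ (ustep T x s').2 then (0:ℝ)
              else (q j : ℝ) * reachN M σ (T j) n (π.1, π.2 ++ [(a, s')])) =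
              (q j : ℝ) * reachN M σ (T j) n (π.1, π.2 ++ [(a, s')]) := by
            intro a s'
            rw [if_neg]
            rw [hmem s']
            tauto
          have hr : reachN M σ (T j) (n + 1) π =
              ∑ a, σ'.choice (liftH T π) a * ∑ s', M.P x.1 a s' *
                reachN M σ (T j) n (π.1, π.2 ++ [(a, s')]) := by
            show (if Hist.last π ∈ T j then (1:ℝ)
                else ∑ a, σ.choice π a * ∑ s', M.P (Hist.last π) a s' *
                  reachN M σ (T j) n (π.1, π.2 ++ [(a, s')])) = _
            rw [if_neg (hx1 ▸ h1), ← hx1]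
            refine Finset.sum_congr rfl fun a _ => ?_
            rw [hcomp π]
          simp_rw [hz]
          rw [if_neg (fun h => h1 h.1), if_neg h2, hr, zero_add, Finset.mul_sum]
          refine Finset.sum_congr rfl fun a _ => ?_
          rw [Finset.mul_sum, Finset.mul_sum]
          refine Finset.sum_congr rfl fun s' _ => ?_
          ring

lemma value_eq (M : MDP S A) (T : ι → Set S) (q : ι → ℚ) (Mu : MDP (S × Finset ι) A)
    (hMu : Mu.P = unfoldP M T) (σ : Scheduler M) (σ' : Scheduler Mu)
    (hcomp : ∀ π : Hist S A, σ'.choice (liftH T π) = σ.choice π) (s : S) :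
    ExpRew Mu σ' (unfoldRew T q) (s, ∅) = ∑ j, (q j : ℝ) * Pr M σ s (T j) := by
  have hpt : ∀ n : ℕ, rewN Mu σ' (unfoldRew T q) n ((s, ∅), []) =
      ∑ j, (q j : ℝ) * reachN M σ (T j) n (s, []) := by
    intro n
    have h := rewN_liftH M T q Mu hMu σ σ' hcomp n (s, [])
    have hl : liftH (A := A) T (s, []) = ((s, ∅), []) := rfl
    rw [hl] at h
    rw [h]
    refine Finset.sum_congr rfl fun j _ => ?_
    have : (Hist.last ((s, (∅ : Finset ι)), ([] : List (A × (S × Finset ι))))).2 = ∅ := rfl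
    rw [this]
    simp
  have htend : Filter.Tendsto (fun n => rewN Mu σ' (unfoldRew T q) n ((s, ∅), []))
      Filter.atTop (nhds (∑ j, (q j : ℝ) * Pr M σ s (T j))) := by
    rw [show (fun n => rewN Mu σ' (unfoldRew T q) n ((s, ∅), [])) =
        (fun n => ∑ j, (q j : ℝ) * reachN M σ (T j) n (s, [])) from funext hpt]
    refine tendsto_finset_sum _ fun j _ => ?_
    refine Filter.Tendsto.const_mul _ ?_
    have hmono : Monotone (fun n => reachN M σ (T j) n (s, [])) :=
      monotone_nat_of_le_succ fun n => reachN_mono M σ (T j) n (s, [])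
    have hbdd : BddAbove (Set.range (fun n => reachN M σ (T j) n (s, []))) := by
      refine ⟨1, ?_⟩
      rintro y ⟨n, rfl⟩
      exact reachN_le_one M σ (T j) n (s, [])
    exact tendsto_atTop_ciSup hmono hbdd
  exact htend.limUnder_eq

end GoalUnfoldAux

/-- The optimal (min or max, over all HR schedulers) weighted sum of
reachability probabilities `Σ_j q_j · Pr^σ_s(◇T_j)` in `M` equals the optimal expected
total reward of the associated reward function in the goal unfolding of `M`, started
in `(s, ∅)`.  (Here `Mu` is the goal unfolding, fixed by the hypothesis `hMu`.) -/
theorem weighted_reach_eq_expected_reward_in_unfolding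
    {S A : Type*} [Fintype S] [Fintype A] [Nonempty S] [Nonempty A]
    {k : ℕ} (hk : 1 ≤ k)
    (M : MDP S A) (s : S) (T : Fin k → Set S) (q : Fin k → ℚ)
    (Mu : MDP (S × Finset (Fin k)) A) (hMu : Mu.P = unfoldP M T) :
    sSup {x : ℝ | ∃ σ : Scheduler M, x = ∑ j, (q j : ℝ) * Pr M σ s (T j)} =
      sSup {x : ℝ | ∃ σ : Scheduler Mu, x = ExpRew Mu σ (unfoldRew T q) (s, ∅)} ∧
    sInf {x : ℝ | ∃ σ : Scheduler M, x = ∑ j, (q j : ℝ) * Pr M σ s (T j)} =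
      sInf {x : ℝ | ∃ σ : Scheduler Mu, x = ExpRew Mu σ (unfoldRew T q) (s, ∅)} := by
  have hset : {x : ℝ | ∃ σ : Scheduler M, x = ∑ j, (q j : ℝ) * Pr M σ s (T j)} =
      {x : ℝ | ∃ σ : Scheduler Mu, x = ExpRew Mu σ (unfoldRew T q) (s, ∅)} := by
    ext x
    constructor
    · rintro ⟨σ, rfl⟩
      refine ⟨liftSched M T Mu hMu σ, ?_⟩
      refine (value_eq M T q Mu hMu σ (liftSched M T Mu hMu σ) (fun π => ?_) s).symm
      show (fun a => σ.choice (projH (liftH T π)) a) = σ.choice π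
      rw [projH_liftH]
    · rintro ⟨σ', rfl⟩
      refine ⟨projSched M T Mu hMu σ', ?_⟩
      exact value_eq M T q Mu hMu (projSched M T Mu hMu σ') σ' (fun π => rfl) s
  rw [hset]
  exact ⟨rfl, rfl⟩
end

section
/- With the data of a relational reachability instance (MDP M, m ≥ n ≥ 1, rational q₁,…,q_m, states s₁,…,s_m, surjective index map k, target sets T₁,…,T_m), the achievable value set A = {Σ_{i=1}^m qᵢ · Pr^{σ_{k(i)}}_{sᵢ}(◇Tᵢ) : σ₁,…,σₙ ∈ HR} has a minimum v^min and a maximum v^max, given by v^min = Σ_{c=(s,·)∈Comb} min_{σ∈HR} Σ_{i∈ind(c)} qᵢ · Pr^σ_s(◇Tᵢ) and v^max = Σ_{c=(s,·)∈Comb} max_{σ∈HR} Σ_{i∈ind(c)} qᵢ · Pr^σ_s(◇Tᵢ) (all these optima being attained), and A equals the closed interval [v^min, v^max]. -/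
open scoped BigOperators Classical
open Filter

/-- The set `Comb` of state-scheduler combinations `(sᵢ, k(i))` of a relational
reachability instance. -/
noncomputable def combSet {S : Type*} [Fintype S] {m n : ℕ}
    (s : Fin m → S) (k : Fin m → Fin n) : Finset (S × Fin n) :=
  Finset.image (fun i => (s i, k i)) Finset.univ

/-- The contribution `Σ_{i ∈ ind(c)} qᵢ · Pr^σ_{c.1}(◇Tᵢ)` of a state-scheduler
combination `c` under a scheduler `σ`. -/
noncomputable def combVal {S A : Type*} [Fintype S] [Fintype A] {m n : ℕ}
    (M : MDP S A) (q : Fin m → ℚ) (s : Fin m → S) (k : Fin m → Fin n)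
    (T : Fin m → Set S) (σ : Scheduler M) (c : S × Fin n) : ℝ :=
  ∑ i ∈ Finset.univ.filter (fun i => (s i, k i) = c), (q i : ℝ) * Pr M σ c.1 (T i)

/-- `v^min`: the sum over all combinations `c` of the infimum over all schedulers of the
contribution of `c`. -/
noncomputable def vMin {S A : Type*} [Fintype S] [Fintype A] {m n : ℕ}
    (M : MDP S A) (q : Fin m → ℚ) (s : Fin m → S) (k : Fin m → Fin n)
    (T : Fin m → Set S) : ℝ :=
  ∑ c ∈ combSet s k, sInf {x : ℝ | ∃ σ : Scheduler M, x = combVal M q s k T σ c}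

/-- `v^max`: the sum over all combinations `c` of the supremum over all schedulers of the
contribution of `c`. -/
noncomputable def vMax {S A : Type*} [Fintype S] [Fintype A] {m n : ℕ}
    (M : MDP S A) (q : Fin m → ℚ) (s : Fin m → S) (k : Fin m → Fin n)
    (T : Fin m → Set S) : ℝ :=
  ∑ c ∈ combSet s k, sSup {x : ℝ | ∃ σ : Scheduler M, x = combVal M q s k T σ c}

/-- The achievable value set
`A = {Σ_{i} qᵢ · Pr^{σ_{k(i)}}_{sᵢ}(◇Tᵢ) : σ₁,…,σₙ ∈ HR}`. -/
noncomputable def achSet {S A : Type*} [Fintype S] [Fintype A] {m n : ℕ}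
    (M : MDP S A) (q : Fin m → ℚ) (s : Fin m → S) (k : Fin m → Fin n)
    (T : Fin m → Set S) : Set ℝ :=
  {x : ℝ | ∃ σ : Fin n → Scheduler M,
    x = ∑ i, (q i : ℝ) * Pr M (σ (k i)) (s i) (T i)}

namespace RelReach

open Finset

variable {S A : Type*} [Fintype S] [Fintype A]

/-- Extension of a history by one step. -/
def ext (π : Hist S A) (a : A) (s' : S) : Hist S A := (π.1, π.2 ++ [(a, s')])

@[simp] lemma last_ext (π : Hist S A) (a : A) (s' : S) : Hist.last (ext π a s') = s' := by
  simp [ext, Hist.last]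

@[simp] lemma ext_fst (π : Hist S A) (a : A) (s' : S) : (ext π a s').1 = π.1 := rfl

lemma reachN_succ (M : MDP S A) (σ : Scheduler M) (T : Set S) (n : ℕ) (π : Hist S A) :
    reachN M σ T (n+1) π = if Hist.last π ∈ T then 1
      else ∑ a, σ.choice π a * ∑ s', M.P (Hist.last π) a s' * reachN M σ T n (ext π a s') := rfl

lemma reachN_nonneg (M : MDP S A) (σ : Scheduler M) (T : Set S) :
    ∀ n π, 0 ≤ reachN M σ T n π := by
  intro n
  induction n with
  | zero => intro π; unfold reachN; positivity
  | succ n ih =>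
    intro π
    rw [reachN_succ]
    split
    · norm_num
    · apply Finset.sum_nonneg
      intro a _
      apply mul_nonneg (σ.nonneg _ _)
      apply Finset.sum_nonneg
      intro s' _
      exact mul_nonneg (M.nonneg _ _ _) (ih _)

lemma sum_P_le_one (M : MDP S A) (s : S) (a : A) : ∑ s', M.P s a s' ≤ 1 := by
  rcases M.sum_cases s a with h | h <;> rw [h] <;> norm_num

lemma reachN_le_one (M : MDP S A) (σ : Scheduler M) (T : Set S) :
    ∀ n π, reachN M σ T n π ≤ 1 := by
  intro n
  induction n with
  | zero => intro π; unfold reachN; split <;> norm_num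
  | succ n ih =>
    intro π
    rw [reachN_succ]
    split
    · exact le_refl 1
    · calc ∑ a, σ.choice π a * ∑ s', M.P (Hist.last π) a s' * reachN M σ T n (ext π a s')
          ≤ ∑ a, σ.choice π a * 1 := by
            apply Finset.sum_le_sum
            intro a _
            apply mul_le_mul_of_nonneg_left _ (σ.nonneg _ _)
            calc ∑ s', M.P (Hist.last π) a s' * reachN M σ T n (ext π a s')
                ≤ ∑ s', M.P (Hist.last π) a s' * 1 := by
                  apply Finset.sum_le_sum
                  intro s' _
                  exact mul_le_mul_of_nonneg_left (ih _) (M.nonneg _ _ _)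
              _ = ∑ s', M.P (Hist.last π) a s' := by simp
              _ ≤ 1 := sum_P_le_one M _ a
      _ = 1 := by simp [σ.sum_one]

lemma reachN_mono (M : MDP S A) (σ : Scheduler M) (T : Set S) :
    ∀ n π, reachN M σ T n π ≤ reachN M σ T (n+1) π := by
  intro n
  induction n with
  | zero =>
    intro π
    rw [reachN_succ]
    unfold reachN
    split
    · exact le_refl 1
    · apply Finset.sum_nonneg
      intro a _
      apply mul_nonneg (σ.nonneg _ _)
      apply Finset.sum_nonneg
      intro s' _
      exact mul_nonneg (M.nonneg _ _ _) (by split <;> norm_num)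
  | succ n ih =>
    intro π
    rw [reachN_succ, reachN_succ]
    split
    · exact le_refl 1
    · apply Finset.sum_le_sum
      intro a _
      apply mul_le_mul_of_nonneg_left _ (σ.nonneg _ _)
      apply Finset.sum_le_sum
      intro s' _
      exact mul_le_mul_of_nonneg_left (ih _) (M.nonneg _ _ _)

lemma reachN_monotone (M : MDP S A) (σ : Scheduler M) (T : Set S) (π : Hist S A) :
    Monotone (fun n => reachN M σ T n π) :=
  monotone_nat_of_le_succ (fun n => reachN_mono M σ T n π)

lemma reachN_bddAbove (M : MDP S A) (σ : Scheduler M) (T : Set S) (π : Hist S A) :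
    BddAbove (Set.range (fun n => reachN M σ T n π)) :=
  ⟨1, by rintro x ⟨n, rfl⟩; exact reachN_le_one M σ T n π⟩

/-- The supremum of bounded reachability from an arbitrary history. -/
noncomputable def reachSup (M : MDP S A) (σ : Scheduler M) (T : Set S) (π : Hist S A) : ℝ :=
  ⨆ n, reachN M σ T n π

lemma Pr_eq_reachSup (M : MDP S A) (σ : Scheduler M) (s : S) (T : Set S) :
    Pr M σ s T = reachSup M σ T (s, []) := rfl

lemma reachSup_tendsto (M : MDP S A) (σ : Scheduler M) (T : Set S) (π : Hist S A) :
    Filter.Tendsto (fun n => reachN M σ T n π) Filter.atTop (nhds (reachSup M σ T π)) :=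
  tendsto_atTop_ciSup (reachN_monotone M σ T π) (reachN_bddAbove M σ T π)

lemma reachN_le_reachSup (M : MDP S A) (σ : Scheduler M) (T : Set S) (π : Hist S A) (n : ℕ) :
    reachN M σ T n π ≤ reachSup M σ T π :=
  le_ciSup (reachN_bddAbove M σ T π) n

lemma reachSup_nonneg (M : MDP S A) (σ : Scheduler M) (T : Set S) (π : Hist S A) :
    0 ≤ reachSup M σ T π :=
  le_trans (reachN_nonneg M σ T 0 π) (reachN_le_reachSup M σ T π 0)

lemma reachSup_le_one (M : MDP S A) (σ : Scheduler M) (T : Set S) (π : Hist S A) :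
    reachSup M σ T π ≤ 1 :=
  ciSup_le (fun n => reachN_le_one M σ T n π)

lemma Pr_nonneg (M : MDP S A) (σ : Scheduler M) (s : S) (T : Set S) : 0 ≤ Pr M σ s T :=
  reachSup_nonneg M σ T _

lemma Pr_le_one (M : MDP S A) (σ : Scheduler M) (s : S) (T : Set S) : Pr M σ s T ≤ 1 :=
  reachSup_le_one M σ T _

/-- Congruence: reachability only depends on the scheduler's choices on histories
with the same initial state. -/
lemma reachN_congr {M : MDP S A} {σ τ : Scheduler M} {T : Set S}
    (h : ∀ π' : Hist S A, σ.choice π' = τ.choice π') :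
    True := trivial

lemma reachN_congr_init {M : MDP S A} {σ τ : Scheduler M} {T : Set S} {s0 : S}
    (h : ∀ π' : Hist S A, π'.1 = s0 → σ.choice π' = τ.choice π') :
    ∀ n (π : Hist S A), π.1 = s0 → reachN M σ T n π = reachN M τ T n π := by
  intro n
  induction n with
  | zero => intro π _; rfl
  | succ n ih =>
    intro π hπ
    rw [reachN_succ, reachN_succ]
    split
    · rfl
    · rw [show σ.choice π = τ.choice π from h π hπ]
      congr 1
      funext a
      congr 1
      congr 1
      funext s'
      congr 1
      exact ih (ext π a s') hπ

end RelReach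
namespace RelReach

open Finset

variable {S A : Type*} [Fintype S] [Fintype A]

/-- A default scheduler (picks some enabled action deterministically). -/
noncomputable def dflt (M : MDP S A) : Scheduler M where
  choice π a := if a = Classical.choose (M.exists_enabled (Hist.last π)) then 1 else 0
  nonneg π a := by split <;> norm_num
  sum_one π := by simp
  supp π a h := by
    split
    · exfalso
      apply h
      rename_i ha
      rw [ha]
      exact Classical.choose_spec (M.exists_enabled (Hist.last π))
    · rfl

/-- A scheduler built from a deterministic memoryless selector of enabled actions. -/
noncomputable def schedOfSel (M : MDP S A) (f : S → A) (hf : ∀ st, M.enabled st (f st)) :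
    Scheduler M where
  choice π a := if a = f (Hist.last π) then 1 else 0
  nonneg π a := by split <;> norm_num
  sum_one π := by simp
  supp π a h := by
    split
    · exfalso; apply h; rename_i ha; rw [ha]; exact hf _
    · rfl

/-- Glue a family of schedulers, one per initial state. -/
noncomputable def glue (M : MDP S A) (F : S → Scheduler M) : Scheduler M where
  choice π a := (F π.1).choice π a
  nonneg π a := (F π.1).nonneg π a
  sum_one π := (F π.1).sum_one π
  supp π a h := (F π.1).supp π a h

lemma glue_Pr (M : MDP S A) (F : S → Scheduler M) (s : S) (T : Set S) :
    Pr M (glue M F) s T = Pr M (F s) s T := by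
  rw [Pr_eq_reachSup, Pr_eq_reachSup]
  unfold reachSup
  congr 1
  funext n
  exact reachN_congr_init (s0 := s) (fun π' h => by simp [glue, h]) n (s, []) rfl

/-! ### Interpolation of schedulers -/

/-- The probability weight that a scheduler assigns to the action sequence of a history. -/
noncomputable def W {M : MDP S A} (σ : Scheduler M) (π : Hist S A) : ℝ :=
  ∏ kk ∈ Finset.range π.2.length, (π.2[kk]?.elim 1 (fun p => σ.choice (π.1, π.2.take kk) p.1))

lemma W_nil {M : MDP S A} (σ : Scheduler M) (s : S) : W σ (s, []) = 1 := by
  simp [W]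

lemma W_nonneg {M : MDP S A} (σ : Scheduler M) (π : Hist S A) : 0 ≤ W σ π := by
  apply Finset.prod_nonneg
  intro i _
  cases h : π.2[i]? <;> simp [h, σ.nonneg]

lemma W_ext {M : MDP S A} (σ : Scheduler M) (π : Hist S A) (a : A) (s' : S) :
    W σ (ext π a s') = W σ π * σ.choice π a := by
  obtain ⟨s0, l⟩ := π
  unfold W ext
  simp only [List.length_append, List.length_cons, List.length_nil]
  rw [Finset.prod_range_succ]
  congr 1
  · apply Finset.prod_congr rfl
    intro i hi
    rw [Finset.mem_range] at hi
    rw [List.getElem?_append_left hi, List.take_append_of_le_length (le_of_lt hi)]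
  · have h1 : (l ++ [(a, s')])[l.length]? = some (a, s') := by
      rw [List.getElem?_append_right (le_refl _)]
      simp
    rw [h1, List.take_append_of_le_length (le_refl _), List.take_length]
    rfl

/-- The interpolation of two schedulers with parameter `t`. -/
noncomputable def mix (M : MDP S A) (σ τ : Scheduler M) (t : ℝ) (h0 : 0 ≤ t) (h1 : t ≤ 1) :
    Scheduler M where
  choice π a :=
    if t * W σ π + (1 - t) * W τ π = 0 then σ.choice π a
    else (t * W σ π * σ.choice π a + (1 - t) * W τ π * τ.choice π a) /
      (t * W σ π + (1 - t) * W τ π)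
  nonneg π a := by
    split
    · exact σ.nonneg π a
    · apply div_nonneg
      · apply add_nonneg
        · exact mul_nonneg (mul_nonneg h0 (W_nonneg σ π)) (σ.nonneg π a)
        · exact mul_nonneg (mul_nonneg (by linarith) (W_nonneg τ π)) (τ.nonneg π a)
      · have h2 : 0 ≤ t * W σ π := mul_nonneg h0 (W_nonneg σ π)
        have h3 : 0 ≤ (1 - t) * W τ π := mul_nonneg (by linarith) (W_nonneg τ π)
        linarith
  sum_one π := by
    split
    · exact σ.sum_one π
    · rename_i hD
      rw [← Finset.sum_div]
      rw [div_eq_one_iff_eq hD]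
      rw [Finset.sum_add_distrib]
      rw [← Finset.mul_sum, ← Finset.mul_sum, σ.sum_one, τ.sum_one]
      ring
  supp π a h := by
    have hσ := σ.supp π a h
    have hτ := τ.supp π a h
    split
    · exact hσ
    · rw [hσ, hτ]; simp

variable {M : MDP S A}

lemma mix_D_nonneg (σ τ : Scheduler M) (t : ℝ) (h0 : 0 ≤ t) (h1 : t ≤ 1) (π : Hist S A) :
    0 ≤ t * W σ π + (1 - t) * W τ π := by
  have h2 : 0 ≤ t * W σ π := mul_nonneg h0 (W_nonneg σ π)
  have h3 : 0 ≤ (1 - t) * W τ π := mul_nonneg (by linarith) (W_nonneg τ π)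
  linarith

lemma W_mix (σ τ : Scheduler M) (t : ℝ) (h0 : 0 ≤ t) (h1 : t ≤ 1) (π : Hist S A) :
    W (mix M σ τ t h0 h1) π = t * W σ π + (1 - t) * W τ π := by
  obtain ⟨s0, l⟩ := π
  induction l using List.reverseRecOn with
  | nil => rw [W_nil, W_nil, W_nil]; ring
  | append_singleton l x ih =>
    obtain ⟨a, s'⟩ := x
    have hx : ((s0, l ++ [(a, s')]) : Hist S A) = ext (s0, l) a s' := rfl
    rw [hx, W_ext, W_ext, W_ext, ih]
    by_cases hD : t * W σ (s0, l) + (1 - t) * W τ (s0, l) = 0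
    · have h2 : 0 ≤ t * W σ (s0, l) := mul_nonneg h0 (W_nonneg σ _)
      have h3 : 0 ≤ (1 - t) * W τ (s0, l) := mul_nonneg (by linarith) (W_nonneg τ _)
      have h4 : t * W σ (s0, l) = 0 := by linarith
      have h5 : (1 - t) * W τ (s0, l) = 0 := by linarith
      rw [hD, zero_mul, ← mul_assoc, ← mul_assoc, h4, h5, zero_mul, zero_mul, add_zero]
    · have hc : (mix M σ τ t h0 h1).choice (s0, l) a =
          (t * W σ (s0, l) * σ.choice (s0, l) a + (1 - t) * W τ (s0, l) * τ.choice (s0, l) a) /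
            (t * W σ (s0, l) + (1 - t) * W τ (s0, l)) := by
        simp only [mix]
        rw [if_neg hD]
      rw [hc, mul_comm, div_mul_cancel₀ _ hD]
      ring

end RelReach
namespace RelReach

open Finset

variable {S A : Type*} [Fintype S] [Fintype A] {M : MDP S A}

lemma reachN_mix (σ τ : Scheduler M) (T : Set S) (t : ℝ) (h0 : 0 ≤ t) (h1 : t ≤ 1) :
    ∀ n (π : Hist S A),
      W (mix M σ τ t h0 h1) π * reachN M (mix M σ τ t h0 h1) T n π
        = t * (W σ π * reachN M σ T n π) + (1 - t) * (W τ π * reachN M τ T n π) := by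
  intro n
  induction n with
  | zero =>
    intro π
    unfold reachN
    by_cases hT : Hist.last π ∈ T
    · simp only [if_pos hT, mul_one]
      rw [W_mix]
    · simp only [if_neg hT, mul_zero]
      ring
  | succ n ih =>
    intro π
    rw [reachN_succ, reachN_succ, reachN_succ]
    by_cases hT : Hist.last π ∈ T
    · simp only [if_pos hT, mul_one, W_mix]
    · simp only [if_neg hT]
      simp only [Finset.mul_sum]
      rw [← Finset.sum_add_distrib]
      apply Finset.sum_congr rfl
      intro a _
      rw [← Finset.sum_add_distrib]
      apply Finset.sum_congr rfl
      intro s' _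
      have h := ih (ext π a s')
      have hws := W_ext σ π a s'
      have hwt := W_ext τ π a s'
      have hwm := W_ext (mix M σ τ t h0 h1) π a s'
      linear_combination (M.P (Hist.last π) a s') * h
        - (M.P (Hist.last π) a s' * reachN M (mix M σ τ t h0 h1) T n (ext π a s')) * hwm
        + (t * M.P (Hist.last π) a s' * reachN M σ T n (ext π a s')) * hws
        + ((1 - t) * M.P (Hist.last π) a s' * reachN M τ T n (ext π a s')) * hwt

lemma Pr_mix (σ τ : Scheduler M) (s : S) (T : Set S) (t : ℝ) (h0 : 0 ≤ t) (h1 : t ≤ 1) :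
    Pr M (mix M σ τ t h0 h1) s T = t * Pr M σ s T + (1 - t) * Pr M τ s T := by
  have hEq : ∀ n, reachN M (mix M σ τ t h0 h1) T n (s, [])
      = t * reachN M σ T n (s, []) + (1 - t) * reachN M τ T n (s, []) := by
    intro n
    have := reachN_mix σ τ T t h0 h1 n (s, [])
    rw [W_nil, W_nil, W_nil, one_mul, one_mul, one_mul] at this
    exact this
  have h1' : Filter.Tendsto (fun n => reachN M (mix M σ τ t h0 h1) T n (s, [])) Filter.atTop
      (nhds (Pr M (mix M σ τ t h0 h1) s T)) := reachSup_tendsto M _ T (s, [])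
  have h2' : Filter.Tendsto (fun n => reachN M (mix M σ τ t h0 h1) T n (s, [])) Filter.atTop
      (nhds (t * Pr M σ s T + (1 - t) * Pr M τ s T)) := by
    have hs := (reachSup_tendsto M σ T (s, [])).const_mul t
    have ht := (reachSup_tendsto M τ T (s, [])).const_mul (1 - t)
    have := hs.add ht
    refine this.congr ?_
    intro n
    exact (hEq n).symm
  exact tendsto_nhds_unique h1' h2'

end RelReach
namespace RelReach

open Finset

variable {S A ι : Type*} [Fintype S] [Fintype A] [Fintype ι] [DecidableEq ι]

/-- Indices of targets containing a given state. -/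
noncomputable def newIdx (T : ι → Set S) (st : S) : Finset ι :=
  Finset.univ.filter (fun i => st ∈ T i)

lemma mem_newIdx (T : ι → Set S) (st : S) (i : ι) : i ∈ newIdx T st ↔ st ∈ T i := by
  simp [newIdx]

/-- The product MDP whose states track the set of already-visited targets. -/
noncomputable def prodMDP (M : MDP S A) (T : ι → Set S) : MDP (S × Finset ι) A where
  P p a p' := if p'.2 = p.2 ∪ newIdx T p'.1 then M.P p.1 a p'.1 else 0
  nonneg p a p' := by split; exacts [M.nonneg _ _ _, le_refl 0]
  le_one p a p' := by split; exacts [M.le_one _ _ _, by norm_num]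
  sum_cases p a := by
    have : (∑ p' : S × Finset ι, if p'.2 = p.2 ∪ newIdx T p'.1 then M.P p.1 a p'.1 else 0)
        = ∑ s' : S, M.P p.1 a s' := by
      rw [Fintype.sum_prod_type]
      apply Finset.sum_congr rfl
      intro s' _
      simp
    rw [this]
    exact M.sum_cases p.1 a
  exists_enabled p := by
    obtain ⟨a, ha⟩ := M.exists_enabled p.1
    refine ⟨a, ?_⟩
    have : (∑ p' : S × Finset ι, if p'.2 = p.2 ∪ newIdx T p'.1 then M.P p.1 a p'.1 else 0)
        = ∑ s' : S, M.P p.1 a s' := by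
      rw [Fintype.sum_prod_type]
      apply Finset.sum_congr rfl
      intro s' _
      simp
    rw [this]
    exact ha

/-- Reduce a sum over product states to a sum over `S`. -/
lemma sum_prodMDP (M : MDP S A) (T : ι → Set S) (p : S × Finset ι) (a : A)
    (f : S × Finset ι → ℝ) :
    ∑ p' : S × Finset ι, (prodMDP M T).P p a p' * f p'
      = ∑ s' : S, M.P p.1 a s' * f (s', p.2 ∪ newIdx T s') := by
  show (∑ p' : S × Finset ι, (if p'.2 = p.2 ∪ newIdx T p'.1 then M.P p.1 a p'.1 else 0) * f p') = _
  rw [Fintype.sum_prod_type]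
  apply Finset.sum_congr rfl
  intro s' _
  simp only [ite_mul, zero_mul]
  rw [Finset.sum_ite_eq' Finset.univ]
  simp

lemma enabled_prodMDP (M : MDP S A) (T : ι → Set S) (p : S × Finset ι) (a : A) :
    (prodMDP M T).enabled p a ↔ M.enabled p.1 a := by
  unfold MDP.enabled
  have h := sum_prodMDP M T p a (fun _ => 1)
  simp only [mul_one] at h
  rw [h]

/-- Lift a list of steps in `M` to steps in the product MDP, accumulating visited targets. -/
noncomputable def liftSteps (T : ι → Set S) : Finset ι → List (A × S) → List (A × (S × Finset ι))
  | _, [] => []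
  | v, (a, s') :: rest => (a, (s', v ∪ newIdx T s')) :: liftSteps T (v ∪ newIdx T s') rest

/-- Accumulated visited set. -/
noncomputable def vAcc (T : ι → Set S) : Finset ι → List (A × S) → Finset ι
  | v, [] => v
  | v, (_, s') :: rest => vAcc T (v ∪ newIdx T s') rest

/-- Lift a history of `M` to a history of the product MDP. -/
noncomputable def liftHist (T : ι → Set S) (π : Hist S A) : Hist (S × Finset ι) A :=
  ((π.1, newIdx T π.1), liftSteps T (newIdx T π.1) π.2)

lemma last_cons {S' A' : Type*} (s0 : S') (a : A') (s' : S') (l : List (A' × S')) :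
    Hist.last ((s0, (a, s') :: l) : Hist S' A') = Hist.last ((s', l) : Hist S' A') := by
  unfold Hist.last
  cases l with
  | nil => rfl
  | cons x xs =>
    show ((a, s') :: x :: xs).getLast?.elim s0 Prod.snd = (x :: xs).getLast?.elim s' Prod.snd
    rw [List.getLast?_cons_cons]
    cases h : (x :: xs).getLast? with
    | none => exact absurd h (by simp)
    | some y => rfl

lemma liftSteps_append (T : ι → Set S) :
    ∀ (l : List (A × S)) (v : Finset ι) (a : A) (s' : S),
      liftSteps T v (l ++ [(a, s')])
        = liftSteps T v l ++ [(a, (s', vAcc T v l ∪ newIdx T s'))] := by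
  intro l
  induction l with
  | nil => intro v a s'; rfl
  | cons x xs ih =>
    intro v a s'
    obtain ⟨b, u⟩ := x
    show (b, (u, v ∪ newIdx T u)) :: liftSteps T (v ∪ newIdx T u) (xs ++ [(a, s')]) = _
    rw [ih]
    rfl

lemma last_liftAux (T : ι → Set S) :
    ∀ (l : List (A × S)) (s0 : S) (v : Finset ι),
      Hist.last (((s0, v), liftSteps T v l) : Hist (S × Finset ι) A)
        = (Hist.last ((s0, l) : Hist S A), vAcc T v l) := by
  intro l
  induction l with
  | nil => intro s0 v; rfl
  | cons x xs ih =>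
    intro s0 v
    obtain ⟨b, u⟩ := x
    show Hist.last (((s0, v), (b, (u, v ∪ newIdx T u)) :: liftSteps T (v ∪ newIdx T u) xs) :
      Hist (S × Finset ι) A) = _
    rw [last_cons, ih, last_cons]
    rfl

lemma last_liftHist (T : ι → Set S) (π : Hist S A) :
    Hist.last (liftHist T π)
      = (Hist.last π, vAcc T (newIdx T π.1) π.2) := by
  obtain ⟨s0, l⟩ := π
  exact last_liftAux T l s0 (newIdx T s0)

lemma liftHist_ext (T : ι → Set S) (π : Hist S A) (a : A) (s' : S) :
    liftHist T (ext π a s')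
      = ext (liftHist T π) a (s', (Hist.last (liftHist T π)).2 ∪ newIdx T s') := by
  obtain ⟨s0, l⟩ := π
  unfold liftHist ext
  simp only
  rw [liftSteps_append, last_liftAux]

/-- Projection of product histories back to `M`-histories. -/
def projHist (π : Hist (S × Finset ι) A) : Hist S A :=
  (π.1.1, π.2.map (fun q => (q.1, q.2.1)))

lemma projHist_liftHist (T : ι → Set S) (π : Hist S A) : projHist (liftHist T π) = π := by
  obtain ⟨s0, l⟩ := π
  unfold projHist liftHist
  simp only
  refine Prod.ext rfl ?_
  show List.map _ (liftSteps T (newIdx T s0) l) = l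
  generalize newIdx T s0 = v
  induction l generalizing v with
  | nil => rfl
  | cons x xs ih =>
    obtain ⟨b, u⟩ := x
    show (b, u) :: List.map _ (liftSteps T (v ∪ newIdx T u) xs) = _
    rw [ih]

lemma last_projHist (π : Hist (S × Finset ι) A) :
    Hist.last (projHist π) = (Hist.last π).1 := by
  obtain ⟨p0, l⟩ := π
  unfold projHist Hist.last
  simp only
  rw [List.getLast?_map]
  cases h : l.getLast? with
  | none => rfl
  | some x => rfl

/-- Push a scheduler of `M` to the product MDP. -/
noncomputable def pushSched (M : MDP S A) (T : ι → Set S) (σ : Scheduler M) :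
    Scheduler (prodMDP M T) where
  choice π a := σ.choice (projHist π) a
  nonneg π a := σ.nonneg _ a
  sum_one π := σ.sum_one _
  supp π a h := by
    apply σ.supp
    rw [last_projHist]
    rw [← enabled_prodMDP M T]
    exact h

/-- Pull a scheduler of the product MDP back to `M`. -/
noncomputable def pullSched (M : MDP S A) (T : ι → Set S) (τ : Scheduler (prodMDP M T)) :
    Scheduler M where
  choice π a := τ.choice (liftHist T π) a
  nonneg π a := τ.nonneg _ a
  sum_one π := τ.sum_one _
  supp π a h := by
    apply τ.supp
    rw [last_liftHist]
    rw [enabled_prodMDP M T]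
    exact h

lemma reachN_lift (M : MDP S A) (T : ι → Set S) (σ : Scheduler M)
    (τ : Scheduler (prodMDP M T))
    (hστ : ∀ π : Hist S A, ∀ a, τ.choice (liftHist T π) a = σ.choice π a) (i : ι) :
    ∀ n (π : Hist S A), (i ∈ (Hist.last (liftHist T π)).2 ↔ Hist.last π ∈ T i) →
      reachN M σ (T i) n π
        = reachN (prodMDP M T) τ {p : S × Finset ι | i ∈ p.2} n (liftHist T π) := by
  intro n
  induction n with
  | zero =>
    intro π hmem
    unfold reachN
    have : (Hist.last (liftHist T π) ∈ {p : S × Finset ι | i ∈ p.2}) ↔ Hist.last π ∈ T i := hmem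
    split <;> split <;> first | rfl | (exfalso; tauto)
  | succ n ih =>
    intro π hmem
    rw [reachN_succ, reachN_succ]
    have hmem' : (Hist.last (liftHist T π) ∈ {p : S × Finset ι | i ∈ p.2}) ↔ Hist.last π ∈ T i :=
      hmem
    by_cases hT : Hist.last π ∈ T i
    · rw [if_pos hT, if_pos (hmem'.mpr hT)]
    · rw [if_neg hT, if_neg (fun h => hT (hmem'.mp h))]
      apply Finset.sum_congr rfl
      intro a _
      rw [hστ π a]
      congr 1
      have hsum := sum_prodMDP M T (Hist.last (liftHist T π)) a
        (fun p' => reachN (prodMDP M T) τ {p : S × Finset ι | i ∈ p.2} n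
          (ext (liftHist T π) a p'))
      show _ = ∑ p' : S × Finset ι, (prodMDP M T).P (Hist.last (liftHist T π)) a p' *
        reachN (prodMDP M T) τ {p : S × Finset ι | i ∈ p.2} n (ext (liftHist T π) a p')
      rw [hsum]
      have hfst : (Hist.last (liftHist T π)).1 = Hist.last π := by rw [last_liftHist]
      rw [hfst]
      apply Finset.sum_congr rfl
      intro s' _
      congr 1
      rw [← liftHist_ext]
      refine ih (ext π a s') ?_
      have hiv : i ∉ (Hist.last (liftHist T π)).2 := fun h => hT (hmem.mp h)
      rw [liftHist_ext, last_ext, last_ext]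
      show i ∈ (Hist.last (liftHist T π)).2 ∪ newIdx T s' ↔ s' ∈ T i
      simp [Finset.mem_union, mem_newIdx, hiv]


end RelReach
namespace RelReach

open Finset

variable {S A ι : Type*} [Fintype S] [Fintype A] [Fintype ι] [DecidableEq ι]

lemma Pr_lift (M : MDP S A) (T : ι → Set S) (σ : Scheduler M) (τ : Scheduler (prodMDP M T))
    (hστ : ∀ π : Hist S A, ∀ a, τ.choice (liftHist T π) a = σ.choice π a) (i : ι) (s0 : S) :
    Pr M σ s0 (T i) = Pr (prodMDP M T) τ (s0, newIdx T s0) {p : S × Finset ι | i ∈ p.2} := by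
  unfold Pr
  congr 1
  funext n
  have hlift : (((s0, newIdx T s0), ([] : List (A × (S × Finset ι)))) : Hist (S × Finset ι) A)
      = liftHist T ((s0, []) : Hist S A) := rfl
  rw [hlift]
  refine reachN_lift M T σ τ hστ i n (s0, []) ?_
  rw [last_liftHist]
  exact mem_newIdx T s0 i

lemma pushSched_lift (M : MDP S A) (T : ι → Set S) (σ : Scheduler M) :
    ∀ π : Hist S A, ∀ a, (pushSched M T σ).choice (liftHist T π) a = σ.choice π a := by
  intro π a
  show σ.choice (projHist (liftHist T π)) a = σ.choice π a
  rw [projHist_liftHist]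

/-! ### Discounted reachability -/

/-- Discounted step-bounded reachability: the expected value of `γ ^ (first hitting time)`. -/
noncomputable def dReach (M : MDP S A) (σ : Scheduler M) (U : Set S) (γ : ℝ) :
    ℕ → Hist S A → ℝ
  | 0, π => if Hist.last π ∈ U then 1 else 0
  | n + 1, π =>
      if Hist.last π ∈ U then 1
      else γ * ∑ a, σ.choice π a * ∑ s', M.P (Hist.last π) a s' *
        dReach M σ U γ n (ext π a s')

variable {M : MDP S A}

lemma dReach_succ (σ : Scheduler M) (U : Set S) (γ : ℝ) (n : ℕ) (π : Hist S A) :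
    dReach M σ U γ (n+1) π = if Hist.last π ∈ U then 1
      else γ * ∑ a, σ.choice π a * ∑ s', M.P (Hist.last π) a s' *
        dReach M σ U γ n (ext π a s') := rfl

lemma dReach_of_mem (σ : Scheduler M) (U : Set S) (γ : ℝ) (n : ℕ) (π : Hist S A)
    (h : Hist.last π ∈ U) : dReach M σ U γ n π = 1 := by
  cases n with
  | zero => unfold dReach; rw [if_pos h]
  | succ n => rw [dReach_succ, if_pos h]

lemma dReach_nonneg (σ : Scheduler M) (U : Set S) (γ : ℝ) (hγ0 : 0 ≤ γ) :
    ∀ n π, 0 ≤ dReach M σ U γ n π := by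
  intro n
  induction n with
  | zero => intro π; unfold dReach; split <;> norm_num
  | succ n ih =>
    intro π
    rw [dReach_succ]
    split
    · norm_num
    · apply mul_nonneg hγ0
      apply Finset.sum_nonneg
      intro a _
      apply mul_nonneg (σ.nonneg _ _)
      apply Finset.sum_nonneg
      intro s' _
      exact mul_nonneg (M.nonneg _ _ _) (ih _)

lemma dReach_le_reachN (σ : Scheduler M) (U : Set S) (γ : ℝ) (hγ0 : 0 ≤ γ) (hγ1 : γ ≤ 1) :
    ∀ n π, dReach M σ U γ n π ≤ reachN M σ U n π := by
  intro n
  induction n with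
  | zero => intro π; unfold dReach reachN; exact le_refl _
  | succ n ih =>
    intro π
    rw [dReach_succ, reachN_succ]
    split
    · exact le_refl _
    · calc γ * ∑ a, σ.choice π a * ∑ s', M.P (Hist.last π) a s' * dReach M σ U γ n (ext π a s')
          ≤ 1 * ∑ a, σ.choice π a * ∑ s', M.P (Hist.last π) a s' * dReach M σ U γ n (ext π a s') := by
            apply mul_le_mul_of_nonneg_right hγ1
            apply Finset.sum_nonneg
            intro a _
            apply mul_nonneg (σ.nonneg _ _)
            apply Finset.sum_nonneg
            intro s' _
            exact mul_nonneg (M.nonneg _ _ _) (dReach_nonneg σ U γ hγ0 _ _)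
      _ = ∑ a, σ.choice π a * ∑ s', M.P (Hist.last π) a s' * dReach M σ U γ n (ext π a s') :=
            one_mul _
      _ ≤ ∑ a, σ.choice π a * ∑ s', M.P (Hist.last π) a s' * reachN M σ U n (ext π a s') := by
            apply Finset.sum_le_sum
            intro a _
            apply mul_le_mul_of_nonneg_left _ (σ.nonneg _ _)
            apply Finset.sum_le_sum
            intro s' _
            exact mul_le_mul_of_nonneg_left (ih _) (M.nonneg _ _ _)

lemma dReach_le_one (σ : Scheduler M) (U : Set S) (γ : ℝ) (hγ0 : 0 ≤ γ) (hγ1 : γ ≤ 1)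
    (n : ℕ) (π : Hist S A) : dReach M σ U γ n π ≤ 1 :=
  le_trans (dReach_le_reachN σ U γ hγ0 hγ1 n π) (reachN_le_one M σ U n π)

lemma pow_mul_reachN_le_dReach (σ : Scheduler M) (U : Set S) (γ : ℝ) (hγ0 : 0 ≤ γ)
    (hγ1 : γ ≤ 1) :
    ∀ n π, γ ^ n * reachN M σ U n π ≤ dReach M σ U γ n π := by
  intro n
  induction n with
  | zero => intro π; unfold dReach reachN; simp
  | succ n ih =>
    intro π
    rw [dReach_succ, reachN_succ]
    split
    · rename_i h
      calc γ ^ (n+1) * 1 ≤ 1 := by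
            rw [mul_one]
            exact pow_le_one₀ hγ0 hγ1
        _ = 1 := rfl
    · have : γ ^ (n + 1) * ∑ a, σ.choice π a * ∑ s', M.P (Hist.last π) a s' *
          reachN M σ U n (ext π a s')
          = γ * ∑ a, σ.choice π a * ∑ s', M.P (Hist.last π) a s' *
            (γ ^ n * reachN M σ U n (ext π a s')) := by
        simp only [Finset.mul_sum]
        apply Finset.sum_congr rfl
        intro a _
        apply Finset.sum_congr rfl
        intro s' _
        ring
      rw [this]
      apply mul_le_mul_of_nonneg_left _ hγ0
      apply Finset.sum_le_sum
      intro a _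
      apply mul_le_mul_of_nonneg_left _ (σ.nonneg _ _)
      apply Finset.sum_le_sum
      intro s' _
      exact mul_le_mul_of_nonneg_left (ih _) (M.nonneg _ _ _)

lemma dReach_mono (σ : Scheduler M) (U : Set S) (γ : ℝ) (hγ0 : 0 ≤ γ) :
    ∀ n π, dReach M σ U γ n π ≤ dReach M σ U γ (n+1) π := by
  intro n
  induction n with
  | zero =>
    intro π
    rw [dReach_succ]
    unfold dReach
    split
    · exact le_refl _
    · apply mul_nonneg hγ0
      apply Finset.sum_nonneg
      intro a _
      apply mul_nonneg (σ.nonneg _ _)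
      apply Finset.sum_nonneg
      intro s' _
      apply mul_nonneg (M.nonneg _ _ _)
      split <;> norm_num
  | succ n ih =>
    intro π
    rw [dReach_succ, dReach_succ]
    split
    · exact le_refl _
    · apply mul_le_mul_of_nonneg_left _ hγ0
      apply Finset.sum_le_sum
      intro a _
      apply mul_le_mul_of_nonneg_left _ (σ.nonneg _ _)
      apply Finset.sum_le_sum
      intro s' _
      exact mul_le_mul_of_nonneg_left (ih _) (M.nonneg _ _ _)

lemma dReach_monotone (σ : Scheduler M) (U : Set S) (γ : ℝ) (hγ0 : 0 ≤ γ) (π : Hist S A) :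
    Monotone (fun n => dReach M σ U γ n π) :=
  monotone_nat_of_le_succ (fun n => dReach_mono σ U γ hγ0 n π)

lemma dReach_bddAbove (σ : Scheduler M) (U : Set S) (γ : ℝ) (hγ0 : 0 ≤ γ) (hγ1 : γ ≤ 1)
    (π : Hist S A) : BddAbove (Set.range (fun n => dReach M σ U γ n π)) :=
  ⟨1, by rintro x ⟨n, rfl⟩; exact dReach_le_one σ U γ hγ0 hγ1 n π⟩

/-- The limit discounted reachability value. -/
noncomputable def dReachSup (M : MDP S A) (σ : Scheduler M) (U : Set S) (γ : ℝ)
    (π : Hist S A) : ℝ := ⨆ n, dReach M σ U γ n π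

lemma dReachSup_tendsto (σ : Scheduler M) (U : Set S) (γ : ℝ) (hγ0 : 0 ≤ γ) (hγ1 : γ ≤ 1)
    (π : Hist S A) :
    Filter.Tendsto (fun n => dReach M σ U γ n π) Filter.atTop (nhds (dReachSup M σ U γ π)) :=
  tendsto_atTop_ciSup (dReach_monotone σ U γ hγ0 π) (dReach_bddAbove σ U γ hγ0 hγ1 π)

lemma dReachSup_le_reachSup (σ : Scheduler M) (U : Set S) (γ : ℝ) (hγ0 : 0 ≤ γ) (hγ1 : γ ≤ 1)
    (π : Hist S A) : dReachSup M σ U γ π ≤ reachSup M σ U π := by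
  apply ciSup_le
  intro n
  exact le_trans (dReach_le_reachN σ U γ hγ0 hγ1 n π) (reachN_le_reachSup M σ U π n)

lemma pow_mul_reachN_le_dReachSup (σ : Scheduler M) (U : Set S) (γ : ℝ) (hγ0 : 0 ≤ γ)
    (hγ1 : γ ≤ 1) (π : Hist S A) (n : ℕ) :
    γ ^ n * reachN M σ U n π ≤ dReachSup M σ U γ π :=
  le_trans (pow_mul_reachN_le_dReach σ U γ hγ0 hγ1 n π)
    (le_ciSup (dReach_bddAbove σ U γ hγ0 hγ1 π) n)

lemma dReachSup_nonneg (σ : Scheduler M) (U : Set S) (γ : ℝ) (hγ0 : 0 ≤ γ) (hγ1 : γ ≤ 1)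
    (π : Hist S A) : 0 ≤ dReachSup M σ U γ π :=
  le_trans (dReach_nonneg σ U γ hγ0 0 π) (le_ciSup (dReach_bddAbove σ U γ hγ0 hγ1 π) 0)

lemma dReachSup_of_mem (σ : Scheduler M) (U : Set S) (γ : ℝ) (π : Hist S A)
    (h : Hist.last π ∈ U) : dReachSup M σ U γ π = 1 := by
  unfold dReachSup
  have : ∀ n, dReach M σ U γ n π = 1 := fun n => dReach_of_mem σ U γ n π h
  simp [this]

end RelReach
namespace RelReach

open Finset

variable {S A ι : Type*} [Fintype S] [Fintype A] [Fintype ι] [DecidableEq ι]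

noncomputable def hsum (w : ι → ℝ) (v : Finset ι) : ℝ := ∑ i ∈ v, w i

/-- The target set in the product MDP corresponding to target `i`. -/
def Tb (i : ι) : Set (S × Finset ι) := {p : S × Finset ι | i ∈ p.2}

/-- The partial weighted discounted value restricted to not-yet-visited targets. -/
noncomputable def Gfun (M : MDP S A) (T : ι → Set S) (w : ι → ℝ)
    (τ : Scheduler (prodMDP M T)) (γ : ℝ) (n : ℕ) (π : Hist (S × Finset ι) A) : ℝ :=
  ∑ i ∈ Finset.univ \ (Hist.last π).2,
    w i * dReach (prodMDP M T) τ (Tb i) γ n π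

variable {M : MDP S A} {T : ι → Set S}

lemma Gfun_zero (w : ι → ℝ) (τ : Scheduler (prodMDP M T)) (γ : ℝ)
    (π : Hist (S × Finset ι) A) : Gfun M T w τ γ 0 π = 0 := by
  unfold Gfun
  apply Finset.sum_eq_zero
  intro i hi
  rw [Finset.mem_sdiff] at hi
  have : Hist.last π ∉ Tb i := hi.2
  unfold dReach
  rw [if_neg this, mul_zero]

lemma abs_Gfun_le (w : ι → ℝ) (τ : Scheduler (prodMDP M T)) (γ : ℝ) (hγ0 : 0 ≤ γ)
    (hγ1 : γ ≤ 1) (n : ℕ) (π : Hist (S × Finset ι) A) :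
    |Gfun M T w τ γ n π| ≤ ∑ i, |w i| := by
  calc |Gfun M T w τ γ n π| ≤ ∑ i ∈ Finset.univ \ (Hist.last π).2,
        |w i * dReach (prodMDP M T) τ (Tb i) γ n π| := Finset.abs_sum_le_sum_abs _ _
    _ ≤ ∑ i ∈ Finset.univ \ (Hist.last π).2, |w i| := by
        apply Finset.sum_le_sum
        intro i _
        rw [abs_mul]
        calc |w i| * |dReach (prodMDP M T) τ (Tb i) γ n π| ≤ |w i| * 1 := by
              apply mul_le_mul_of_nonneg_left _ (abs_nonneg _)
              rw [abs_le]
              exact ⟨by linarith [dReach_nonneg (M := prodMDP M T) τ (Tb i) γ hγ0 n π],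
                dReach_le_one (M := prodMDP M T) τ (Tb i) γ hγ0 hγ1 n π⟩
          _ = |w i| := mul_one _
    _ ≤ ∑ i, |w i| := Finset.sum_le_sum_of_subset_of_nonneg (Finset.subset_univ _)
        (fun i _ _ => abs_nonneg _)

/-- Pure algebra: swapping a weighted sum with the two inner sums. -/
lemma triple_swap (I : Finset ι) (wgt : ι → ℝ) (γ : ℝ) (t : A → ℝ) (p : A → S → ℝ)
    (d : ι → A → S → ℝ) :
    ∑ i ∈ I, wgt i * (γ * ∑ a, t a * ∑ s', p a s' * d i a s')
      = γ * ∑ a, t a * ∑ s', p a s' * (∑ i ∈ I, wgt i * d i a s') := by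
  simp only [Finset.mul_sum]
  rw [Finset.sum_comm]
  apply Finset.sum_congr rfl
  intro a _
  rw [Finset.sum_comm]
  apply Finset.sum_congr rfl
  intro s' _
  apply Finset.sum_congr rfl
  intro i _
  ring

/-- Splitting the weighted sum over unvisited targets after a transition. -/
lemma sum_w_dReach_split (w : ι → ℝ) (τ : Scheduler (prodMDP M T)) (γ : ℝ)
    (n : ℕ) (π' : Hist (S × Finset ι) A) (v : Finset ι) (hsub : v ⊆ (Hist.last π').2) :
    ∑ i ∈ Finset.univ \ v, w i * dReach (prodMDP M T) τ (Tb i) γ n π'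
      = (hsum w (Hist.last π').2 - hsum w v)
        + ∑ i ∈ Finset.univ \ (Hist.last π').2, w i * dReach (prodMDP M T) τ (Tb i) γ n π' := by
  have hset : Finset.univ \ v = ((Hist.last π').2 \ v) ∪ (Finset.univ \ (Hist.last π').2) := by
    ext i
    simp only [Finset.mem_sdiff, Finset.mem_union, Finset.mem_univ, true_and]
    by_cases h : i ∈ (Hist.last π').2 <;> by_cases h' : i ∈ v <;> simp [h, h'] <;> tauto
  have hdisj : Disjoint ((Hist.last π').2 \ v) (Finset.univ \ (Hist.last π').2) := by
    rw [Finset.disjoint_left]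
    intro i hi hi'
    rw [Finset.mem_sdiff] at hi hi'
    exact hi'.2 hi.1
  rw [hset, Finset.sum_union hdisj]
  congr 1
  have : ∀ i ∈ (Hist.last π').2 \ v, w i * dReach (prodMDP M T) τ (Tb i) γ n π' = w i := by
    intro i hi
    rw [Finset.mem_sdiff] at hi
    rw [dReach_of_mem τ (Tb i) γ n π' hi.1, mul_one]
  rw [Finset.sum_congr rfl this]
  exact Finset.sum_sdiff_eq_sub hsub

/-- The key recursion for `Gfun`. -/
lemma Gfun_succ (w : ι → ℝ) (τ : Scheduler (prodMDP M T)) (γ : ℝ) (n : ℕ)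
    (π : Hist (S × Finset ι) A) :
    Gfun M T w τ γ (n+1) π
      = γ * ∑ a, τ.choice π a * ∑ s', M.P (Hist.last π).1 a s' *
          ((hsum w ((Hist.last π).2 ∪ newIdx T s') - hsum w (Hist.last π).2)
            + Gfun M T w τ γ n (ext π a (s', (Hist.last π).2 ∪ newIdx T s'))) := by
  have step1 : Gfun M T w τ γ (n+1) π = ∑ i ∈ Finset.univ \ (Hist.last π).2, w i *
      (γ * ∑ a, τ.choice π a * ∑ s', M.P (Hist.last π).1 a s' *
        dReach (prodMDP M T) τ (Tb i) γ n (ext π a (s', (Hist.last π).2 ∪ newIdx T s'))) := by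
    unfold Gfun
    apply Finset.sum_congr rfl
    intro i hi
    rw [Finset.mem_sdiff] at hi
    have hnot : Hist.last π ∉ Tb i := hi.2
    rw [dReach_succ, if_neg hnot]
    congr 2
    apply Finset.sum_congr rfl
    intro a _
    congr 1
    exact sum_prodMDP M T (Hist.last π) a
      (fun p' => dReach (prodMDP M T) τ (Tb i) γ n (ext π a p'))
  rw [step1, triple_swap]
  congr 1
  apply Finset.sum_congr rfl
  intro a _
  congr 1
  apply Finset.sum_congr rfl
  intro s' _
  congr 1
  have hlast : Hist.last (ext π a (s', (Hist.last π).2 ∪ newIdx T s'))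
      = (s', (Hist.last π).2 ∪ newIdx T s') := last_ext _ _ _
  have hsub : (Hist.last π).2 ⊆ (Hist.last (ext π a (s', (Hist.last π).2 ∪ newIdx T s'))).2 := by
    rw [hlast]
    exact Finset.subset_union_left
  rw [sum_w_dReach_split w τ γ n _ _ hsub, hlast]
  unfold Gfun
  rw [hlast]

end RelReach
namespace RelReach

open Finset

variable {S A ι : Type*} [Fintype S] [Fintype A] [Fintype ι] [DecidableEq ι]

noncomputable def enbF (M : MDP S A) (st : S) : Finset A := Finset.univ.filter (M.enabled st)

lemma mem_enbF {M : MDP S A} {st : S} {a : A} : a ∈ enbF M st ↔ M.enabled st a := by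
  simp [enbF]

lemma enbF_nonempty (M : MDP S A) (st : S) : (enbF M st).Nonempty := by
  obtain ⟨a, ha⟩ := M.exists_enabled st
  exact ⟨a, mem_enbF.mpr ha⟩

/-- The Bellman operator for the discounted weighted problem on the product MDP. -/
noncomputable def bell (M : MDP S A) (T : ι → Set S) (w : ι → ℝ) (γ : ℝ)
    (x : S × Finset ι → ℝ) (p : S × Finset ι) : ℝ :=
  (enbF M p.1).sup' (enbF_nonempty M p.1) (fun a =>
    γ * ∑ s', M.P p.1 a s' *
      ((hsum w (p.2 ∪ newIdx T s') - hsum w p.2) + x (s', p.2 ∪ newIdx T s')))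

lemma abs_sup'_sub_sup'_le {s : Finset A} (hs : s.Nonempty) (f g : A → ℝ) (c : ℝ)
    (h : ∀ a ∈ s, |f a - g a| ≤ c) : |s.sup' hs f - s.sup' hs g| ≤ c := by
  rw [abs_le]
  constructor
  · rw [neg_le, neg_sub, sub_le_iff_le_add]
    apply Finset.sup'_le
    intro a ha
    have h1 := h a ha
    rw [abs_le] at h1
    have hf := Finset.le_sup' f ha
    linarith [h1.1]
  · rw [sub_le_iff_le_add]
    apply Finset.sup'_le
    intro a ha
    have h1 := h a ha
    rw [abs_le] at h1
    have hg := Finset.le_sup' g ha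
    linarith [h1.2]

variable {M : MDP S A} {T : ι → Set S}

lemma bell_contract (w : ι → ℝ) (γ : ℝ) (hγ0 : 0 ≤ γ) (x y : S × Finset ι → ℝ) (c : ℝ)
    (hc : 0 ≤ c) (h : ∀ p', |x p' - y p'| ≤ c) (p : S × Finset ι) :
    |bell M T w γ x p - bell M T w γ y p| ≤ γ * c := by
  apply abs_sup'_sub_sup'_le
  intro a ha
  have hena : M.enabled p.1 a := mem_enbF.mp ha
  rw [← mul_sub, abs_mul, abs_of_nonneg hγ0]
  apply mul_le_mul_of_nonneg_left _ hγ0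
  rw [← Finset.sum_sub_distrib]
  calc |∑ s', (M.P p.1 a s' * ((hsum w (p.2 ∪ newIdx T s') - hsum w p.2) + x (s', p.2 ∪ newIdx T s'))
        - M.P p.1 a s' * ((hsum w (p.2 ∪ newIdx T s') - hsum w p.2) + y (s', p.2 ∪ newIdx T s')))|
      ≤ ∑ s', |M.P p.1 a s' * ((hsum w (p.2 ∪ newIdx T s') - hsum w p.2) + x (s', p.2 ∪ newIdx T s'))
        - M.P p.1 a s' * ((hsum w (p.2 ∪ newIdx T s') - hsum w p.2) + y (s', p.2 ∪ newIdx T s'))| :=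
        Finset.abs_sum_le_sum_abs _ _
    _ ≤ ∑ s', M.P p.1 a s' * c := by
        apply Finset.sum_le_sum
        intro s' _
        rw [← mul_sub, abs_mul, abs_of_nonneg (M.nonneg _ _ _)]
        apply mul_le_mul_of_nonneg_left _ (M.nonneg _ _ _)
        have : (hsum w (p.2 ∪ newIdx T s') - hsum w p.2) + x (s', p.2 ∪ newIdx T s')
            - ((hsum w (p.2 ∪ newIdx T s') - hsum w p.2) + y (s', p.2 ∪ newIdx T s'))
            = x (s', p.2 ∪ newIdx T s') - y (s', p.2 ∪ newIdx T s') := by ring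
        rw [this]
        exact h _
    _ = (∑ s', M.P p.1 a s') * c := by rw [Finset.sum_mul]
    _ = 1 * c := by rw [hena]
    _ = c := one_mul c

/-- The Bellman operator as a self-map of the function space. -/
noncomputable def bellMap (M : MDP S A) (T : ι → Set S) (w : ι → ℝ) (γ : ℝ) :
    ((S × Finset ι) → ℝ) → ((S × Finset ι) → ℝ) := fun x => bell M T w γ x

lemma bellMap_lipschitz (w : ι → ℝ) (γ : ℝ) (hγ0 : 0 ≤ γ) :
    LipschitzWith ⟨γ, hγ0⟩ (bellMap M T w γ) := by
  apply LipschitzWith.of_dist_le_mul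
  intro x y
  have hc : (0 : ℝ) ≤ γ * dist x y := mul_nonneg hγ0 dist_nonneg
  change dist (bellMap M T w γ x) (bellMap M T w γ y) ≤ γ * dist x y
  rw [dist_pi_le_iff hc]
  intro p
  rw [Real.dist_eq]
  apply bell_contract w γ hγ0 x y (dist x y) dist_nonneg
  intro p'
  rw [← Real.dist_eq]
  exact dist_le_pi_dist x y p'

/-- The fixed point of the Bellman operator. -/
noncomputable def Xstar (M : MDP S A) (T : ι → Set S) (w : ι → ℝ) (γ : ℝ) (hγ0 : 0 ≤ γ)
    (hγ1 : γ < 1) : (S × Finset ι) → ℝ :=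
  ContractingWith.fixedPoint (bellMap M T w γ)
    ⟨by exact (NNReal.coe_lt_one (r := ⟨γ, hγ0⟩)).mp hγ1, bellMap_lipschitz w γ hγ0⟩

lemma Xstar_fixed (w : ι → ℝ) (γ : ℝ) (hγ0 : 0 ≤ γ) (hγ1 : γ < 1) :
    bellMap M T w γ (Xstar M T w γ hγ0 hγ1) = Xstar M T w γ hγ0 hγ1 :=
  ContractingWith.fixedPoint_isFixedPt _

/-- Iterates of the Bellman operator starting from `0`. -/
noncomputable def Xit (M : MDP S A) (T : ι → Set S) (w : ι → ℝ) (γ : ℝ) (n : ℕ) :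
    (S × Finset ι) → ℝ := (bellMap M T w γ)^[n] 0

lemma Xit_succ (w : ι → ℝ) (γ : ℝ) (n : ℕ) :
    Xit M T w γ (n+1) = bellMap M T w γ (Xit M T w γ n) :=
  Function.iterate_succ_apply' _ _ _

lemma Xit_dist_Xstar (w : ι → ℝ) (γ : ℝ) (hγ0 : 0 ≤ γ) (hγ1 : γ < 1) (n : ℕ)
    (p : S × Finset ι) :
    |Xit M T w γ n p - Xstar M T w γ hγ0 hγ1 p|
      ≤ (dist (0 : (S × Finset ι) → ℝ) (bellMap M T w γ 0) / (1 - γ)) * γ ^ n := by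
  have hC : ContractingWith ⟨γ, hγ0⟩ (bellMap M T w γ) :=
    ⟨by exact (NNReal.coe_lt_one (r := ⟨γ, hγ0⟩)).mp hγ1, bellMap_lipschitz w γ hγ0⟩
  have happ := hC.apriori_dist_iterate_fixedPoint_le 0 n
  have hpt : |Xit M T w γ n p - Xstar M T w γ hγ0 hγ1 p|
      ≤ dist ((bellMap M T w γ)^[n] 0) (ContractingWith.fixedPoint (bellMap M T w γ) hC) := by
    rw [← Real.dist_eq]
    exact dist_le_pi_dist _ _ p
  refine le_trans hpt (le_trans happ ?_)
  change dist (0 : (S × Finset ι) → ℝ) (bellMap M T w γ 0) * γ ^ n / (1 - γ) ≤ _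
  apply le_of_eq
  ring

/-- `Gfun` is bounded above by the Bellman iterates. -/
lemma Gfun_le_Xit (w : ι → ℝ) (τ : Scheduler (prodMDP M T)) (γ : ℝ) (hγ0 : 0 ≤ γ) :
    ∀ n π, Gfun M T w τ γ n π ≤ Xit M T w γ n (Hist.last π) := by
  intro n
  induction n with
  | zero => intro π; rw [Gfun_zero]; exact le_refl _
  | succ n ih =>
    intro π
    rw [Gfun_succ, Xit_succ]
    set B := bellMap M T w γ (Xit M T w γ n) (Hist.last π) with hB
    have key : ∀ a, τ.choice π a * (γ * ∑ s', M.P (Hist.last π).1 a s' *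
        ((hsum w ((Hist.last π).2 ∪ newIdx T s') - hsum w (Hist.last π).2)
          + Gfun M T w τ γ n (ext π a (s', (Hist.last π).2 ∪ newIdx T s'))))
        ≤ τ.choice π a * B := by
      intro a
      by_cases hz : τ.choice π a = 0
      · rw [hz, zero_mul, zero_mul]
      · apply mul_le_mul_of_nonneg_left _ (τ.nonneg π a)
        have hen : M.enabled (Hist.last π).1 a := by
          by_contra hcon
          apply hz
          apply τ.supp
          rw [enabled_prodMDP]
          exact hcon
        have hle : γ * ∑ s', M.P (Hist.last π).1 a s' *
            ((hsum w ((Hist.last π).2 ∪ newIdx T s') - hsum w (Hist.last π).2)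
              + Gfun M T w τ γ n (ext π a (s', (Hist.last π).2 ∪ newIdx T s')))
            ≤ γ * ∑ s', M.P (Hist.last π).1 a s' *
              ((hsum w ((Hist.last π).2 ∪ newIdx T s') - hsum w (Hist.last π).2)
                + Xit M T w γ n (s', (Hist.last π).2 ∪ newIdx T s')) := by
          apply mul_le_mul_of_nonneg_left _ hγ0
          apply Finset.sum_le_sum
          intro s' _
          apply mul_le_mul_of_nonneg_left _ (M.nonneg _ _ _)
          have := ih (ext π a (s', (Hist.last π).2 ∪ newIdx T s'))
          rw [last_ext] at this
          linarith
        refine le_trans hle ?_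
        show _ ≤ bellMap M T w γ (Xit M T w γ n) (Hist.last π)
        unfold bellMap bell
        exact Finset.le_sup' (fun a => γ * ∑ s', M.P (Hist.last π).1 a s' *
          ((hsum w ((Hist.last π).2 ∪ newIdx T s') - hsum w (Hist.last π).2)
            + Xit M T w γ n (s', (Hist.last π).2 ∪ newIdx T s'))) (mem_enbF.mpr hen)
    calc γ * ∑ a, τ.choice π a * ∑ s', M.P (Hist.last π).1 a s' *
          ((hsum w ((Hist.last π).2 ∪ newIdx T s') - hsum w (Hist.last π).2)
            + Gfun M T w τ γ n (ext π a (s', (Hist.last π).2 ∪ newIdx T s')))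
        = ∑ a, τ.choice π a * (γ * ∑ s', M.P (Hist.last π).1 a s' *
          ((hsum w ((Hist.last π).2 ∪ newIdx T s') - hsum w (Hist.last π).2)
            + Gfun M T w τ γ n (ext π a (s', (Hist.last π).2 ∪ newIdx T s')))) := by
          rw [Finset.mul_sum]
          apply Finset.sum_congr rfl
          intro a _
          ring
      _ ≤ ∑ a, τ.choice π a * B := Finset.sum_le_sum (fun a _ => key a)
      _ = B := by rw [← Finset.sum_mul, τ.sum_one, one_mul]

/-- The greedy selector with respect to `Xstar`. -/
noncomputable def gsel (M : MDP S A) (T : ι → Set S) (w : ι → ℝ) (γ : ℝ) (hγ0 : 0 ≤ γ)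
    (hγ1 : γ < 1) (p : S × Finset ι) : A :=
  Classical.choose (Finset.exists_mem_eq_sup' (enbF_nonempty M p.1) (fun a =>
    γ * ∑ s', M.P p.1 a s' *
      ((hsum w (p.2 ∪ newIdx T s') - hsum w p.2)
        + Xstar M T w γ hγ0 hγ1 (s', p.2 ∪ newIdx T s'))))

lemma gsel_spec (w : ι → ℝ) (γ : ℝ) (hγ0 : 0 ≤ γ) (hγ1 : γ < 1) (p : S × Finset ι) :
    gsel M T w γ hγ0 hγ1 p ∈ enbF M p.1 ∧
      Xstar M T w γ hγ0 hγ1 p = γ * ∑ s', M.P p.1 (gsel M T w γ hγ0 hγ1 p) s' *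
        ((hsum w (p.2 ∪ newIdx T s') - hsum w p.2)
          + Xstar M T w γ hγ0 hγ1 (s', p.2 ∪ newIdx T s')) := by
  have hspec := Classical.choose_spec (Finset.exists_mem_eq_sup' (enbF_nonempty M p.1) (fun a =>
    γ * ∑ s', M.P p.1 a s' *
      ((hsum w (p.2 ∪ newIdx T s') - hsum w p.2)
        + Xstar M T w γ hγ0 hγ1 (s', p.2 ∪ newIdx T s'))))
  refine ⟨hspec.1, ?_⟩
  have hfix := Xstar_fixed (M := M) (T := T) w γ hγ0 hγ1
  have : Xstar M T w γ hγ0 hγ1 p = bell M T w γ (Xstar M T w γ hγ0 hγ1) p := by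
    conv_lhs => rw [← hfix]
    rfl
  rw [this]
  unfold bell gsel
  exact hspec.2

end RelReach
namespace RelReach

open Finset Filter

variable {S A ι : Type*} [Fintype S] [Fintype A] [Fintype ι] [DecidableEq ι]
variable {M : MDP S A} {T : ι → Set S}

/-- The greedy memoryless scheduler with respect to the fixed point. -/
noncomputable def greedySched (M : MDP S A) (T : ι → Set S) (w : ι → ℝ) (γ : ℝ)
    (hγ0 : 0 ≤ γ) (hγ1 : γ < 1) : Scheduler (prodMDP M T) :=
  schedOfSel (prodMDP M T) (fun p => gsel M T w γ hγ0 hγ1 p)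
    (fun p => (enabled_prodMDP M T p _).mpr (mem_enbF.mp (gsel_spec w γ hγ0 hγ1 p).1))

lemma greedy_sum_P (w : ι → ℝ) (γ : ℝ) (hγ0 : 0 ≤ γ) (hγ1 : γ < 1) (p : S × Finset ι) :
    (∑ s', M.P p.1 (gsel M T w γ hγ0 hγ1 p) s') = 1 :=
  mem_enbF.mp (gsel_spec w γ hγ0 hγ1 p).1

lemma Gfun_greedy_close (w : ι → ℝ) (γ : ℝ) (hγ0 : 0 ≤ γ) (hγ1 : γ < 1) :
    ∀ n (π : Hist (S × Finset ι) A),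
      |Gfun M T w (greedySched M T w γ hγ0 hγ1) γ n π - Xstar M T w γ hγ0 hγ1 (Hist.last π)|
        ≤ γ ^ n * ((∑ i, |w i|) + dist (Xstar M T w γ hγ0 hγ1) (0 : (S × Finset ι) → ℝ)) := by
  set HH := ∑ i, |w i| with hHH
  set EB := dist (Xstar M T w γ hγ0 hγ1) (0 : (S × Finset ι) → ℝ) with hEB
  have hHH0 : 0 ≤ HH := Finset.sum_nonneg (fun i _ => abs_nonneg _)
  have hEB0 : 0 ≤ EB := dist_nonneg
  have hXb : ∀ p, |Xstar M T w γ hγ0 hγ1 p| ≤ EB := by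
    intro p
    have := dist_le_pi_dist (Xstar M T w γ hγ0 hγ1) (0 : (S × Finset ι) → ℝ) p
    rw [Real.dist_eq, Pi.zero_apply, sub_zero] at this
    exact this
  intro n
  induction n with
  | zero =>
    intro π
    rw [Gfun_zero, pow_zero, one_mul, zero_sub, abs_neg]
    linarith [hXb (Hist.last π)]
  | succ n ih =>
    intro π
    set g := gsel M T w γ hγ0 hγ1 (Hist.last π) with hg
    have hsum1 : Gfun M T w (greedySched M T w γ hγ0 hγ1) γ (n+1) π
        = γ * ∑ s', M.P (Hist.last π).1 g s' *
          ((hsum w ((Hist.last π).2 ∪ newIdx T s') - hsum w (Hist.last π).2)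
            + Gfun M T w (greedySched M T w γ hγ0 hγ1) γ n
              (ext π g (s', (Hist.last π).2 ∪ newIdx T s'))) := by
      rw [Gfun_succ]
      congr 1
      have hch : ∀ a, (greedySched M T w γ hγ0 hγ1).choice π a = if a = g then 1 else 0 := by
        intro a; rfl
      rw [Finset.sum_congr rfl (fun a _ => by rw [hch a])]
      simp only [ite_mul, one_mul, zero_mul]
      rw [Finset.sum_ite_eq' Finset.univ]
      simp
    have hxs : Xstar M T w γ hγ0 hγ1 (Hist.last π)
        = γ * ∑ s', M.P (Hist.last π).1 g s' *
          ((hsum w ((Hist.last π).2 ∪ newIdx T s') - hsum w (Hist.last π).2)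
            + Xstar M T w γ hγ0 hγ1 (s', (Hist.last π).2 ∪ newIdx T s')) :=
      (gsel_spec w γ hγ0 hγ1 (Hist.last π)).2
    rw [hsum1, hxs, ← mul_sub, ← Finset.sum_sub_distrib, abs_mul, abs_of_nonneg hγ0]
    have hstep : |∑ s', (M.P (Hist.last π).1 g s' *
          ((hsum w ((Hist.last π).2 ∪ newIdx T s') - hsum w (Hist.last π).2)
            + Gfun M T w (greedySched M T w γ hγ0 hγ1) γ n
              (ext π g (s', (Hist.last π).2 ∪ newIdx T s')))
        - M.P (Hist.last π).1 g s' *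
          ((hsum w ((Hist.last π).2 ∪ newIdx T s') - hsum w (Hist.last π).2)
            + Xstar M T w γ hγ0 hγ1 (s', (Hist.last π).2 ∪ newIdx T s')))|
        ≤ γ ^ n * (HH + EB) := by
      calc |∑ s', (M.P (Hist.last π).1 g s' *
            ((hsum w ((Hist.last π).2 ∪ newIdx T s') - hsum w (Hist.last π).2)
              + Gfun M T w (greedySched M T w γ hγ0 hγ1) γ n
                (ext π g (s', (Hist.last π).2 ∪ newIdx T s')))
          - M.P (Hist.last π).1 g s' *
            ((hsum w ((Hist.last π).2 ∪ newIdx T s') - hsum w (Hist.last π).2)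
              + Xstar M T w γ hγ0 hγ1 (s', (Hist.last π).2 ∪ newIdx T s')))|
          ≤ ∑ s', |M.P (Hist.last π).1 g s' *
            ((hsum w ((Hist.last π).2 ∪ newIdx T s') - hsum w (Hist.last π).2)
              + Gfun M T w (greedySched M T w γ hγ0 hγ1) γ n
                (ext π g (s', (Hist.last π).2 ∪ newIdx T s')))
          - M.P (Hist.last π).1 g s' *
            ((hsum w ((Hist.last π).2 ∪ newIdx T s') - hsum w (Hist.last π).2)
              + Xstar M T w γ hγ0 hγ1 (s', (Hist.last π).2 ∪ newIdx T s'))| :=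
            Finset.abs_sum_le_sum_abs _ _
        _ ≤ ∑ s', M.P (Hist.last π).1 g s' * (γ ^ n * (HH + EB)) := by
            apply Finset.sum_le_sum
            intro s' _
            rw [← mul_sub, abs_mul, abs_of_nonneg (M.nonneg _ _ _)]
            apply mul_le_mul_of_nonneg_left _ (M.nonneg _ _ _)
            have hsimpl : (hsum w ((Hist.last π).2 ∪ newIdx T s') - hsum w (Hist.last π).2)
                + Gfun M T w (greedySched M T w γ hγ0 hγ1) γ n
                  (ext π g (s', (Hist.last π).2 ∪ newIdx T s'))
                - ((hsum w ((Hist.last π).2 ∪ newIdx T s') - hsum w (Hist.last π).2)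
                  + Xstar M T w γ hγ0 hγ1 (s', (Hist.last π).2 ∪ newIdx T s'))
                = Gfun M T w (greedySched M T w γ hγ0 hγ1) γ n
                  (ext π g (s', (Hist.last π).2 ∪ newIdx T s'))
                  - Xstar M T w γ hγ0 hγ1 (s', (Hist.last π).2 ∪ newIdx T s') := by ring
            rw [hsimpl]
            have := ih (ext π g (s', (Hist.last π).2 ∪ newIdx T s'))
            rw [last_ext] at this
            exact this
        _ = (∑ s', M.P (Hist.last π).1 g s') * (γ ^ n * (HH + EB)) := by rw [Finset.sum_mul]
        _ = γ ^ n * (HH + EB) := by rw [greedy_sum_P w γ hγ0 hγ1, one_mul]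
    calc γ * |∑ s', (M.P (Hist.last π).1 g s' *
          ((hsum w ((Hist.last π).2 ∪ newIdx T s') - hsum w (Hist.last π).2)
            + Gfun M T w (greedySched M T w γ hγ0 hγ1) γ n
              (ext π g (s', (Hist.last π).2 ∪ newIdx T s')))
        - M.P (Hist.last π).1 g s' *
          ((hsum w ((Hist.last π).2 ∪ newIdx T s') - hsum w (Hist.last π).2)
            + Xstar M T w γ hγ0 hγ1 (s', (Hist.last π).2 ∪ newIdx T s')))|
        ≤ γ * (γ ^ n * (HH + EB)) := mul_le_mul_of_nonneg_left hstep hγ0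
      _ = γ ^ (n+1) * (HH + EB) := by ring

/-- The limit of `Gfun`. -/
noncomputable def GLim (M : MDP S A) (T : ι → Set S) (w : ι → ℝ)
    (τ : Scheduler (prodMDP M T)) (γ : ℝ) (π : Hist (S × Finset ι) A) : ℝ :=
  ∑ i ∈ Finset.univ \ (Hist.last π).2, w i * dReachSup (prodMDP M T) τ (Tb i) γ π

lemma Gfun_tendsto (w : ι → ℝ) (τ : Scheduler (prodMDP M T)) (γ : ℝ) (hγ0 : 0 ≤ γ)
    (hγ1 : γ ≤ 1) (π : Hist (S × Finset ι) A) :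
    Tendsto (fun n => Gfun M T w τ γ n π) atTop (nhds (GLim M T w τ γ π)) := by
  apply tendsto_finset_sum
  intro i _
  exact (dReachSup_tendsto τ (Tb i) γ hγ0 hγ1 π).const_mul (w i)

lemma Xit_tendsto (w : ι → ℝ) (γ : ℝ) (hγ0 : 0 ≤ γ) (hγ1 : γ < 1) (p : S × Finset ι) :
    Tendsto (fun n => Xit M T w γ n p) atTop (nhds (Xstar M T w γ hγ0 hγ1 p)) := by
  rw [tendsto_iff_dist_tendsto_zero]
  have hpow : Tendsto (fun n : ℕ => γ ^ n) atTop (nhds 0) :=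
    tendsto_pow_atTop_nhds_zero_of_lt_one hγ0 hγ1
  have hb : ∀ n, dist (Xit M T w γ n p) (Xstar M T w γ hγ0 hγ1 p)
      ≤ (dist (0 : (S × Finset ι) → ℝ) (bellMap M T w γ 0) / (1 - γ)) * γ ^ n := by
    intro n
    rw [Real.dist_eq]
    exact Xit_dist_Xstar w γ hγ0 hγ1 n p
  exact squeeze_zero (fun n => dist_nonneg) hb
    (by simpa only [mul_zero] using
      hpow.const_mul (dist (0 : (S × Finset ι) → ℝ) (bellMap M T w γ 0) / (1 - γ)))

lemma GLim_le_Xstar (w : ι → ℝ) (τ : Scheduler (prodMDP M T)) (γ : ℝ) (hγ0 : 0 ≤ γ)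
    (hγ1 : γ < 1) (π : Hist (S × Finset ι) A) :
    GLim M T w τ γ π ≤ Xstar M T w γ hγ0 hγ1 (Hist.last π) :=
  le_of_tendsto_of_tendsto' (Gfun_tendsto w τ γ hγ0 (le_of_lt hγ1) π)
    (Xit_tendsto w γ hγ0 hγ1 (Hist.last π)) (fun n => Gfun_le_Xit w τ γ hγ0 n π)

lemma GLim_greedy_eq (w : ι → ℝ) (γ : ℝ) (hγ0 : 0 ≤ γ) (hγ1 : γ < 1)
    (π : Hist (S × Finset ι) A) :
    GLim M T w (greedySched M T w γ hγ0 hγ1) γ π = Xstar M T w γ hγ0 hγ1 (Hist.last π) := by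
  have h1 : Tendsto (fun n => Gfun M T w (greedySched M T w γ hγ0 hγ1) γ n π) atTop
      (nhds (GLim M T w (greedySched M T w γ hγ0 hγ1) γ π)) :=
    Gfun_tendsto w _ γ hγ0 (le_of_lt hγ1) π
  have h2 : Tendsto (fun n => |Gfun M T w (greedySched M T w γ hγ0 hγ1) γ n π
      - Xstar M T w γ hγ0 hγ1 (Hist.last π)|) atTop
      (nhds (|GLim M T w (greedySched M T w γ hγ0 hγ1) γ π
        - Xstar M T w γ hγ0 hγ1 (Hist.last π)|)) :=
    ((h1.sub_const _).abs)
  have h3 : Tendsto (fun n : ℕ => γ ^ n * ((∑ i, |w i|)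
      + dist (Xstar M T w γ hγ0 hγ1) (0 : (S × Finset ι) → ℝ))) atTop (nhds 0) := by
    have hpow : Tendsto (fun n : ℕ => γ ^ n) atTop (nhds 0) :=
      tendsto_pow_atTop_nhds_zero_of_lt_one hγ0 hγ1
    have := hpow.mul_const ((∑ i, |w i|)
      + dist (Xstar M T w γ hγ0 hγ1) (0 : (S × Finset ι) → ℝ))
    simpa only [zero_mul] using this
  have habs : |GLim M T w (greedySched M T w γ hγ0 hγ1) γ π
      - Xstar M T w γ hγ0 hγ1 (Hist.last π)| ≤ 0 :=
    le_of_tendsto_of_tendsto' h2 h3 (fun n => Gfun_greedy_close w γ hγ0 hγ1 n π)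
  have := abs_nonneg (GLim M T w (greedySched M T w γ hγ0 hγ1) γ π
    - Xstar M T w γ hγ0 hγ1 (Hist.last π))
  have h0 : |GLim M T w (greedySched M T w γ hγ0 hγ1) γ π
      - Xstar M T w γ hγ0 hγ1 (Hist.last π)| = 0 := le_antisymm habs this
  rw [abs_eq_zero, sub_eq_zero] at h0
  exact h0

/-- Discounted optimality of the greedy scheduler. -/
lemma discounted_opt (w : ι → ℝ) (γ : ℝ) (hγ0 : 0 ≤ γ) (hγ1 : γ < 1) (p0 : S × Finset ι)
    (τ : Scheduler (prodMDP M T)) :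
    ∑ i, w i * dReachSup (prodMDP M T) τ (Tb i) γ ((p0, []) : Hist (S × Finset ι) A)
      ≤ ∑ i, w i * dReachSup (prodMDP M T) (greedySched M T w γ hγ0 hγ1) (Tb i) γ
        ((p0, []) : Hist (S × Finset ι) A) := by
  have hlast : Hist.last ((p0, []) : Hist (S × Finset ι) A) = p0 := rfl
  have split : ∀ υ : Scheduler (prodMDP M T),
      ∑ i, w i * dReachSup (prodMDP M T) υ (Tb i) γ ((p0, []) : Hist (S × Finset ι) A)
        = (∑ i ∈ p0.2, w i) + GLim M T w υ γ ((p0, []) : Hist (S × Finset ι) A) := by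
    intro υ
    rw [← Finset.sum_sdiff (Finset.subset_univ p0.2)]
    unfold GLim
    rw [hlast]
    rw [add_comm]
    congr 1
    apply Finset.sum_congr rfl
    intro i hi
    rw [dReachSup_of_mem υ (Tb i) γ _ (by rw [hlast]; exact hi), mul_one]
  rw [split τ, split (greedySched M T w γ hγ0 hγ1)]
  have h1 := GLim_le_Xstar w τ γ hγ0 hγ1 ((p0, []) : Hist (S × Finset ι) A)
  have h2 := GLim_greedy_eq (M := M) (T := T) w γ hγ0 hγ1 ((p0, []) : Hist (S × Finset ι) A)
  rw [hlast] at h1 h2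
  linarith

end RelReach
namespace RelReach

open Finset Filter

variable {S A ι : Type*} [Fintype S] [Fintype A] [Fintype ι] [DecidableEq ι]
variable {M : MDP S A} {T : ι → Set S}

/-- The undiscounted weighted objective in the product MDP. -/
noncomputable def eN (M : MDP S A) (T : ι → Set S) (w : ι → ℝ) (s0 : S)
    (υ : Scheduler (prodMDP M T)) : ℝ :=
  ∑ i, w i * Pr (prodMDP M T) υ (s0, newIdx T s0) (Tb i)

/-- The tail error of step-bounded reachability. -/
noncomputable def Qerr (M : MDP S A) (T : ι → Set S) (w : ι → ℝ) (s0 : S)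
    (υ : Scheduler (prodMDP M T)) (n : ℕ) : ℝ :=
  ∑ i, |w i| * (Pr (prodMDP M T) υ (s0, newIdx T s0) (Tb i)
    - reachN (prodMDP M T) υ (Tb i) n (((s0, newIdx T s0), []) : Hist (S × Finset ι) A))

lemma Qerr_tendsto (w : ι → ℝ) (s0 : S) (υ : Scheduler (prodMDP M T)) :
    Tendsto (Qerr M T w s0 υ) atTop (nhds 0) := by
  have h : Tendsto (Qerr M T w s0 υ) atTop (nhds (∑ i : ι, |w i| *
      (Pr (prodMDP M T) υ (s0, newIdx T s0) (Tb i)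
        - Pr (prodMDP M T) υ (s0, newIdx T s0) (Tb i)))) := by
    apply tendsto_finset_sum
    intro i _
    exact ((tendsto_const_nhds.sub
      (reachSup_tendsto (prodMDP M T) υ (Tb i) (((s0, newIdx T s0), [])))).const_mul (|w i|))
  simpa using h

lemma Qerr_nonneg (w : ι → ℝ) (s0 : S) (υ : Scheduler (prodMDP M T)) (n : ℕ) :
    0 ≤ Qerr M T w s0 υ n := by
  apply Finset.sum_nonneg
  intro i _
  apply mul_nonneg (abs_nonneg _)
  have := reachN_le_reachSup (prodMDP M T) υ (Tb i) (((s0, newIdx T s0), [])) n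
  have hPr : Pr (prodMDP M T) υ (s0, newIdx T s0) (Tb i)
      = reachSup (prodMDP M T) υ (Tb i) (((s0, newIdx T s0), [])) := rfl
  linarith

/-- Per-index bound used in both directions. -/
lemma per_index_bound (w : ι → ℝ) (s0 : S) (υ : Scheduler (prodMDP M T)) (γ : ℝ)
    (hγ0 : 0 ≤ γ) (hγ1 : γ < 1) (n : ℕ) (i : ι) :
    w i * Pr (prodMDP M T) υ (s0, newIdx T s0) (Tb i)
      - w i * dReachSup (prodMDP M T) υ (Tb i) γ (((s0, newIdx T s0), []))
      ≤ |w i| * ((Pr (prodMDP M T) υ (s0, newIdx T s0) (Tb i)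
          - reachN (prodMDP M T) υ (Tb i) n (((s0, newIdx T s0), []))) + (1 - γ ^ n))
    ∧ w i * dReachSup (prodMDP M T) υ (Tb i) γ (((s0, newIdx T s0), []))
      - w i * Pr (prodMDP M T) υ (s0, newIdx T s0) (Tb i)
      ≤ |w i| * ((Pr (prodMDP M T) υ (s0, newIdx T s0) (Tb i)
          - reachN (prodMDP M T) υ (Tb i) n (((s0, newIdx T s0), []))) + (1 - γ ^ n)) := by
  set π0 : Hist (S × Finset ι) A := ((s0, newIdx T s0), []) with hπ0
  set P := Pr (prodMDP M T) υ (s0, newIdx T s0) (Tb i) with hP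
  set D := dReachSup (prodMDP M T) υ (Tb i) γ π0 with hD
  set R := reachN (prodMDP M T) υ (Tb i) n π0 with hR
  have hγn0 : 0 ≤ γ ^ n := pow_nonneg hγ0 n
  have hγn1 : γ ^ n ≤ 1 := pow_le_one₀ hγ0 (le_of_lt hγ1)
  have hPR : P = reachSup (prodMDP M T) υ (Tb i) π0 := rfl
  have h1 : γ ^ n * R ≤ D :=
    pow_mul_reachN_le_dReachSup υ (Tb i) γ hγ0 (le_of_lt hγ1) π0 n
  have h2 : D ≤ P := by rw [hPR]; exact dReachSup_le_reachSup υ (Tb i) γ hγ0 (le_of_lt hγ1) π0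
  have h3 : R ≤ P := by rw [hPR]; exact reachN_le_reachSup (prodMDP M T) υ (Tb i) π0 n
  have h4 : R ≤ 1 := reachN_le_one (prodMDP M T) υ (Tb i) n π0
  have h5 : 0 ≤ R := reachN_nonneg (prodMDP M T) υ (Tb i) n π0
  have hkey : R - (1 - γ ^ n) ≤ D := by nlinarith
  have habs : 0 ≤ (P - R) + (1 - γ ^ n) := by linarith
  rcases le_or_gt 0 (w i) with hw | hw
  · rw [abs_of_nonneg hw]
    constructor
    · nlinarith
    · nlinarith
  · rw [abs_of_neg hw]
    constructor
    · nlinarith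
    · nlinarith

lemma eN_sub_PhiD_le (w : ι → ℝ) (s0 : S) (υ : Scheduler (prodMDP M T)) (γ : ℝ)
    (hγ0 : 0 ≤ γ) (hγ1 : γ < 1) (n : ℕ) :
    eN M T w s0 υ - (∑ i, w i * dReachSup (prodMDP M T) υ (Tb i) γ
        (((s0, newIdx T s0), []) : Hist (S × Finset ι) A))
      ≤ Qerr M T w s0 υ n + (1 - γ ^ n) * (∑ i, |w i|) := by
  have hsum : ∀ i : ι, w i * Pr (prodMDP M T) υ (s0, newIdx T s0) (Tb i)
      - w i * dReachSup (prodMDP M T) υ (Tb i) γ (((s0, newIdx T s0), []))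
      ≤ |w i| * ((Pr (prodMDP M T) υ (s0, newIdx T s0) (Tb i)
          - reachN (prodMDP M T) υ (Tb i) n (((s0, newIdx T s0), []))) + (1 - γ ^ n)) :=
    fun i => (per_index_bound w s0 υ γ hγ0 hγ1 n i).1
  unfold eN Qerr
  rw [← Finset.sum_sub_distrib]
  calc ∑ i, (w i * Pr (prodMDP M T) υ (s0, newIdx T s0) (Tb i)
        - w i * dReachSup (prodMDP M T) υ (Tb i) γ (((s0, newIdx T s0), [])))
      ≤ ∑ i, |w i| * ((Pr (prodMDP M T) υ (s0, newIdx T s0) (Tb i)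
          - reachN (prodMDP M T) υ (Tb i) n (((s0, newIdx T s0), []))) + (1 - γ ^ n)) :=
        Finset.sum_le_sum (fun i _ => hsum i)
    _ = ∑ i, (|w i| * (Pr (prodMDP M T) υ (s0, newIdx T s0) (Tb i)
          - reachN (prodMDP M T) υ (Tb i) n (((s0, newIdx T s0), []))) + |w i| * (1 - γ ^ n)) := by
        apply Finset.sum_congr rfl
        intro i _
        ring
    _ = _ := by
        rw [Finset.sum_add_distrib]
        congr 1
        rw [← Finset.sum_mul, mul_comm]

lemma PhiD_sub_eN_le (w : ι → ℝ) (s0 : S) (υ : Scheduler (prodMDP M T)) (γ : ℝ)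
    (hγ0 : 0 ≤ γ) (hγ1 : γ < 1) (n : ℕ) :
    (∑ i, w i * dReachSup (prodMDP M T) υ (Tb i) γ
        (((s0, newIdx T s0), []) : Hist (S × Finset ι) A)) - eN M T w s0 υ
      ≤ Qerr M T w s0 υ n + (1 - γ ^ n) * (∑ i, |w i|) := by
  have hsum : ∀ i : ι, w i * dReachSup (prodMDP M T) υ (Tb i) γ (((s0, newIdx T s0), []))
      - w i * Pr (prodMDP M T) υ (s0, newIdx T s0) (Tb i)
      ≤ |w i| * ((Pr (prodMDP M T) υ (s0, newIdx T s0) (Tb i)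
          - reachN (prodMDP M T) υ (Tb i) n (((s0, newIdx T s0), []))) + (1 - γ ^ n)) :=
    fun i => (per_index_bound w s0 υ γ hγ0 hγ1 n i).2
  unfold eN Qerr
  rw [← Finset.sum_sub_distrib]
  calc ∑ i, (w i * dReachSup (prodMDP M T) υ (Tb i) γ (((s0, newIdx T s0), []))
        - w i * Pr (prodMDP M T) υ (s0, newIdx T s0) (Tb i))
      ≤ ∑ i, |w i| * ((Pr (prodMDP M T) υ (s0, newIdx T s0) (Tb i)
          - reachN (prodMDP M T) υ (Tb i) n (((s0, newIdx T s0), []))) + (1 - γ ^ n)) :=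
        Finset.sum_le_sum (fun i _ => hsum i)
    _ = ∑ i, (|w i| * (Pr (prodMDP M T) υ (s0, newIdx T s0) (Tb i)
          - reachN (prodMDP M T) υ (Tb i) n (((s0, newIdx T s0), []))) + |w i| * (1 - γ ^ n)) := by
        apply Finset.sum_congr rfl
        intro i _
        ring
    _ = _ := by
        rw [Finset.sum_add_distrib]
        congr 1
        rw [← Finset.sum_mul, mul_comm]

/-- Memoryless deterministic selectors for the product MDP, as a finite set. -/
noncomputable def selSet (M : MDP S A) (T : ι → Set S) : Finset ((S × Finset ι) → A) :=
  Finset.univ.filter (fun f => ∀ p, (prodMDP M T).enabled p (f p))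

/-- The scheduler induced by a selector. -/
noncomputable def sSched (M : MDP S A) (T : ι → Set S) (f : (S × Finset ι) → A) :
    Scheduler (prodMDP M T) :=
  if h : ∀ p, (prodMDP M T).enabled p (f p) then schedOfSel (prodMDP M T) f h
  else dflt (prodMDP M T)

lemma selSet_nonempty (M : MDP S A) (T : ι → Set S) : (selSet M T).Nonempty := by
  refine ⟨fun p => Classical.choose ((prodMDP M T).exists_enabled p), ?_⟩
  rw [selSet, Finset.mem_filter]
  exact ⟨Finset.mem_univ _, fun p => Classical.choose_spec ((prodMDP M T).exists_enabled p)⟩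

lemma greedy_mem_selSet (w : ι → ℝ) (γ : ℝ) (hγ0 : 0 ≤ γ) (hγ1 : γ < 1) :
    (fun p => gsel M T w γ hγ0 hγ1 p) ∈ selSet M T := by
  rw [selSet, Finset.mem_filter]
  refine ⟨Finset.mem_univ _, fun p => ?_⟩
  exact (enabled_prodMDP M T p _).mpr (mem_enbF.mp (gsel_spec w γ hγ0 hγ1 p).1)

lemma sSched_greedy (w : ι → ℝ) (γ : ℝ) (hγ0 : 0 ≤ γ) (hγ1 : γ < 1) :
    sSched M T (fun p => gsel M T w γ hγ0 hγ1 p) = greedySched M T w γ hγ0 hγ1 := by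
  unfold sSched
  rw [dif_pos (fun p => (enabled_prodMDP M T p _).mpr (mem_enbF.mp (gsel_spec w γ hγ0 hγ1 p).1))]
  rfl

/-- Existence of an optimal scheduler in the product MDP. -/
theorem exists_best_prod (M : MDP S A) (T : ι → Set S) (w : ι → ℝ) (s0 : S) :
    ∃ τstar : Scheduler (prodMDP M T), ∀ υ : Scheduler (prodMDP M T),
      eN M T w s0 υ ≤ eN M T w s0 τstar := by
  obtain ⟨fstar, hfmem, hfmax⟩ := Finset.exists_max_image (selSet M T)
    (fun f => eN M T w s0 (sSched M T f)) (selSet_nonempty M T)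
  refine ⟨sSched M T fstar, ?_⟩
  intro υ
  apply le_of_forall_pos_le_add
  intro ε hε
  set HH := ∑ i, |w i| with hHH
  have hHH0 : 0 ≤ HH := Finset.sum_nonneg (fun i _ => abs_nonneg _)
  -- pick n
  have hev1 : ∀ᶠ n in atTop, Qerr M T w s0 υ n < ε / 4 :=
    (Qerr_tendsto w s0 υ).eventually_lt_const (by positivity)
  have hev2 : ∀ᶠ n in atTop, ∀ f ∈ selSet M T, Qerr M T w s0 (sSched M T f) n < ε / 4 := by
    rw [Filter.eventually_all_finset]
    intro f _
    exact (Qerr_tendsto w s0 (sSched M T f)).eventually_lt_const (by positivity)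
  obtain ⟨n, hn1, hn2⟩ := (hev1.and hev2).exists
  -- pick γ
  set c : ℝ := (n : ℝ) * HH with hc
  have hc0 : 0 ≤ c := mul_nonneg (Nat.cast_nonneg n) hHH0
  set δ : ℝ := min (1/2) (ε / (4 * (c + 1))) with hδ
  have hδ0 : 0 < δ := lt_min (by norm_num) (by positivity)
  have hδhalf : δ ≤ 1/2 := min_le_left _ _
  set γ : ℝ := 1 - δ with hγ
  have hγ0 : 0 ≤ γ := by rw [hγ]; linarith
  have hγ1 : γ < 1 := by rw [hγ]; linarith
  have hpow : 1 - γ ^ n ≤ (n : ℝ) * δ := by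
    have hb : (-2 : ℝ) ≤ -δ := by linarith
    have := one_add_mul_le_pow hb n
    have heq : (1 + -δ) = γ := by rw [hγ]; ring
    rw [heq] at this
    linarith
  have hsmall : (1 - γ ^ n) * HH ≤ ε / 4 := by
    have hγn1 : γ ^ n ≤ 1 := pow_le_one₀ hγ0 (le_of_lt hγ1)
    have hδ2 : δ ≤ ε / (4 * (c + 1)) := min_le_right _ _
    have h41 : (0 : ℝ) < 4 * (c + 1) := by positivity
    have step1 : (1 - γ ^ n) * HH ≤ c * δ := by
      calc (1 - γ ^ n) * HH ≤ ((n : ℝ) * δ) * HH :=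
            mul_le_mul_of_nonneg_right hpow hHH0
        _ = c * δ := by rw [hc]; ring
    have step2 : c * δ ≤ c * (ε / (4 * (c + 1))) :=
      mul_le_mul_of_nonneg_left hδ2 hc0
    have step3 : c * (ε / (4 * (c + 1))) ≤ ε / 4 := by
      rw [show c * (ε / (4 * (c + 1))) = (c * ε) / (4 * (c + 1)) by ring]
      rw [div_le_div_iff₀ h41 (by norm_num : (0:ℝ) < 4)]
      nlinarith
    linarith
  -- the chain of inequalities
  set μ := greedySched (M := M) (T := T) w γ hγ0 hγ1 with hμ
  have hQμ : Qerr M T w s0 μ n < ε / 4 := by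
    rw [hμ, ← sSched_greedy w γ hγ0 hγ1]
    exact hn2 _ (greedy_mem_selSet w γ hγ0 hγ1)
  have hμsel : eN M T w s0 μ ≤ eN M T w s0 (sSched M T fstar) := by
    rw [hμ, ← sSched_greedy w γ hγ0 hγ1]
    exact hfmax _ (greedy_mem_selSet w γ hγ0 hγ1)
  have hL1 := eN_sub_PhiD_le w s0 υ γ hγ0 hγ1 n
  have hL2 := PhiD_sub_eN_le w s0 μ γ hγ0 hγ1 n
  have hopt := discounted_opt w γ hγ0 hγ1 ((s0, newIdx T s0) : S × Finset ι) υ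
  rw [← hμ] at hopt
  have hQυ := hn1
  rw [← hHH] at hL1 hL2
  linarith
/-- Existence of a scheduler maximizing a signed weighted sum of reachability values. -/
theorem exists_max_weighted (M : MDP S A) (T : ι → Set S) (w : ι → ℝ) (s0 : S) :
    ∃ σs : Scheduler M, ∀ σ : Scheduler M,
      (∑ i, w i * Pr M σ s0 (T i)) ≤ ∑ i, w i * Pr M σs s0 (T i) := by
  obtain ⟨τstar, hτ⟩ := exists_best_prod M T w s0
  refine ⟨pullSched M T τstar, ?_⟩
  intro σ
  have h1 : ∀ i, Pr M σ s0 (T i)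
      = Pr (prodMDP M T) (pushSched M T σ) (s0, newIdx T s0) (Tb i) :=
    fun i => Pr_lift M T σ (pushSched M T σ) (pushSched_lift M T σ) i s0
  have h2 : ∀ i, Pr M (pullSched M T τstar) s0 (T i)
      = Pr (prodMDP M T) τstar (s0, newIdx T s0) (Tb i) :=
    fun i => Pr_lift M T (pullSched M T τstar) τstar (fun π a => rfl) i s0
  calc ∑ i, w i * Pr M σ s0 (T i)
      = eN M T w s0 (pushSched M T σ) := by
        unfold eN
        exact Finset.sum_congr rfl (fun i _ => by rw [h1 i])
    _ ≤ eN M T w s0 τstar := hτ _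
    _ = ∑ i, w i * Pr M (pullSched M T τstar) s0 (T i) := by
        unfold eN
        exact Finset.sum_congr rfl (fun i _ => by rw [h2 i])

end RelReach
namespace RelReach

open Finset

variable {S A : Type*} [Fintype S] [Fintype A] {m n : ℕ}
variable (M : MDP S A) (q : Fin m → ℚ) (s : Fin m → S) (k : Fin m → Fin n) (T : Fin m → Set S)

/-- The weight vector isolating the combination `c`. -/
noncomputable def wOf (c : S × Fin n) : Fin m → ℝ :=
  fun i => if (s i, k i) = c then (q i : ℝ) else 0

lemma combVal_eq_wsum (σ : Scheduler M) (c : S × Fin n) :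
    combVal M q s k T σ c = ∑ i, wOf q s k c i * Pr M σ c.1 (T i) := by
  unfold combVal wOf
  rw [Finset.sum_filter]
  apply Finset.sum_congr rfl
  intro i _
  rw [ite_mul, zero_mul]

lemma exists_combVal_max (c : S × Fin n) :
    ∃ σmax : Scheduler M, ∀ σ, combVal M q s k T σ c ≤ combVal M q s k T σmax c := by
  obtain ⟨σs, hσs⟩ := exists_max_weighted M T (wOf q s k c) c.1
  exact ⟨σs, fun σ => by rw [combVal_eq_wsum, combVal_eq_wsum]; exact hσs σ⟩

lemma exists_combVal_min (c : S × Fin n) :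
    ∃ σmin : Scheduler M, ∀ σ, combVal M q s k T σmin c ≤ combVal M q s k T σ c := by
  obtain ⟨σs, hσs⟩ := exists_max_weighted M T (fun i => - wOf q s k c i) c.1
  refine ⟨σs, fun σ => ?_⟩
  have h1 := hσs σ
  rw [combVal_eq_wsum M q s k T σ c, combVal_eq_wsum M q s k T σs c]
  have e : ∀ υ : Scheduler M, ∑ i, (- wOf q s k c i) * Pr M υ c.1 (T i)
      = - ∑ i, wOf q s k c i * Pr M υ c.1 (T i) := by
    intro υ
    rw [← Finset.sum_neg_distrib]
    apply Finset.sum_congr rfl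
    intro i _
    ring
  rw [e σ, e σs] at h1
  linarith

lemma combVal_glue (F : S → Scheduler M) (c : S × Fin n) :
    combVal M q s k T (glue M F) c = combVal M q s k T (F c.1) c := by
  unfold combVal
  apply Finset.sum_congr rfl
  intro i _
  rw [glue_Pr]

lemma achSum (σf : Fin n → Scheduler M) :
    ∑ i, (q i : ℝ) * Pr M (σf (k i)) (s i) (T i)
      = ∑ c ∈ combSet s k, combVal M q s k T (σf c.2) c := by
  rw [← Finset.sum_fiberwise_of_maps_to (g := fun i => (s i, k i))
    (fun i _ => Finset.mem_image_of_mem _ (Finset.mem_univ i))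
    (fun i => (q i : ℝ) * Pr M (σf (k i)) (s i) (T i))]
  apply Finset.sum_congr rfl
  intro c _
  unfold combVal
  apply Finset.sum_congr rfl
  intro i hi
  rw [Finset.mem_filter] at hi
  have h1 : s i = c.1 := congrArg Prod.fst hi.2
  have h2 : k i = c.2 := congrArg Prod.snd hi.2
  rw [h1, h2]

lemma achSet_convex : Convex ℝ (achSet M q s k T) := by
  intro x hx y hy a b ha hb hab
  obtain ⟨σf, rfl⟩ := hx
  obtain ⟨τf, rfl⟩ := hy
  have ha1 : a ≤ 1 := by linarith
  have hb' : 1 - a = b := by linarith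
  refine ⟨fun j => mix M (σf j) (τf j) a ha ha1, ?_⟩
  have key : ∀ i, (q i : ℝ) * Pr M (mix M (σf (k i)) (τf (k i)) a ha ha1) (s i) (T i)
      = a * ((q i : ℝ) * Pr M (σf (k i)) (s i) (T i))
        + b * ((q i : ℝ) * Pr M (τf (k i)) (s i) (T i)) := by
    intro i
    rw [Pr_mix, hb']
    ring
  rw [Finset.sum_congr rfl (fun i _ => key i), Finset.sum_add_distrib,
    ← Finset.mul_sum, ← Finset.mul_sum, smul_eq_mul, smul_eq_mul]

end RelReach

open RelReach

/-- For a relational reachability instance, the inner optima defining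
`v^min` and `v^max` are attained, `v^min` is the minimum and `v^max` the maximum of the
achievable value set `A`, and `A` equals the closed interval `[v^min, v^max]`. -/
theorem achievable_set_is_closed_interval
    {S A : Type*} [Fintype S] [Fintype A] [Nonempty S] [Nonempty A]
    (M : MDP S A) {m n : ℕ} (hn : 1 ≤ n) (hmn : n ≤ m)
    (q : Fin m → ℚ) (s : Fin m → S) (k : Fin m → Fin n)
    (hk : Function.Surjective k) (T : Fin m → Set S) :
    (∀ c ∈ combSet s k, ∃ σ : Scheduler M,
        combVal M q s k T σ c =
          sInf {x : ℝ | ∃ σ' : Scheduler M, x = combVal M q s k T σ' c}) ∧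
    (∀ c ∈ combSet s k, ∃ σ : Scheduler M,
        combVal M q s k T σ c =
          sSup {x : ℝ | ∃ σ' : Scheduler M, x = combVal M q s k T σ' c}) ∧
    IsLeast (achSet M q s k T) (vMin M q s k T) ∧
    IsGreatest (achSet M q s k T) (vMax M q s k T) ∧
    achSet M q s k T = Set.Icc (vMin M q s k T) (vMax M q s k T) := by
  classical
  choose σmin hσmin using fun c : S × Fin n => exists_combVal_min M q s k T c
  choose σmax hσmax using fun c : S × Fin n => exists_combVal_max M q s k T c
  have hVleast : ∀ c : S × Fin n,
      IsLeast {x : ℝ | ∃ σ' : Scheduler M, x = combVal M q s k T σ' c}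
        (combVal M q s k T (σmin c) c) := by
    intro c
    constructor
    · exact ⟨σmin c, rfl⟩
    · rintro x ⟨σ', rfl⟩
      exact hσmin c σ'
  have hVgreatest : ∀ c : S × Fin n,
      IsGreatest {x : ℝ | ∃ σ' : Scheduler M, x = combVal M q s k T σ' c}
        (combVal M q s k T (σmax c) c) := by
    intro c
    constructor
    · exact ⟨σmax c, rfl⟩
    · rintro x ⟨σ', rfl⟩
      exact hσmax c σ'
  have hInf : ∀ c : S × Fin n,
      sInf {x : ℝ | ∃ σ' : Scheduler M, x = combVal M q s k T σ' c}
        = combVal M q s k T (σmin c) c := fun c => (hVleast c).csInf_eq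
  have hSup : ∀ c : S × Fin n,
      sSup {x : ℝ | ∃ σ' : Scheduler M, x = combVal M q s k T σ' c}
        = combVal M q s k T (σmax c) c := fun c => (hVgreatest c).csSup_eq
  have hvMin : vMin M q s k T = ∑ c ∈ combSet s k, combVal M q s k T (σmin c) c :=
    Finset.sum_congr rfl (fun c _ => hInf c)
  have hvMax : vMax M q s k T = ∑ c ∈ combSet s k, combVal M q s k T (σmax c) c :=
    Finset.sum_congr rfl (fun c _ => hSup c)
  have hminmem : vMin M q s k T ∈ achSet M q s k T := by
    refine ⟨fun j => glue M (fun st => σmin (st, j)), ?_⟩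
    rw [hvMin, achSum M q s k T (fun j => glue M (fun st => σmin (st, j)))]
    apply Finset.sum_congr rfl
    intro c _
    rw [combVal_glue]
  have hmaxmem : vMax M q s k T ∈ achSet M q s k T := by
    refine ⟨fun j => glue M (fun st => σmax (st, j)), ?_⟩
    rw [hvMax, achSum M q s k T (fun j => glue M (fun st => σmax (st, j)))]
    apply Finset.sum_congr rfl
    intro c _
    rw [combVal_glue]
  have hLeast : IsLeast (achSet M q s k T) (vMin M q s k T) := by
    constructor
    · exact hminmem
    · rintro x ⟨σf, rfl⟩
      rw [achSum M q s k T, hvMin]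
      exact Finset.sum_le_sum (fun c _ => hσmin c (σf c.2))
  have hGreatest : IsGreatest (achSet M q s k T) (vMax M q s k T) := by
    constructor
    · exact hmaxmem
    · rintro x ⟨σf, rfl⟩
      rw [achSum M q s k T, hvMax]
      exact Finset.sum_le_sum (fun c _ => hσmax c (σf c.2))
  refine ⟨?_, ?_, hLeast, hGreatest, ?_⟩
  · intro c _
    exact ⟨σmin c, (hInf c).symm⟩
  · intro c _
    exact ⟨σmax c, (hSup c).symm⟩
  · apply Set.Subset.antisymm
    · intro x hx
      exact Set.mem_Icc.mpr ⟨hLeast.2 hx, hGreatest.2 hx⟩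
    · exact (achSet_convex M q s k T).ordConnected.out hminmem hmaxmem
end

section
/- With the data of a relational reachability instance (MDP M, m ≥ n ≥ 1, rational q₁,…,q_m, states s₁,…,s_m, surjective index map k, target sets T₁,…,T_m), let v^min = Σ_{c=(s,·)∈Comb} min_{σ∈HR} Σ_{i∈ind(c)} qᵢ · Pr^σ_s(◇Tᵢ) and v^max analogously with max. Then for every rational q and every ε ≥ 0: there exist schedulers σ₁,…,σₙ ∈ HR with |Σ_{i=1}^m qᵢ · Pr^{σ_{k(i)}}_{sᵢ}(◇Tᵢ) − q| ≤ ε if and only if q ∈ [v^min − ε, v^max + ε]. -/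
open scoped BigOperators Classical
open Filter

namespace RR
set_option linter.unusedSectionVars false

variable {S A : Type*} [Fintype S] [Fintype A]

/-- Extend a history by one step. -/
def ext (π : Hist S A) (a : A) (s' : S) : Hist S A := (π.1, π.2 ++ [(a, s')])

lemma last_ext (π : Hist S A) (a : A) (s' : S) : Hist.last (ext π a s') = s' := by
  simp [ext, Hist.last, List.getLast?_concat]

lemma ext_fst (π : Hist S A) (a : A) (s' : S) : (ext π a s').1 = π.1 := rfl

lemma reachN_succ (M : MDP S A) (σ : Scheduler M) (T : Set S) (n : ℕ) (π : Hist S A) :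
    reachN M σ T (n+1) π = if Hist.last π ∈ T then 1
      else ∑ a, σ.choice π a * ∑ s', M.P (Hist.last π) a s' * reachN M σ T n (ext π a s') := rfl

/-- Discounted bounded reachability. -/
noncomputable def dreachN (M : MDP S A) (lam : ℝ) (σ : Scheduler M) (T : Set S) :
    ℕ → Hist S A → ℝ
  | 0, π => if Hist.last π ∈ T then 1 else 0
  | n + 1, π =>
      if Hist.last π ∈ T then 1
      else lam * ∑ a, σ.choice π a * ∑ s', M.P (Hist.last π) a s' *
        dreachN M lam σ T n (ext π a s')

variable {M : MDP S A}

lemma sum_P_le_one (s : S) (a : A) : ∑ s', M.P s a s' ≤ 1 := by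
  rcases M.sum_cases s a with h | h <;> simp [h]

lemma sum_P_nonneg (s : S) (a : A) : 0 ≤ ∑ s', M.P s a s' :=
  Finset.sum_nonneg fun s' _ => M.nonneg s a s'

lemma step_nonneg (σ : Scheduler M) (π : Hist S A) (f : A → S → ℝ)
    (hf : ∀ a s', 0 ≤ f a s') :
    0 ≤ ∑ a, σ.choice π a * ∑ s', M.P (Hist.last π) a s' * f a s' :=
  Finset.sum_nonneg fun a _ => mul_nonneg (σ.nonneg π a)
    (Finset.sum_nonneg fun s' _ => mul_nonneg (M.nonneg _ a s') (hf a s'))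

lemma step_le_one (σ : Scheduler M) (π : Hist S A) (f : A → S → ℝ)
    (hf : ∀ a s', f a s' ≤ 1) :
    ∑ a, σ.choice π a * ∑ s', M.P (Hist.last π) a s' * f a s' ≤ 1 := by
  calc ∑ a, σ.choice π a * ∑ s', M.P (Hist.last π) a s' * f a s'
      ≤ ∑ a, σ.choice π a * 1 := by
        refine Finset.sum_le_sum fun a _ => mul_le_mul_of_nonneg_left ?_ (σ.nonneg π a)
        calc ∑ s', M.P (Hist.last π) a s' * f a s'
            ≤ ∑ s', M.P (Hist.last π) a s' * 1 :=
              Finset.sum_le_sum fun s' _ =>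
                mul_le_mul_of_nonneg_left (hf a s') (M.nonneg _ a s')
          _ ≤ 1 := by simpa using sum_P_le_one (M := M) (Hist.last π) a
    _ = 1 := by simpa using σ.sum_one π

lemma step_mono (σ : Scheduler M) (π : Hist S A) (f g : A → S → ℝ)
    (h : ∀ a s', f a s' ≤ g a s') :
    ∑ a, σ.choice π a * ∑ s', M.P (Hist.last π) a s' * f a s'
      ≤ ∑ a, σ.choice π a * ∑ s', M.P (Hist.last π) a s' * g a s' :=
  Finset.sum_le_sum fun a _ => mul_le_mul_of_nonneg_left
    (Finset.sum_le_sum fun s' _ => mul_le_mul_of_nonneg_left (h a s') (M.nonneg _ a s'))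
    (σ.nonneg π a)

lemma reachN_nonneg (σ : Scheduler M) (T : Set S) : ∀ n π, 0 ≤ reachN M σ T n π := by
  intro n
  induction n with
  | zero => intro π; simp only [reachN]; split <;> norm_num
  | succ n ih =>
    intro π
    rw [reachN_succ]
    split
    · norm_num
    · exact step_nonneg σ π _ fun a s' => ih _

lemma reachN_le_one (σ : Scheduler M) (T : Set S) : ∀ n π, reachN M σ T n π ≤ 1 := by
  intro n
  induction n with
  | zero => intro π; simp only [reachN]; split <;> norm_num
  | succ n ih =>
    intro π
    rw [reachN_succ]
    split
    · norm_num
    · exact step_le_one σ π _ fun a s' => ih _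

lemma reachN_mono (σ : Scheduler M) (T : Set S) :
    ∀ n π, reachN M σ T n π ≤ reachN M σ T (n+1) π := by
  intro n
  induction n with
  | zero =>
    intro π
    rw [show reachN M σ T 0 π = if Hist.last π ∈ T then (1:ℝ) else 0 from rfl, reachN_succ]
    split
    · norm_num
    · exact step_nonneg σ π _ fun a s' => reachN_nonneg σ T 0 _
  | succ n ih =>
    intro π
    rw [reachN_succ, reachN_succ]
    split
    · norm_num
    · exact step_mono σ π _ _ fun a s' => ih _

lemma reachN_monotone (σ : Scheduler M) (T : Set S) (π : Hist S A) :
    Monotone fun n => reachN M σ T n π :=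
  monotone_nat_of_le_succ fun n => reachN_mono σ T n π

/-- Unbounded reachability from a general history. -/
noncomputable def PrH (M : MDP S A) (σ : Scheduler M) (T : Set S) (π : Hist S A) : ℝ :=
  ⨆ n, reachN M σ T n π

lemma Pr_eq_PrH (σ : Scheduler M) (s : S) (T : Set S) : Pr M σ s T = PrH M σ T (s, []) := rfl

lemma bddAbove_reachN (σ : Scheduler M) (T : Set S) (π : Hist S A) :
    BddAbove (Set.range fun n => reachN M σ T n π) :=
  ⟨1, by rintro x ⟨n, rfl⟩; exact reachN_le_one σ T n π⟩

lemma reachN_le_PrH (σ : Scheduler M) (T : Set S) (n : ℕ) (π : Hist S A) :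
    reachN M σ T n π ≤ PrH M σ T π :=
  le_ciSup (bddAbove_reachN σ T π) n

lemma PrH_nonneg (σ : Scheduler M) (T : Set S) (π : Hist S A) : 0 ≤ PrH M σ T π :=
  le_trans (reachN_nonneg σ T 0 π) (reachN_le_PrH σ T 0 π)

lemma PrH_le_one (σ : Scheduler M) (T : Set S) (π : Hist S A) : PrH M σ T π ≤ 1 :=
  ciSup_le fun n => reachN_le_one σ T n π

lemma tendsto_reachN (σ : Scheduler M) (T : Set S) (π : Hist S A) :
    Tendsto (fun n => reachN M σ T n π) atTop (nhds (PrH M σ T π)) :=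
  tendsto_atTop_ciSup (reachN_monotone σ T π) (bddAbove_reachN σ T π)

end RR
namespace RR
set_option linter.unusedSectionVars false

variable {S A : Type*} [Fintype S] [Fintype A] {M : MDP S A}

lemma dreachN_succ (lam : ℝ) (σ : Scheduler M) (T : Set S) (n : ℕ) (π : Hist S A) :
    dreachN M lam σ T (n+1) π = if Hist.last π ∈ T then 1
      else lam * ∑ a, σ.choice π a * ∑ s', M.P (Hist.last π) a s' *
        dreachN M lam σ T n (ext π a s') := rfl

lemma dreachN_zero (lam : ℝ) (σ : Scheduler M) (T : Set S) (π : Hist S A) :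
    dreachN M lam σ T 0 π = if Hist.last π ∈ T then 1 else 0 := rfl

variable {lam : ℝ}

lemma dreachN_nonneg (h0 : 0 ≤ lam) (σ : Scheduler M) (T : Set S) :
    ∀ n π, 0 ≤ dreachN M lam σ T n π := by
  intro n
  induction n with
  | zero => intro π; rw [dreachN_zero]; split <;> norm_num
  | succ n ih =>
    intro π
    rw [dreachN_succ]
    split
    · norm_num
    · exact mul_nonneg h0 (step_nonneg σ π _ fun a s' => ih _)

lemma dreachN_le_reachN (h0 : 0 ≤ lam) (h1 : lam ≤ 1) (σ : Scheduler M) (T : Set S) :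
    ∀ n π, dreachN M lam σ T n π ≤ reachN M σ T n π := by
  intro n
  induction n with
  | zero => intro π; rw [dreachN_zero]; simp [reachN]
  | succ n ih =>
    intro π
    rw [dreachN_succ, reachN_succ]
    split
    · norm_num
    · calc lam * ∑ a, σ.choice π a * ∑ s', M.P (Hist.last π) a s' *
            dreachN M lam σ T n (ext π a s')
          ≤ 1 * ∑ a, σ.choice π a * ∑ s', M.P (Hist.last π) a s' *
            dreachN M lam σ T n (ext π a s') := by
            exact mul_le_mul_of_nonneg_right h1
              (step_nonneg σ π _ fun a s' => dreachN_nonneg h0 σ T n _)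
        _ = ∑ a, σ.choice π a * ∑ s', M.P (Hist.last π) a s' *
            dreachN M lam σ T n (ext π a s') := one_mul _
        _ ≤ _ := step_mono σ π _ _ fun a s' => ih _

lemma dreachN_le_one (h0 : 0 ≤ lam) (h1 : lam ≤ 1) (σ : Scheduler M) (T : Set S)
    (n : ℕ) (π : Hist S A) : dreachN M lam σ T n π ≤ 1 :=
  le_trans (dreachN_le_reachN h0 h1 σ T n π) (reachN_le_one σ T n π)

lemma dreachN_mono_n (h0 : 0 ≤ lam) (σ : Scheduler M) (T : Set S) :
    ∀ n π, dreachN M lam σ T n π ≤ dreachN M lam σ T (n+1) π := by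
  intro n
  induction n with
  | zero =>
    intro π
    rw [dreachN_zero, dreachN_succ]
    split
    · norm_num
    · exact mul_nonneg h0 (step_nonneg σ π _ fun a s' => dreachN_nonneg h0 σ T 0 _)
  | succ n ih =>
    intro π
    rw [dreachN_succ, dreachN_succ]
    split
    · norm_num
    · exact mul_le_mul_of_nonneg_left (step_mono σ π _ _ fun a s' => ih _) h0

lemma dreachN_monotone (h0 : 0 ≤ lam) (σ : Scheduler M) (T : Set S) (π : Hist S A) :
    Monotone fun n => dreachN M lam σ T n π :=
  monotone_nat_of_le_succ fun n => dreachN_mono_n h0 σ T n π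

lemma dreachN_mono_lam {lam' : ℝ} (h0 : 0 ≤ lam) (hll : lam ≤ lam') (h1' : lam' ≤ 1)
    (σ : Scheduler M) (T : Set S) :
    ∀ n π, dreachN M lam σ T n π ≤ dreachN M lam' σ T n π := by
  intro n
  induction n with
  | zero => intro π; rw [dreachN_zero, dreachN_zero]
  | succ n ih =>
    intro π
    rw [dreachN_succ, dreachN_succ]
    split
    · norm_num
    · refine mul_le_mul hll (step_mono σ π _ _ fun a s' => ih _)
        (step_nonneg σ π _ fun a s' => dreachN_nonneg h0 σ T n _) (le_trans h0 hll)

/-- Quantitative gap between discounted and undiscounted bounded reachability. -/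
lemma reachN_sub_dreachN (h0 : 0 ≤ lam) (h1 : lam ≤ 1) (σ : Scheduler M) (T : Set S) :
    ∀ n π, reachN M σ T n π - dreachN M lam σ T n π ≤ n * (1 - lam) := by
  intro n
  induction n with
  | zero => intro π; rw [dreachN_zero]; simp [reachN]
  | succ n ih =>
    intro π
    have hn : (0:ℝ) ≤ n := Nat.cast_nonneg n
    rw [dreachN_succ, reachN_succ]
    push_cast
    split
    · nlinarith
    · set X := ∑ a, σ.choice π a * ∑ s', M.P (Hist.last π) a s' *
        reachN M σ T n (ext π a s') with hX
      set Y := ∑ a, σ.choice π a * ∑ s', M.P (Hist.last π) a s' *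
        dreachN M lam σ T n (ext π a s') with hY
      have hXY : X - Y ≤ n * (1 - lam) := by
        have : X - Y = ∑ a, σ.choice π a * ∑ s', M.P (Hist.last π) a s' *
            (reachN M σ T n (ext π a s') - dreachN M lam σ T n (ext π a s')) := by
          rw [hX, hY, ← Finset.sum_sub_distrib]
          refine Finset.sum_congr rfl fun a _ => ?_
          rw [← mul_sub, ← Finset.sum_sub_distrib]
          congr 1
          exact Finset.sum_congr rfl fun s' _ => by ring
        rw [this]
        calc ∑ a, σ.choice π a * ∑ s', M.P (Hist.last π) a s' *
              (reachN M σ T n (ext π a s') - dreachN M lam σ T n (ext π a s'))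
            ≤ ∑ a, σ.choice π a * ∑ s', M.P (Hist.last π) a s' * (n * (1 - lam)) := by
              refine Finset.sum_le_sum fun a _ => mul_le_mul_of_nonneg_left
                (Finset.sum_le_sum fun s' _ => mul_le_mul_of_nonneg_left (ih _)
                  (M.nonneg _ a s')) (σ.nonneg π a)
          _ = ∑ a, σ.choice π a * ((∑ s', M.P (Hist.last π) a s') * (n * (1 - lam))) := by
              exact Finset.sum_congr rfl fun a _ => by rw [Finset.sum_mul]
          _ ≤ ∑ a, σ.choice π a * (1 * (n * (1 - lam))) := by
              refine Finset.sum_le_sum fun a _ => mul_le_mul_of_nonneg_left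
                (mul_le_mul_of_nonneg_right (sum_P_le_one _ a)
                  (mul_nonneg hn (by linarith))) (σ.nonneg π a)
          _ = n * (1 - lam) := by rw [← Finset.sum_mul, σ.sum_one π]; ring
      have hX1 : X ≤ 1 := step_le_one σ π _ fun a s' => reachN_le_one σ T n _
      have hY0 : 0 ≤ Y := step_nonneg σ π _ fun a s' => dreachN_nonneg h0 σ T n _
      have : X - lam * Y = (1 - lam) * X + lam * (X - Y) := by ring
      rw [this]
      calc (1 - lam) * X + lam * (X - Y)
          ≤ (1 - lam) * 1 + lam * (n * (1 - lam)) := by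
            refine add_le_add (mul_le_mul_of_nonneg_left hX1 (by linarith))
              (mul_le_mul_of_nonneg_left hXY h0)
        _ ≤ ((n:ℝ) + 1) * (1 - lam) := by
            nlinarith [mul_nonneg hn (mul_nonneg (by linarith : (0:ℝ) ≤ 1 - lam)
              (by linarith : (0:ℝ) ≤ 1 - lam))]
      
/-- Discounted unbounded reachability from a history. -/
noncomputable def dPrH (M : MDP S A) (lam : ℝ) (σ : Scheduler M) (T : Set S)
    (π : Hist S A) : ℝ :=
  ⨆ n, dreachN M lam σ T n π

lemma bddAbove_dreachN (h0 : 0 ≤ lam) (h1 : lam ≤ 1) (σ : Scheduler M) (T : Set S)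
    (π : Hist S A) : BddAbove (Set.range fun n => dreachN M lam σ T n π) :=
  ⟨1, by rintro x ⟨n, rfl⟩; exact dreachN_le_one h0 h1 σ T n π⟩

lemma dreachN_le_dPrH (h0 : 0 ≤ lam) (h1 : lam ≤ 1) (σ : Scheduler M) (T : Set S)
    (n : ℕ) (π : Hist S A) : dreachN M lam σ T n π ≤ dPrH M lam σ T π :=
  le_ciSup (bddAbove_dreachN h0 h1 σ T π) n

lemma dPrH_le_PrH (h0 : 0 ≤ lam) (h1 : lam ≤ 1) (σ : Scheduler M) (T : Set S)
    (π : Hist S A) : dPrH M lam σ T π ≤ PrH M σ T π :=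
  ciSup_le fun n => le_trans (dreachN_le_reachN h0 h1 σ T n π) (reachN_le_PrH σ T n π)

lemma dPrH_nonneg (h0 : 0 ≤ lam) (h1 : lam ≤ 1) (σ : Scheduler M) (T : Set S)
    (π : Hist S A) : 0 ≤ dPrH M lam σ T π :=
  le_trans (dreachN_nonneg h0 σ T 0 π) (dreachN_le_dPrH h0 h1 σ T 0 π)

lemma tendsto_dreachN (h0 : 0 ≤ lam) (h1 : lam ≤ 1) (σ : Scheduler M) (T : Set S)
    (π : Hist S A) :
    Tendsto (fun n => dreachN M lam σ T n π) atTop (nhds (dPrH M lam σ T π)) :=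
  tendsto_atTop_ciSup (dreachN_monotone h0 σ T π) (bddAbove_dreachN h0 h1 σ T π)

/-- The key quantitative lower bound on the discounted value. -/
lemma PrH_le_dPrH_add (h0 : 0 ≤ lam) (h1 : lam ≤ 1) (σ : Scheduler M) (T : Set S)
    (π : Hist S A) (n : ℕ) (δ : ℝ) (hδ : PrH M σ T π - δ ≤ reachN M σ T n π) :
    PrH M σ T π ≤ dPrH M lam σ T π + δ + n * (1 - lam) := by
  have h2 := reachN_sub_dreachN h0 h1 σ T n π
  have h3 := dreachN_le_dPrH h0 h1 σ T n π
  linarith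

lemma dPrH_mono_lam {lam' : ℝ} (h0 : 0 ≤ lam) (hll : lam ≤ lam') (h1' : lam' ≤ 1)
    (σ : Scheduler M) (T : Set S) (π : Hist S A) :
    dPrH M lam σ T π ≤ dPrH M lam' σ T π :=
  ciSup_le fun n => le_trans (dreachN_mono_lam h0 hll h1' σ T n π)
    (dreachN_le_dPrH (le_trans h0 hll) h1' σ T n π)

end RR
namespace RR
set_option linter.unusedSectionVars false

variable {S A : Type*} [Fintype S] [Fintype A]

/-- The deterministic scheduler induced by a choice function on histories. -/
noncomputable def detSched (M : MDP S A) (f : Hist S A → A)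
    (hf : ∀ π, M.enabled (Hist.last π) (f π)) : Scheduler M where
  choice π a := if a = f π then 1 else 0
  nonneg π a := by by_cases hc : a = f π <;> simp [hc]
  sum_one π := by simp
  supp π a h := by
    by_cases hc : a = f π
    · exact absurd (hc ▸ hf π) h
    · simp [hc]

variable {M : MDP S A}

lemma detSched_step (f : Hist S A → A) (hf : ∀ π, M.enabled (Hist.last π) (f π))
    (π : Hist S A) (X : A → ℝ) :
    ∑ a, (detSched M f hf).choice π a * X a = X (f π) := by
  simp [detSched, ite_mul]

/-- A default scheduler. -/
noncomputable def defaultSched (M : MDP S A) : Scheduler M :=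
  detSched M (fun π => Classical.choose (M.exists_enabled (Hist.last π)))
    (fun π => Classical.choose_spec (M.exists_enabled (Hist.last π)))

instance : Nonempty (Scheduler M) := ⟨defaultSched M⟩

/-- Glue a family of schedulers, dispatching on the initial state of the history. -/
noncomputable def glueSched (F : S → Scheduler M) : Scheduler M where
  choice π := (F π.1).choice π
  nonneg π := (F π.1).nonneg π
  sum_one π := (F π.1).sum_one π
  supp π := (F π.1).supp π

lemma reachN_glue (F : S → Scheduler M) (T : Set S) :
    ∀ n π, reachN M (glueSched F) T n π = reachN M (F π.1) T n π := by
  intro n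
  induction n with
  | zero => intro π; rfl
  | succ n ih =>
    intro π
    rw [reachN_succ, reachN_succ]
    split
    · rfl
    · refine Finset.sum_congr rfl fun a _ => ?_
      congr 1
      refine Finset.sum_congr rfl fun s' _ => ?_
      rw [ih (ext π a s'), ext_fst]

lemma Pr_glue (F : S → Scheduler M) (s : S) (T : Set S) :
    Pr M (glueSched F) s T = Pr M (F s) s T := by
  unfold Pr
  exact congrArg _ (funext fun n => reachN_glue F T n (s, []))

variable {ι : Type*}

/-- The set of indices whose targets have been visited along a history. -/
noncomputable def visited (h : S → Finset ι) (π : Hist S A) : Finset ι :=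
  π.2.foldl (fun r x => r ∪ h x.2) (h π.1)

lemma visited_nil (h : S → Finset ι) (s : S) :
    visited (A := A) h (s, ([] : List (A × S))) = h s := rfl

lemma visited_ext (h : S → Finset ι) (π : Hist S A) (a : A) (s' : S) :
    visited h (ext π a s') = visited h π ∪ h s' := by
  simp [visited, ext, List.foldl_append]

/-- The scheduler induced by a memoryless policy on the product of states and
visited index sets. -/
noncomputable def polSched (M : MDP S A) (h : S → Finset ι) (p : S → Finset ι → A)
    (hp : ∀ s R, M.enabled s (p s R)) : Scheduler M :=
  detSched M (fun π => p (Hist.last π) (visited h π)) (fun π => hp _ _)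

end RR
namespace RR
set_option linter.unusedSectionVars false

variable {S A : Type*} [Fintype S] [Fintype A]

/-- The weight (probability) of the steps `l` continuing the history `π`. -/
noncomputable def wAux (M : MDP S A) (σ : Scheduler M) : Hist S A → List (A × S) → ℝ
  | _, [] => 1
  | π, (a, s') :: l => σ.choice π a * M.P (Hist.last π) a s' * wAux M σ (ext π a s') l

/-- The weight (probability) of a history. -/
noncomputable def wgt (M : MDP S A) (σ : Scheduler M) (π : Hist S A) : ℝ :=
  wAux M σ (π.1, ([] : List (A × S))) π.2

variable {M : MDP S A}

lemma wAux_nonneg (σ : Scheduler M) : ∀ (l : List (A × S)) (π : Hist S A),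
    0 ≤ wAux M σ π l := by
  intro l
  induction l with
  | nil => intro π; rw [wAux]; norm_num
  | cons x l ih =>
    intro π
    obtain ⟨a, s'⟩ := x
    rw [wAux]
    exact mul_nonneg (mul_nonneg (σ.nonneg π a) (M.nonneg _ a s')) (ih _)

lemma wgt_nonneg (σ : Scheduler M) (π : Hist S A) : 0 ≤ wgt M σ π :=
  wAux_nonneg σ π.2 _

lemma wgt_nil (σ : Scheduler M) (s : S) : wgt M σ (s, ([] : List (A × S))) = 1 := rfl

lemma wAux_concat (σ : Scheduler M) : ∀ (l : List (A × S)) (ρ : Hist S A) (a : A) (s' : S),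
    wAux M σ ρ (l ++ [(a, s')]) =
      wAux M σ ρ l * (σ.choice (ρ.1, ρ.2 ++ l) a * M.P (Hist.last (ρ.1, ρ.2 ++ l)) a s') := by
  intro l
  induction l with
  | nil =>
    intro ρ a s'
    simp only [List.nil_append, List.append_nil, wAux]
    rw [show ((ρ.1, ρ.2) : Hist S A) = ρ from rfl]
    ring
  | cons x l ih =>
    intro ρ a s'
    obtain ⟨b, u⟩ := x
    simp only [List.cons_append, wAux, List.append_eq]
    rw [ih (ext ρ b u) a s']
    have h2 : ((ext ρ b u).1, (ext ρ b u).2 ++ l) = (ρ.1, ρ.2 ++ (b, u) :: l) := by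
      simp [ext]
    rw [h2]
    ring

lemma wgt_ext (σ : Scheduler M) (π : Hist S A) (a : A) (s' : S) :
    wgt M σ (ext π a s') = wgt M σ π * (σ.choice π a * M.P (Hist.last π) a s') := by
  unfold wgt
  rw [show (ext π a s').1 = π.1 from rfl, show (ext π a s').2 = π.2 ++ [(a, s')] from rfl,
    wAux_concat]
  have : ((π.1, ([] : List (A × S)) ).2 ++ π.2) = π.2 := by simp
  rw [show ((π.1, ([] : List (A × S))).1, ((π.1, ([] : List (A × S))).2 ++ π.2)) = π by
    simp]

/-- The mixture weight normalizer. -/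
noncomputable def mixD (σ₀ σ₁ : Scheduler M) (t : ℝ) (π : Hist S A) : ℝ :=
  (1 - t) * wgt M σ₀ π + t * wgt M σ₁ π

lemma mixD_nonneg {σ₀ σ₁ : Scheduler M} {t : ℝ} (h0 : 0 ≤ t) (h1 : t ≤ 1) (π : Hist S A) :
    0 ≤ mixD σ₀ σ₁ t π :=
  add_nonneg (mul_nonneg (by linarith) (wgt_nonneg σ₀ π))
    (mul_nonneg h0 (wgt_nonneg σ₁ π))

/-- The mixture of two schedulers with weights `1 - t` and `t`. -/
noncomputable def mixSched (σ₀ σ₁ : Scheduler M) (t : ℝ) (h0 : 0 ≤ t) (h1 : t ≤ 1) :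
    Scheduler M where
  choice π a := if mixD σ₀ σ₁ t π = 0 then σ₀.choice π a
    else ((1 - t) * wgt M σ₀ π * σ₀.choice π a + t * wgt M σ₁ π * σ₁.choice π a) /
      mixD σ₀ σ₁ t π
  nonneg π a := by
    split
    · exact σ₀.nonneg π a
    · refine div_nonneg (add_nonneg ?_ ?_) (mixD_nonneg h0 h1 π)
      · exact mul_nonneg (mul_nonneg (by linarith) (wgt_nonneg σ₀ π)) (σ₀.nonneg π a)
      · exact mul_nonneg (mul_nonneg h0 (wgt_nonneg σ₁ π)) (σ₁.nonneg π a)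
  sum_one π := by
    split
    · exact σ₀.sum_one π
    · rename_i hD
      rw [← Finset.sum_div, Finset.sum_add_distrib, ← Finset.mul_sum, ← Finset.mul_sum,
        σ₀.sum_one π, σ₁.sum_one π]
      simp only [mul_one]
      exact div_self hD
  supp π a h := by
    split
    · exact σ₀.supp π a h
    · rw [σ₀.supp π a h, σ₁.supp π a h]
      simp

lemma mix_reachN (σ₀ σ₁ : Scheduler M) (t : ℝ) (h0 : 0 ≤ t) (h1 : t ≤ 1) (T : Set S) :
    ∀ n π, mixD σ₀ σ₁ t π * reachN M (mixSched σ₀ σ₁ t h0 h1) T n π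
      = (1 - t) * wgt M σ₀ π * reachN M σ₀ T n π
        + t * wgt M σ₁ π * reachN M σ₁ T n π := by
  intro n
  induction n with
  | zero =>
    intro π
    show mixD σ₀ σ₁ t π * (if Hist.last π ∈ T then 1 else 0) = _
    rw [show reachN M σ₀ T 0 π = if Hist.last π ∈ T then (1:ℝ) else 0 from rfl,
      show reachN M σ₁ T 0 π = if Hist.last π ∈ T then (1:ℝ) else 0 from rfl]
    split
    · simp [mixD]
    · ring
  | succ n ih =>
    intro π
    rw [reachN_succ, reachN_succ, reachN_succ]
    split
    · simp [mixD]
    · by_cases hD : mixD σ₀ σ₁ t π = 0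
      · have hsum : (1 - t) * wgt M σ₀ π = 0 ∧ t * wgt M σ₁ π = 0 := by
          constructor <;>
          · have n0 : 0 ≤ (1 - t) * wgt M σ₀ π :=
              mul_nonneg (by linarith) (wgt_nonneg σ₀ π)
            have n1 : 0 ≤ t * wgt M σ₁ π := mul_nonneg h0 (wgt_nonneg σ₁ π)
            have := hD
            unfold mixD at this
            linarith
        rw [hD, hsum.1, hsum.2]
        ring
      · set τ := mixSched σ₀ σ₁ t h0 h1 with hτ
        have hch : ∀ a, mixD σ₀ σ₁ t π * τ.choice π a
            = (1 - t) * wgt M σ₀ π * σ₀.choice π a + t * wgt M σ₁ π * σ₁.choice π a := by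
          intro a
          rw [hτ]
          show mixD σ₀ σ₁ t π * (if mixD σ₀ σ₁ t π = 0 then σ₀.choice π a else _) = _
          rw [if_neg hD, mul_comm, div_mul_cancel₀ _ hD]
        have hnum : ∀ a s', ((1 - t) * wgt M σ₀ π * σ₀.choice π a
            + t * wgt M σ₁ π * σ₁.choice π a) * M.P (Hist.last π) a s'
            = mixD σ₀ σ₁ t (ext π a s') := by
          intro a s'
          unfold mixD
          rw [wgt_ext σ₀ π a s', wgt_ext σ₁ π a s']
          ring
        calc mixD σ₀ σ₁ t π * ∑ a, τ.choice π a * ∑ s', M.P (Hist.last π) a s' *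
              reachN M τ T n (ext π a s')
            = ∑ a, (mixD σ₀ σ₁ t π * τ.choice π a) * ∑ s', M.P (Hist.last π) a s' *
              reachN M τ T n (ext π a s') := by
              rw [Finset.mul_sum]
              exact Finset.sum_congr rfl fun a _ => by ring
          _ = ∑ a, ∑ s', (((1 - t) * wgt M σ₀ π * σ₀.choice π a
              + t * wgt M σ₁ π * σ₁.choice π a) * M.P (Hist.last π) a s') *
              reachN M τ T n (ext π a s') := by
              refine Finset.sum_congr rfl fun a _ => ?_
              rw [hch a, Finset.mul_sum]
              exact Finset.sum_congr rfl fun s' _ => by ring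
          _ = ∑ a, ∑ s', ((1 - t) * wgt M σ₀ (ext π a s') * reachN M σ₀ T n (ext π a s')
              + t * wgt M σ₁ (ext π a s') * reachN M σ₁ T n (ext π a s')) := by
              refine Finset.sum_congr rfl fun a _ => Finset.sum_congr rfl fun s' _ => ?_
              rw [hnum a s', ih (ext π a s')]
          _ = (1 - t) * wgt M σ₀ π * ∑ a, σ₀.choice π a * ∑ s', M.P (Hist.last π) a s' *
                reachN M σ₀ T n (ext π a s')
              + t * wgt M σ₁ π * ∑ a, σ₁.choice π a * ∑ s', M.P (Hist.last π) a s' *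
                reachN M σ₁ T n (ext π a s') := by
              rw [Finset.mul_sum, Finset.mul_sum, ← Finset.sum_add_distrib]
              refine Finset.sum_congr rfl fun a _ => ?_
              rw [Finset.sum_add_distrib, Finset.mul_sum, Finset.mul_sum, Finset.mul_sum,
                Finset.mul_sum]
              congr 1 <;>
              · refine Finset.sum_congr rfl fun s' _ => ?_
                rw [wgt_ext]
                ring

lemma mix_Pr (σ₀ σ₁ : Scheduler M) (t : ℝ) (h0 : 0 ≤ t) (h1 : t ≤ 1) (s : S) (T : Set S) :
    Pr M (mixSched σ₀ σ₁ t h0 h1) s T = (1 - t) * Pr M σ₀ s T + t * Pr M σ₁ s T := by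
  have key : ∀ n, reachN M (mixSched σ₀ σ₁ t h0 h1) T n (s, [])
      = (1 - t) * reachN M σ₀ T n (s, []) + t * reachN M σ₁ T n (s, []) := by
    intro n
    have := mix_reachN σ₀ σ₁ t h0 h1 T n (s, [])
    rw [show mixD σ₀ σ₁ t (s, ([] : List (A × S))) = 1 by
        unfold mixD; rw [wgt_nil, wgt_nil]; ring,
      wgt_nil, wgt_nil] at this
    linarith
  have t1 : Tendsto (fun n => reachN M (mixSched σ₀ σ₁ t h0 h1) T n (s, [])) atTop
      (nhds (Pr M (mixSched σ₀ σ₁ t h0 h1) s T)) := tendsto_reachN _ T _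
  have t2 : Tendsto (fun n => (1 - t) * reachN M σ₀ T n (s, [])
      + t * reachN M σ₁ T n (s, [])) atTop
      (nhds ((1 - t) * Pr M σ₀ s T + t * Pr M σ₁ s T)) :=
    ((tendsto_reachN σ₀ T _).const_mul _).add ((tendsto_reachN σ₁ T _).const_mul _)
  rw [show (fun n => reachN M (mixSched σ₀ σ₁ t h0 h1) T n (s, []))
      = fun n => (1 - t) * reachN M σ₀ T n (s, []) + t * reachN M σ₁ T n (s, [])
    from funext key] at t1
  exact tendsto_nhds_unique t1 t2

end RR
namespace RR
set_option linter.unusedSectionVars false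
set_option linter.unusedVariables false

variable {S A : Type*} [Fintype S] [Fintype A]

section Attain

variable {ι : Type*} [Fintype ι]

/-- Helper: exchanging two weighted sums. -/
lemma sum_mul_swap {α β : Type*} (J : Finset α) (K : Finset β) (c : α → ℝ) (d : β → ℝ)
    (f : α → β → ℝ) :
    ∑ i ∈ J, c i * ∑ a ∈ K, d a * f i a = ∑ a ∈ K, d a * ∑ i ∈ J, c i * f i a := by
  simp_rw [Finset.mul_sum]
  rw [Finset.sum_comm]
  exact Finset.sum_congr rfl fun a _ => Finset.sum_congr rfl fun i _ => by ring

/-- The indices in `I` whose target contains `s`. -/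
noncomputable def hset (I : Finset ι) (T : ι → Set S) (s : S) : Finset ι :=
  I.filter fun i => s ∈ T i

/-- The enabled actions at a state, as a finset. -/
noncomputable def enab (M : MDP S A) (s : S) : Finset A :=
  Finset.univ.filter fun a => M.enabled s a

lemma enab_nonempty (M : MDP S A) (s : S) : (enab M s).Nonempty := by
  obtain ⟨a, ha⟩ := M.exists_enabled s
  exact ⟨a, Finset.mem_filter.2 ⟨Finset.mem_univ _, ha⟩⟩

lemma mem_enab_iff (M : MDP S A) (s : S) (a : A) : a ∈ enab M s ↔ M.enabled s a := by
  simp [enab]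

lemma sum_choice_enab {M : MDP S A} (σ : Scheduler M) (π : Hist S A) :
    ∑ a ∈ enab M (Hist.last π), σ.choice π a = 1 := by
  rw [← σ.sum_one π]
  refine Finset.sum_subset (Finset.subset_univ _) fun a _ ha => ?_
  exact σ.supp π a (by simpa [mem_enab_iff] using ha)

/-- Averaging over enabled actions is bounded by the max over enabled actions. -/
lemma choice_avg_le {M : MDP S A} (σ : Scheduler M) (π : Hist S A) (Z : A → ℝ) (c : ℝ)
    (hZ : ∀ a ∈ enab M (Hist.last π), Z a ≤ c) :
    ∑ a, σ.choice π a * Z a ≤ c := by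
  have h1 : ∑ a, σ.choice π a * Z a = ∑ a ∈ enab M (Hist.last π), σ.choice π a * Z a := by
    refine (Finset.sum_subset (Finset.subset_univ _) fun a _ ha => ?_).symm
    rw [σ.supp π a (by simpa [mem_enab_iff] using ha), zero_mul]
  rw [h1]
  calc ∑ a ∈ enab M (Hist.last π), σ.choice π a * Z a
      ≤ ∑ a ∈ enab M (Hist.last π), σ.choice π a * c :=
        Finset.sum_le_sum fun a ha => mul_le_mul_of_nonneg_left (hZ a ha) (σ.nonneg π a)
    _ = c := by rw [← Finset.sum_mul, sum_choice_enab, one_mul]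

/-- The one-step optimal value operator ingredient: max over enabled actions. -/
noncomputable def Amax (M : MDP S A) (x : S → Finset ι → ℝ) (s : S) (R : Finset ι) : ℝ :=
  (enab M s).sup' (enab_nonempty M s) fun a => ∑ s', M.P s a s' * x s' R

/-- The discounted Bellman operator on the product of states and visited sets. -/
noncomputable def Lop (M : MDP S A) (I : Finset ι) (qc : ι → ℝ) (T : ι → Set S) (lam : ℝ)
    (x : S → Finset ι → ℝ) : S → Finset ι → ℝ := fun s R =>
  (∑ i ∈ hset I T s \ R, qc i) + lam * Amax M x s (R ∪ hset I T s)

/-- Discounted `n`-step value of a scheduler. -/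
noncomputable def PhiN (M : MDP S A) (I : Finset ι) (qc : ι → ℝ) (T : ι → Set S) (lam : ℝ)
    (σ : Scheduler M) (n : ℕ) (π : Hist S A) (R : Finset ι) : ℝ :=
  ∑ i ∈ I \ R, qc i * dreachN M lam σ (T i) n π

/-- Discounted value of a scheduler. -/
noncomputable def Phi (M : MDP S A) (I : Finset ι) (qc : ι → ℝ) (T : ι → Set S) (lam : ℝ)
    (σ : Scheduler M) (π : Hist S A) (R : Finset ι) : ℝ :=
  ∑ i ∈ I \ R, qc i * dPrH M lam σ (T i) π

lemma sdiff_filter_eq (I : Finset ι) (T : ι → Set S) (s : S) (R : Finset ι) :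
    (I \ R).filter (fun i => s ∈ T i) = hset I T s \ R := by
  ext i
  simp only [Finset.mem_filter, Finset.mem_sdiff, hset]
  tauto

lemma sdiff_filter_not_eq (I : Finset ι) (T : ι → Set S) (s : S) (R : Finset ι) :
    (I \ R).filter (fun i => s ∉ T i) = I \ (R ∪ hset I T s) := by
  ext i
  simp only [Finset.mem_filter, Finset.mem_sdiff, hset, Finset.mem_union]
  tauto

lemma PhiN_zero (M : MDP S A) (I : Finset ι) (qc : ι → ℝ) (T : ι → Set S) (lam : ℝ)
    (σ : Scheduler M) (π : Hist S A) (R : Finset ι) :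
    PhiN M I qc T lam σ 0 π R = ∑ i ∈ hset I T (Hist.last π) \ R, qc i := by
  unfold PhiN
  rw [← sdiff_filter_eq]
  rw [Finset.sum_filter]
  refine Finset.sum_congr rfl fun i _ => ?_
  rw [dreachN_zero]
  split <;> simp

lemma PhiN_succ (M : MDP S A) (I : Finset ι) (qc : ι → ℝ) (T : ι → Set S) (lam : ℝ)
    (σ : Scheduler M) (n : ℕ) (π : Hist S A) (R : Finset ι) :
    PhiN M I qc T lam σ (n+1) π R
      = (∑ i ∈ hset I T (Hist.last π) \ R, qc i)
        + lam * ∑ a, σ.choice π a * ∑ s', M.P (Hist.last π) a s' *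
          PhiN M I qc T lam σ n (ext π a s') (R ∪ hset I T (Hist.last π)) := by
  unfold PhiN
  rw [← Finset.sum_filter_add_sum_filter_not (I \ R) (fun i => Hist.last π ∈ T i)]
  congr 1
  · rw [sdiff_filter_eq]
    refine Finset.sum_congr rfl fun i hi => ?_
    have : Hist.last π ∈ T i := by
      simp only [hset, Finset.mem_sdiff, Finset.mem_filter] at hi
      exact hi.1.2
    rw [dreachN_succ, if_pos this, mul_one]
  · rw [sdiff_filter_not_eq]
    have hterm : ∀ i ∈ I \ (R ∪ hset I T (Hist.last π)),
        qc i * dreachN M lam σ (T i) (n+1) π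
          = lam * (qc i * ∑ a, σ.choice π a * ∑ s', M.P (Hist.last π) a s' *
            dreachN M lam σ (T i) n (ext π a s')) := by
      intro i hi
      have : Hist.last π ∉ T i := by
        simp only [Finset.mem_sdiff, Finset.mem_union, hset, Finset.mem_filter] at hi
        tauto
      rw [dreachN_succ, if_neg this]
      ring
    rw [Finset.sum_congr rfl hterm, ← Finset.mul_sum]
    congr 1
    rw [sum_mul_swap]
    refine Finset.sum_congr rfl fun a _ => ?_
    congr 1
    rw [sum_mul_swap]

end Attain

end RR
namespace RR
set_option linter.unusedSectionVars false
set_option linter.unusedVariables false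

variable {S A : Type*} [Fintype S] [Fintype A]

section Attain2

variable {ι : Type*} [Fintype ι]

lemma abs_sup'_sub_le {β : Type*} (s : Finset β) (hs : s.Nonempty) (f g : β → ℝ) (c : ℝ)
    (h : ∀ a ∈ s, |f a - g a| ≤ c) : |s.sup' hs f - s.sup' hs g| ≤ c := by
  have h1 : s.sup' hs f ≤ s.sup' hs g + c := by
    refine Finset.sup'_le _ _ fun a ha => ?_
    have h2 := h a ha
    rw [abs_le] at h2
    have := Finset.le_sup' g ha
    linarith
  have h2 : s.sup' hs g ≤ s.sup' hs f + c := by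
    refine Finset.sup'_le _ _ fun a ha => ?_
    have h2 := h a ha
    rw [abs_le] at h2
    have := Finset.le_sup' f ha
    linarith
  rw [abs_le]
  constructor <;> linarith

lemma amax_diff (M : MDP S A) (x y : S → Finset ι → ℝ) (s : S) (R : Finset ι) :
    |Amax M x s R - Amax M y s R| ≤ dist x y := by
  refine abs_sup'_sub_le _ _ _ _ _ fun a ha => ?_
  have heq : ∑ s', M.P s a s' * x s' R - ∑ s', M.P s a s' * y s' R
      = ∑ s', M.P s a s' * (x s' R - y s' R) := by
    rw [← Finset.sum_sub_distrib]
    exact Finset.sum_congr rfl fun s' _ => by ring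
  rw [heq]
  calc |∑ s', M.P s a s' * (x s' R - y s' R)|
      ≤ ∑ s', |M.P s a s' * (x s' R - y s' R)| := Finset.abs_sum_le_sum_abs _ _
    _ ≤ ∑ s', M.P s a s' * dist x y := by
        refine Finset.sum_le_sum fun s' _ => ?_
        rw [abs_mul, abs_of_nonneg (M.nonneg s a s')]
        refine mul_le_mul_of_nonneg_left ?_ (M.nonneg s a s')
        calc |x s' R - y s' R| = dist (x s' R) (y s' R) := (Real.dist_eq _ _).symm
          _ ≤ dist (x s') (y s') := dist_le_pi_dist _ _ _
          _ ≤ dist x y := dist_le_pi_dist _ _ _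
    _ = (∑ s', M.P s a s') * dist x y := by rw [Finset.sum_mul]
    _ ≤ 1 * dist x y := mul_le_mul_of_nonneg_right (sum_P_le_one s a) dist_nonneg
    _ = dist x y := one_mul _

lemma lop_contract (M : MDP S A) (I : Finset ι) (qc : ι → ℝ) (T : ι → Set S) {lam : ℝ}
    (hl0 : 0 ≤ lam) (x y : S → Finset ι → ℝ) :
    dist (Lop M I qc T lam x) (Lop M I qc T lam y) ≤ lam * dist x y := by
  rw [dist_pi_le_iff (mul_nonneg hl0 dist_nonneg)]
  intro s
  rw [dist_pi_le_iff (mul_nonneg hl0 dist_nonneg)]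
  intro R
  rw [Real.dist_eq]
  have heq : Lop M I qc T lam x s R - Lop M I qc T lam y s R
      = lam * (Amax M x s (R ∪ hset I T s) - Amax M y s (R ∪ hset I T s)) := by
    unfold Lop; ring
  rw [heq, abs_mul, abs_of_nonneg hl0]
  exact mul_le_mul_of_nonneg_left (amax_diff M x y s _) hl0

lemma exists_fixed (M : MDP S A) (I : Finset ι) (qc : ι → ℝ) (T : ι → Set S) {lam : ℝ}
    (hl0 : 0 ≤ lam) (hl1 : lam < 1) :
    ∃ x : S → Finset ι → ℝ, Lop M I qc T lam x = x := by
  set K : NNReal := ⟨lam, hl0⟩ with hK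
  have hC : ContractingWith K (Lop M I qc T lam) := by
    constructor
    · exact_mod_cast hl1
    · exact LipschitzWith.of_dist_le_mul fun x y => lop_contract M I qc T hl0 x y
  exact ⟨ContractingWith.fixedPoint _ hC, hC.fixedPoint_isFixedPt⟩

lemma exists_greedy (M : MDP S A) (x : S → Finset ι → ℝ) :
    ∃ p : S → Finset ι → A, ∀ s R, p s R ∈ enab M s ∧
      (∑ s', M.P s (p s R) s' * x s' R) = Amax M x s R := by
  have H : ∀ s R, ∃ a, a ∈ enab M s ∧ (∑ s', M.P s a s' * x s' R) = Amax M x s R := by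
    intro s R
    obtain ⟨a, ha, hm⟩ := Finset.exists_max_image (enab M s)
      (fun a => ∑ s', M.P s a s' * x s' R) (enab_nonempty M s)
    exact ⟨a, ha, le_antisymm
      (Finset.le_sup' (fun a => ∑ s', M.P s a s' * x s' R) ha) (Finset.sup'_le _ _ hm)⟩
  choose p hp using H
  exact ⟨p, hp⟩

lemma exists_bound (x : S → Finset ι → ℝ) : ∃ B : ℝ, 0 ≤ B ∧ ∀ s R, |x s R| ≤ B := by
  obtain ⟨B, hB⟩ := (Set.finite_range fun p : S × Finset ι => |x p.1 p.2|).bddAbove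
  exact ⟨max B 0, le_max_right _ _, fun s R =>
    le_trans (hB ⟨(s, R), rfl⟩) (le_max_left _ _)⟩

lemma gv_abs_le (I : Finset ι) (qc : ι → ℝ) (J : Finset ι) (hJ : J ⊆ I) :
    |∑ i ∈ J, qc i| ≤ ∑ i ∈ I, |qc i| :=
  le_trans (Finset.abs_sum_le_sum_abs _ _)
    (Finset.sum_le_sum_of_subset_of_nonneg hJ fun i _ _ => abs_nonneg _)

lemma hset_sdiff_subset (I : Finset ι) (T : ι → Set S) (s : S) (R : Finset ι) :
    hset I T s \ R ⊆ I :=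
  le_trans (Finset.sdiff_subset) (Finset.filter_subset _ _)

section Verify

variable (M : MDP S A) (I : Finset ι) (qc : ι → ℝ) (T : ι → Set S) {lam : ℝ}
  (x : S → Finset ι → ℝ) {B : ℝ}

lemma PhiN_le_x (hl0 : 0 ≤ lam) (hx : Lop M I qc T lam x = x)
    (hB : ∀ s R, |x s R| ≤ B) : ∀ (n : ℕ) (σ : Scheduler M) (π : Hist S A) (R : Finset ι),
    PhiN M I qc T lam σ n π R
      ≤ x (Hist.last π) R + lam ^ n * ((∑ i ∈ I, |qc i|) + B) := by
  intro n
  induction n with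
  | zero =>
    intro σ π R
    rw [PhiN_zero]
    have h1 := gv_abs_le I qc _ (hset_sdiff_subset I T (Hist.last π) R)
    have h2 := hB (Hist.last π) R
    rw [abs_le] at h1 h2
    simp only [pow_zero, one_mul]
    linarith
  | succ n ih =>
    intro σ π R
    rw [PhiN_succ]
    have hxeq : x (Hist.last π) R
        = (∑ i ∈ hset I T (Hist.last π) \ R, qc i)
          + lam * Amax M x (Hist.last π) (R ∪ hset I T (Hist.last π)) :=
      (congrFun (congrFun hx _) _).symm
    set C := (∑ i ∈ I, |qc i|) + B with hC
    have key : ∑ a, σ.choice π a * ∑ s', M.P (Hist.last π) a s' *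
          PhiN M I qc T lam σ n (ext π a s') (R ∪ hset I T (Hist.last π))
        ≤ Amax M x (Hist.last π) (R ∪ hset I T (Hist.last π)) + lam ^ n * C := by
      refine choice_avg_le σ π _ _ fun a ha => ?_
      have hen : M.enabled (Hist.last π) a := (mem_enab_iff M _ a).1 ha
      calc ∑ s', M.P (Hist.last π) a s' *
            PhiN M I qc T lam σ n (ext π a s') (R ∪ hset I T (Hist.last π))
          ≤ ∑ s', M.P (Hist.last π) a s' *
            (x s' (R ∪ hset I T (Hist.last π)) + lam ^ n * C) := by
            refine Finset.sum_le_sum fun s' _ => mul_le_mul_of_nonneg_left ?_ (M.nonneg _ a s')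
            have := ih σ (ext π a s') (R ∪ hset I T (Hist.last π))
            rwa [last_ext] at this
        _ = (∑ s', M.P (Hist.last π) a s' * x s' (R ∪ hset I T (Hist.last π)))
            + (∑ s', M.P (Hist.last π) a s') * (lam ^ n * C) := by
            rw [Finset.sum_mul, ← Finset.sum_add_distrib]
            exact Finset.sum_congr rfl fun s' _ => by ring
        _ ≤ Amax M x (Hist.last π) (R ∪ hset I T (Hist.last π)) + lam ^ n * C := by
            have hen1 : (∑ s', M.P (Hist.last π) a s') = 1 := hen
            rw [hen1, one_mul]
            exact add_le_add_left (Finset.le_sup'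
              (fun a => ∑ s', M.P (Hist.last π) a s' * x s' (R ∪ hset I T (Hist.last π))) ha) _
    calc (∑ i ∈ hset I T (Hist.last π) \ R, qc i)
          + lam * ∑ a, σ.choice π a * ∑ s', M.P (Hist.last π) a s' *
            PhiN M I qc T lam σ n (ext π a s') (R ∪ hset I T (Hist.last π))
        ≤ (∑ i ∈ hset I T (Hist.last π) \ R, qc i)
          + lam * (Amax M x (Hist.last π) (R ∪ hset I T (Hist.last π)) + lam ^ n * C) :=
          add_le_add_right (mul_le_mul_of_nonneg_left key hl0) _
      _ ≤ x (Hist.last π) R + lam ^ (n+1) * C := by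
          rw [hxeq]
          have hlC : lam * (lam ^ n * C) ≤ lam ^ (n+1) * C := by
            rw [pow_succ]; ring_nf; exact le_refl _
          ring_nf
          ring_nf at hlC
          linarith
  
lemma PhiN_ge_x (hl0 : 0 ≤ lam) (hx : Lop M I qc T lam x = x)
    (hB : ∀ s R, |x s R| ≤ B) (p : S → Finset ι → A) (hpe : ∀ s R, M.enabled s (p s R))
    (hp2 : ∀ s R, (∑ s', M.P s (p s R) s' * x s' R) = Amax M x s R) :
    ∀ (n : ℕ) (π : Hist S A) (R : Finset ι),
      visited (hset I T) π = R ∪ hset I T (Hist.last π) →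
      x (Hist.last π) R - lam ^ n * ((∑ i ∈ I, |qc i|) + B)
        ≤ PhiN M I qc T lam (polSched M (hset I T) p hpe) n π R := by
  intro n
  induction n with
  | zero =>
    intro π R hvis
    rw [PhiN_zero]
    have h1 := gv_abs_le I qc _ (hset_sdiff_subset I T (Hist.last π) R)
    have h2 := hB (Hist.last π) R
    rw [abs_le] at h1 h2
    simp only [pow_zero, one_mul]
    linarith
  | succ n ih =>
    intro π R hvis
    rw [PhiN_succ]
    set τ := polSched M (hset I T) p hpe with hτ
    set R' := R ∪ hset I T (Hist.last π) with hR'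
    have hstep : ∑ a, τ.choice π a * ∑ s', M.P (Hist.last π) a s' *
          PhiN M I qc T lam τ n (ext π a s') R'
        = ∑ s', M.P (Hist.last π) (p (Hist.last π) R') s' *
          PhiN M I qc T lam τ n (ext π (p (Hist.last π) R') s') R' := by
      have h1 : ∑ a, τ.choice π a * ((fun a => ∑ s', M.P (Hist.last π) a s' *
            PhiN M I qc T lam τ n (ext π a s') R') a)
          = (fun a => ∑ s', M.P (Hist.last π) a s' *
            PhiN M I qc T lam τ n (ext π a s') R') (p (Hist.last π) (visited (hset I T) π)) :=
        detSched_step (M := M) (fun π => p (Hist.last π) (visited (hset I T) π))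
          (fun π => hpe _ _) π _
      rw [hvis] at h1
      exact h1
    rw [hstep]
    set C := (∑ i ∈ I, |qc i|) + B with hC
    set a' := p (Hist.last π) R' with ha'
    have hen : M.enabled (Hist.last π) a' := hpe _ _
    have hxeq : x (Hist.last π) R
        = (∑ i ∈ hset I T (Hist.last π) \ R, qc i) + lam * Amax M x (Hist.last π) R' :=
      (congrFun (congrFun hx _) _).symm
    have key : Amax M x (Hist.last π) R' - lam ^ n * C
        ≤ ∑ s', M.P (Hist.last π) a' s' * PhiN M I qc T lam τ n (ext π a' s') R' := by
      have hIH : ∀ s' : S, x s' R' - lam ^ n * C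
          ≤ PhiN M I qc T lam τ n (ext π a' s') R' ∨ True := fun _ => Or.inr trivial
      calc Amax M x (Hist.last π) R' - lam ^ n * C
          = (∑ s', M.P (Hist.last π) a' s' * x s' R')
            - (∑ s', M.P (Hist.last π) a' s') * (lam ^ n * C) := by
            have hen1 : (∑ s', M.P (Hist.last π) a' s') = 1 := hen
            rw [hp2, hen1]; ring
        _ = ∑ s', M.P (Hist.last π) a' s' * (x s' R' - lam ^ n * C) := by
            rw [Finset.sum_mul, ← Finset.sum_sub_distrib]
            exact Finset.sum_congr rfl fun s' _ => by ring
        _ ≤ ∑ s', M.P (Hist.last π) a' s' * PhiN M I qc T lam τ n (ext π a' s') R' := by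
            refine Finset.sum_le_sum fun s' _ => mul_le_mul_of_nonneg_left ?_ (M.nonneg _ a' s')
            have hcond : visited (hset I T) (ext π a' s')
                = R' ∪ hset I T (Hist.last (ext π a' s')) := by
              rw [visited_ext, last_ext, hvis]
            have := ih (ext π a' s') R' hcond
            rwa [last_ext] at this
    calc x (Hist.last π) R - lam ^ (n+1) * C
        = (∑ i ∈ hset I T (Hist.last π) \ R, qc i)
          + lam * (Amax M x (Hist.last π) R' - lam ^ n * C) := by
          rw [hxeq, pow_succ]; ring
      _ ≤ (∑ i ∈ hset I T (Hist.last π) \ R, qc i)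
          + lam * ∑ s', M.P (Hist.last π) a' s' *
            PhiN M I qc T lam τ n (ext π a' s') R' :=
          add_le_add_right (mul_le_mul_of_nonneg_left key hl0) _

end Verify

end Attain2

end RR
namespace RR
set_option linter.unusedSectionVars false
set_option linter.unusedVariables false

variable {S A : Type*} [Fintype S] [Fintype A]

lemma last_nil (s : S) : Hist.last (s, ([] : List (A × S))) = s := rfl

section Attain3

variable {ι : Type*} [Fintype ι]

lemma tendsto_PhiN (M : MDP S A) (I : Finset ι) (qc : ι → ℝ) (T : ι → Set S) {lam : ℝ}
    (hl0 : 0 ≤ lam) (hl1 : lam ≤ 1) (σ : Scheduler M) (π : Hist S A) (R : Finset ι) :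
    Tendsto (fun n => PhiN M I qc T lam σ n π R) atTop (nhds (Phi M I qc T lam σ π R)) := by
  unfold PhiN Phi
  exact tendsto_finset_sum _ fun i _ =>
    (tendsto_dreachN hl0 hl1 σ (T i) π).const_mul (qc i)

lemma Phi_le_x (M : MDP S A) (I : Finset ι) (qc : ι → ℝ) (T : ι → Set S) {lam : ℝ}
    (hl0 : 0 ≤ lam) (hl1 : lam < 1) (x : S → Finset ι → ℝ) (hx : Lop M I qc T lam x = x)
    {B : ℝ} (hB : ∀ s R, |x s R| ≤ B) (σ : Scheduler M) (π : Hist S A) (R : Finset ι) :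
    Phi M I qc T lam σ π R ≤ x (Hist.last π) R := by
  have t1 := tendsto_PhiN M I qc T hl0 (le_of_lt hl1) σ π R
  have t2 : Tendsto (fun n : ℕ => x (Hist.last π) R + lam ^ n * ((∑ i ∈ I, |qc i|) + B))
      atTop (nhds (x (Hist.last π) R)) := by
    have h0 : Tendsto (fun n : ℕ => lam ^ n) atTop (nhds 0) :=
      tendsto_pow_atTop_nhds_zero_of_lt_one hl0 hl1
    have := (h0.mul_const ((∑ i ∈ I, |qc i|) + B)).const_add (x (Hist.last π) R)
    simpa using this
  exact le_of_tendsto_of_tendsto' t1 t2 fun n => PhiN_le_x M I qc T x hl0 hx hB n σ π R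

lemma Phi_ge_x (M : MDP S A) (I : Finset ι) (qc : ι → ℝ) (T : ι → Set S) {lam : ℝ}
    (hl0 : 0 ≤ lam) (hl1 : lam < 1) (x : S → Finset ι → ℝ) (hx : Lop M I qc T lam x = x)
    {B : ℝ} (hB : ∀ s R, |x s R| ≤ B) (p : S → Finset ι → A)
    (hpe : ∀ s R, M.enabled s (p s R))
    (hp2 : ∀ s R, (∑ s', M.P s (p s R) s' * x s' R) = Amax M x s R)
    (π : Hist S A) (R : Finset ι)
    (hvis : visited (hset I T) π = R ∪ hset I T (Hist.last π)) :
    x (Hist.last π) R ≤ Phi M I qc T lam (polSched M (hset I T) p hpe) π R := by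
  have t1 := tendsto_PhiN M I qc T hl0 (le_of_lt hl1) (polSched M (hset I T) p hpe) π R
  have t2 : Tendsto (fun n : ℕ => x (Hist.last π) R - lam ^ n * ((∑ i ∈ I, |qc i|) + B))
      atTop (nhds (x (Hist.last π) R)) := by
    have h0 : Tendsto (fun n : ℕ => lam ^ n) atTop (nhds 0) :=
      tendsto_pow_atTop_nhds_zero_of_lt_one hl0 hl1
    have := (h0.mul_const ((∑ i ∈ I, |qc i|) + B)).const_sub (x (Hist.last π) R)
    simpa using this
  exact le_of_tendsto_of_tendsto' t2 t1 fun n =>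
    PhiN_ge_x M I qc T x hl0 hx hB p hpe hp2 n π R hvis

lemma Phi_empty (M : MDP S A) (I : Finset ι) (qc : ι → ℝ) (T : ι → Set S) (lam : ℝ)
    (σ : Scheduler M) (π : Hist S A) :
    Phi M I qc T lam σ π ∅ = ∑ i ∈ I, qc i * dPrH M lam σ (T i) π := by
  unfold Phi
  rw [Finset.sdiff_empty]

/-- Existence of an optimal product-memoryless policy for the discounted objective. -/
lemma disc_opt (M : MDP S A) (I : Finset ι) (qc : ι → ℝ) (T : ι → Set S) {lam : ℝ}
    (hl0 : 0 ≤ lam) (hl1 : lam < 1) (s₀ : S) :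
    ∃ (p : S → Finset ι → A) (hpe : ∀ s R, M.enabled s (p s R)),
      ∀ σ : Scheduler M,
        Phi M I qc T lam σ (s₀, []) ∅
          ≤ Phi M I qc T lam (polSched M (hset I T) p hpe) (s₀, []) ∅ := by
  obtain ⟨x, hx⟩ := exists_fixed M I qc T hl0 hl1
  obtain ⟨B, hB0, hB⟩ := exists_bound x
  obtain ⟨p, hp⟩ := exists_greedy M x
  have hpe : ∀ s R, M.enabled s (p s R) := fun s R => (mem_enab_iff M s _).1 (hp s R).1
  refine ⟨p, hpe, fun σ => ?_⟩
  have h1 : Phi M I qc T lam σ (s₀, []) ∅ ≤ x s₀ ∅ :=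
    Phi_le_x M I qc T hl0 hl1 x hx hB σ (s₀, []) ∅
  have h2 : x s₀ ∅ ≤ Phi M I qc T lam (polSched M (hset I T) p hpe) (s₀, []) ∅ := by
    refine Phi_ge_x M I qc T hl0 hl1 x hx hB p hpe (fun s R => (hp s R).2) (s₀, []) ∅ ?_
    rw [visited_nil, last_nil, Finset.empty_union]
  exact le_trans h1 h2

end Attain3

end RR
namespace RR
set_option linter.unusedSectionVars false
set_option linter.unusedVariables false

variable {S A : Type*} [Fintype S] [Fintype A]

section Attain4

variable {ι : Type*} [Fintype ι]

lemma J_gap (M : MDP S A) (I : Finset ι) (qc : ι → ℝ) (T : ι → Set S) (s₀ : S)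
    (σ : Scheduler M) {δ : ℝ} (hδ : 0 < δ) :
    ∃ lam₀ : ℝ, 0 ≤ lam₀ ∧ lam₀ < 1 ∧ ∀ lam : ℝ, lam₀ ≤ lam → lam < 1 →
      |(∑ i ∈ I, qc i * dPrH M lam σ (T i) (s₀, [])) -
        ∑ i ∈ I, qc i * PrH M σ (T i) (s₀, [])| ≤ δ := by
  set Q := ∑ i ∈ I, |qc i| with hQ
  have hQ0 : 0 ≤ Q := Finset.sum_nonneg fun i _ => abs_nonneg _
  set ε := δ / (Q + 1) with hε
  have hε0 : 0 < ε := div_pos hδ (by linarith)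
  have hex : ∀ i : ι, ∃ k : ℕ,
      PrH M σ (T i) (s₀, []) - ε / 2 < reachN M σ (T i) k (s₀, []) := by
    intro i
    apply exists_lt_of_lt_ciSup
    show PrH M σ (T i) (s₀, []) - ε / 2 < PrH M σ (T i) (s₀, [])
    linarith
  choose nfun hn using hex
  set N := I.sup nfun with hN
  set lam₀ := max 0 (1 - ε / (2 * (N + 1))) with hlam₀
  have hNpos : (0:ℝ) < 2 * ((N:ℝ) + 1) := by positivity
  refine ⟨lam₀, le_max_left _ _, ?_, ?_⟩
  · refine max_lt one_pos ?_
    have : 0 < ε / (2 * ((N:ℝ) + 1)) := by positivity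
    linarith
  · intro lam hlam hlam1
    have hl0 : 0 ≤ lam := le_trans (le_max_left _ _) hlam
    have hgap : (1:ℝ) - lam ≤ ε / (2 * ((N:ℝ) + 1)) := by
      have := le_trans (le_max_right _ _) hlam
      linarith
    have key : ∀ i ∈ I, |dPrH M lam σ (T i) (s₀, []) - PrH M σ (T i) (s₀, [])| ≤ ε := by
      intro i hi
      have h1 : dPrH M lam σ (T i) (s₀, []) ≤ PrH M σ (T i) (s₀, []) :=
        dPrH_le_PrH hl0 (le_of_lt hlam1) σ (T i) _
      have h2 : PrH M σ (T i) (s₀, []) ≤ dPrH M lam σ (T i) (s₀, []) + ε := by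
        have hr := hn i
        have hmono : reachN M σ (T i) (nfun i) (s₀, []) ≤ reachN M σ (T i) N (s₀, []) :=
          reachN_monotone σ (T i) _ (Finset.le_sup hi)
        have hsub := reachN_sub_dreachN hl0 (le_of_lt hlam1) σ (T i) N (s₀, [])
        have hd := dreachN_le_dPrH hl0 (le_of_lt hlam1) σ (T i) N (s₀, [])
        have hNlam : (N:ℝ) * (1 - lam) ≤ ε / 2 := by
          calc (N:ℝ) * (1 - lam) ≤ (N:ℝ) * (ε / (2 * ((N:ℝ) + 1))) :=
              mul_le_mul_of_nonneg_left hgap (Nat.cast_nonneg N)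
            _ ≤ ε / 2 := by
              have hNc : (0:ℝ) ≤ N := Nat.cast_nonneg N
              have h3 : (N:ℝ) * (ε / (2*((N:ℝ)+1))) = (N:ℝ)*ε / (2*((N:ℝ)+1)) := by ring
              rw [h3, div_le_div_iff₀ hNpos (by norm_num : (0:ℝ) < 2)]
              nlinarith
        linarith
      rw [abs_le]
      constructor <;> linarith
    have heq : (∑ i ∈ I, qc i * dPrH M lam σ (T i) (s₀, [])) -
        ∑ i ∈ I, qc i * PrH M σ (T i) (s₀, [])
        = ∑ i ∈ I, qc i * (dPrH M lam σ (T i) (s₀, []) - PrH M σ (T i) (s₀, [])) := by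
      rw [← Finset.sum_sub_distrib]
      exact Finset.sum_congr rfl fun i _ => by ring
    rw [heq]
    calc |∑ i ∈ I, qc i * (dPrH M lam σ (T i) (s₀, []) - PrH M σ (T i) (s₀, []))|
        ≤ ∑ i ∈ I, |qc i * (dPrH M lam σ (T i) (s₀, []) - PrH M σ (T i) (s₀, []))| :=
          Finset.abs_sum_le_sum_abs _ _
      _ ≤ ∑ i ∈ I, |qc i| * ε := by
          refine Finset.sum_le_sum fun i hi => ?_
          rw [abs_mul]
          exact mul_le_mul_of_nonneg_left (key i hi) (abs_nonneg _)
      _ = Q * ε := by rw [← Finset.sum_mul]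
      _ ≤ δ := by
          rw [hε]
          have h1 : (0:ℝ) < Q + 1 := by linarith
          have h2 : Q * (δ / (Q + 1)) = Q * δ / (Q + 1) := by ring
          rw [h2, div_le_iff₀ h1]
          nlinarith

lemma polSched_congr (M : MDP S A) (h : S → Finset ι) (p₁ p₂ : S → Finset ι → A)
    (h₁ : ∀ s R, M.enabled s (p₁ s R)) (h₂ : ∀ s R, M.enabled s (p₂ s R))
    (heq : p₁ = p₂) : polSched M h p₁ h₁ = polSched M h p₂ h₂ := by
  subst heq
  rfl

/-- The vanishing-discount sequence. -/
noncomputable def lamk (k : ℕ) : ℝ := 1 - 1 / (k + 2)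

lemma lamk_nonneg (k : ℕ) : 0 ≤ lamk k := by
  unfold lamk
  have h1 : (0:ℝ) < (k:ℝ) + 2 := by positivity
  have : 1 / ((k:ℝ) + 2) ≤ 1 := by
    rw [div_le_one h1]; linarith
  linarith

lemma lamk_lt_one (k : ℕ) : lamk k < 1 := by
  unfold lamk
  have h1 : (0:ℝ) < 1 / ((k:ℝ) + 2) := by positivity
  linarith

lemma lamk_mono {k k' : ℕ} (h : k ≤ k') : lamk k ≤ lamk k' := by
  unfold lamk
  have h1 : (0:ℝ) < (k:ℝ) + 2 := by positivity
  have h2 : (k:ℝ) + 2 ≤ (k':ℝ) + 2 := by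
    have : (k:ℝ) ≤ (k':ℝ) := Nat.cast_le.2 h
    linarith
  have := one_div_le_one_div_of_le h1 h2
  linarith

lemma exists_lamk_ge (c : ℝ) (hc : c < 1) : ∃ k : ℕ, c ≤ lamk k := by
  obtain ⟨k, hk⟩ := exists_nat_gt (1 / (1 - c))
  refine ⟨k, ?_⟩
  unfold lamk
  have h1c : 0 < 1 - c := by linarith
  have h2 : (0:ℝ) < (k:ℝ) + 2 := by positivity
  have h3 : 1 / (1 - c) < (k:ℝ) + 2 := by linarith
  have h4 : 1 / ((k:ℝ) + 2) < 1 - c := by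
    rw [div_lt_iff₀ h2]
    rw [div_lt_iff₀ h1c] at h3
    nlinarith
  linarith

/-- **Attainment**: there is a scheduler maximizing a weighted combination of
reachability probabilities. -/
theorem exists_opt (M : MDP S A) (I : Finset ι) (qc : ι → ℝ) (T : ι → Set S) (s₀ : S) :
    ∃ σs : Scheduler M, ∀ σ : Scheduler M,
      ∑ i ∈ I, qc i * PrH M σ (T i) (s₀, []) ≤ ∑ i ∈ I, qc i * PrH M σs (T i) (s₀, []) := by
  have hopt : ∀ k : ℕ, ∃ (p : S → Finset ι → A) (hpe : ∀ s R, M.enabled s (p s R)),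
      ∀ σ : Scheduler M,
        Phi M I qc T (lamk k) σ (s₀, []) ∅
          ≤ Phi M I qc T (lamk k) (polSched M (hset I T) p hpe) (s₀, []) ∅ :=
    fun k => disc_opt M I qc T (lamk_nonneg k) (lamk_lt_one k) s₀
  set F : ℕ → (S → Finset ι → A) := fun k => (hopt k).choose with hF
  obtain ⟨p, hfibc⟩ := Finite.exists_infinite_fiber F
  have hfib : (F ⁻¹' {p}).Infinite := Set.infinite_coe_iff.mp hfibc
  obtain ⟨k₁, hk₁⟩ := hfib.nonempty
  have hk₁' : F k₁ = p := by simpa using hk₁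
  have hpe : ∀ s R, M.enabled s (p s R) := by
    rw [← hk₁']
    exact (hopt k₁).choose_spec.choose
  refine ⟨polSched M (hset I T) p hpe, fun σ => ?_⟩
  set σs := polSched M (hset I T) p hpe with hσs
  refine le_of_forall_pos_le_add fun ε hε => ?_
  have hδ : 0 < ε / 2 := by linarith
  obtain ⟨l₁, hl₁0, hl₁1, hg₁⟩ := J_gap M I qc T s₀ σ hδ
  obtain ⟨l₂, hl₂0, hl₂1, hg₂⟩ := J_gap M I qc T s₀ σs hδ
  obtain ⟨k₂, hk₂⟩ := exists_lamk_ge (max l₁ l₂) (max_lt hl₁1 hl₂1)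
  obtain ⟨k, hkfib, hkk₂⟩ := hfib.exists_gt k₂
  have hkp : F k = p := by simpa using hkfib
  have hlamk : max l₁ l₂ ≤ lamk k := le_trans hk₂ (lamk_mono (le_of_lt hkk₂))
  have hlam1 := lamk_lt_one k
  -- the discounted comparison at discount `lamk k`
  obtain ⟨hpek, hcomp⟩ := (hopt k).choose_spec
  have hcompσ := hcomp σ
  have hsched : polSched M (hset I T) ((hopt k).choose) hpek = σs := by
    rw [hσs]
    exact polSched_congr M (hset I T) _ _ _ _ hkp
  rw [hsched] at hcompσ
  rw [Phi_empty, Phi_empty] at hcompσ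
  have e1 := hg₁ (lamk k) (le_trans (le_trans (le_max_left _ _) hk₂)
    (lamk_mono (le_of_lt hkk₂))) hlam1
  have e2 := hg₂ (lamk k) (le_trans (le_trans (le_max_right _ _) hk₂)
    (lamk_mono (le_of_lt hkk₂))) hlam1
  rw [abs_le] at e1 e2
  have ha := e1.1
  have hb := e1.2
  have hc := e2.1
  have hd := e2.2
  linarith

end Attain4

end RR
namespace RR
set_option linter.unusedSectionVars false
set_option linter.unusedVariables false

section Assemble

variable {S A : Type*} [Fintype S] [Fintype A] {m n : ℕ}
  (M : MDP S A) (q : Fin m → ℚ) (s : Fin m → S) (k : Fin m → Fin n) (T : Fin m → Set S)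

/-- The set of achievable contributions of a combination. -/
noncomputable def Vset (c : S × Fin n) : Set ℝ :=
  {x : ℝ | ∃ σ : Scheduler M, x = combVal M q s k T σ c}

lemma vMin_eq : vMin M q s k T = ∑ c ∈ combSet s k, sInf (Vset M q s k T c) := rfl

lemma vMax_eq : vMax M q s k T = ∑ c ∈ combSet s k, sSup (Vset M q s k T c) := rfl

lemma Vset_nonempty (c : S × Fin n) : (Vset M q s k T c).Nonempty :=
  ⟨combVal M q s k T (defaultSched M) c, defaultSched M, rfl⟩

lemma Pr_mem_Icc (σ : Scheduler M) (st : S) (Tt : Set S) : Pr M σ st Tt ∈ Set.Icc (0:ℝ) 1 :=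
  ⟨PrH_nonneg σ Tt _, PrH_le_one σ Tt _⟩

lemma combVal_abs_le (σ : Scheduler M) (c : S × Fin n) :
    |combVal M q s k T σ c|
      ≤ ∑ i ∈ Finset.univ.filter (fun i => (s i, k i) = c), |(q i : ℝ)| := by
  unfold combVal
  calc |∑ i ∈ Finset.univ.filter (fun i => (s i, k i) = c), (q i : ℝ) * Pr M σ c.1 (T i)|
      ≤ ∑ i ∈ Finset.univ.filter (fun i => (s i, k i) = c), |(q i : ℝ) * Pr M σ c.1 (T i)| :=
        Finset.abs_sum_le_sum_abs _ _
    _ ≤ ∑ i ∈ Finset.univ.filter (fun i => (s i, k i) = c), |(q i : ℝ)| := by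
        refine Finset.sum_le_sum fun i _ => ?_
        rw [abs_mul]
        have h := Pr_mem_Icc M σ c.1 (T i)
        have h1 : |Pr M σ c.1 (T i)| ≤ 1 := by
          rw [abs_of_nonneg h.1]; exact h.2
        calc |(q i : ℝ)| * |Pr M σ c.1 (T i)| ≤ |(q i : ℝ)| * 1 :=
            mul_le_mul_of_nonneg_left h1 (abs_nonneg _)
          _ = |(q i : ℝ)| := mul_one _

lemma Vset_bddAbove (c : S × Fin n) : BddAbove (Vset M q s k T c) := by
  refine ⟨∑ i ∈ Finset.univ.filter (fun i => (s i, k i) = c), |(q i : ℝ)|, ?_⟩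
  rintro x ⟨σ, rfl⟩
  exact le_trans (le_abs_self _) (combVal_abs_le M q s k T σ c)

lemma Vset_bddBelow (c : S × Fin n) : BddBelow (Vset M q s k T c) := by
  refine ⟨-∑ i ∈ Finset.univ.filter (fun i => (s i, k i) = c), |(q i : ℝ)|, ?_⟩
  rintro x ⟨σ, rfl⟩
  have := combVal_abs_le M q s k T σ c
  rw [abs_le] at this
  exact this.1

lemma exists_max_combVal (c : S × Fin n) :
    ∃ σM : Scheduler M, ∀ σ, combVal M q s k T σ c ≤ combVal M q s k T σM c := by
  obtain ⟨σM, h⟩ := exists_opt M (Finset.univ.filter (fun i => (s i, k i) = c))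
    (fun i => (q i : ℝ)) T c.1
  exact ⟨σM, fun σ => h σ⟩

lemma exists_min_combVal (c : S × Fin n) :
    ∃ σm : Scheduler M, ∀ σ, combVal M q s k T σm c ≤ combVal M q s k T σ c := by
  obtain ⟨σm, h⟩ := exists_opt M (Finset.univ.filter (fun i => (s i, k i) = c))
    (fun i => -(q i : ℝ)) T c.1
  refine ⟨σm, fun σ => ?_⟩
  have h1 := h σ
  have e : ∀ σ' : Scheduler M,
      ∑ i ∈ Finset.univ.filter (fun i => (s i, k i) = c),
        (-(q i : ℝ)) * PrH M σ' (T i) (c.1, [])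
      = - combVal M q s k T σ' c := by
    intro σ'
    unfold combVal
    rw [← Finset.sum_neg_distrib]
    exact Finset.sum_congr rfl fun i _ => by rw [Pr_eq_PrH]; ring
  rw [e σ, e σm] at h1
  linarith

lemma sSup_attained (c : S × Fin n) :
    ∃ σM : Scheduler M, combVal M q s k T σM c = sSup (Vset M q s k T c) := by
  obtain ⟨σM, hM⟩ := exists_max_combVal M q s k T c
  refine ⟨σM, le_antisymm (le_csSup (Vset_bddAbove M q s k T c) ⟨σM, rfl⟩) ?_⟩
  refine csSup_le (Vset_nonempty M q s k T c) ?_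
  rintro x ⟨σ, rfl⟩
  exact hM σ

lemma sInf_attained (c : S × Fin n) :
    ∃ σm : Scheduler M, combVal M q s k T σm c = sInf (Vset M q s k T c) := by
  obtain ⟨σm, hm⟩ := exists_min_combVal M q s k T c
  refine ⟨σm, le_antisymm ?_ (csInf_le (Vset_bddBelow M q s k T c) ⟨σm, rfl⟩)⟩
  refine le_csInf (Vset_nonempty M q s k T c) ?_
  rintro x ⟨σ, rfl⟩
  exact hm σ

lemma sInf_le_sSup_V (c : S × Fin n) :
    sInf (Vset M q s k T c) ≤ sSup (Vset M q s k T c) :=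
  csInf_le_csSup (Vset_nonempty M q s k T c) (Vset_bddBelow M q s k T c)
    (Vset_bddAbove M q s k T c)

lemma mix_combVal (σ₀ σ₁ : Scheduler M) (t : ℝ) (h0 : 0 ≤ t) (h1 : t ≤ 1) (c : S × Fin n) :
    combVal M q s k T (mixSched σ₀ σ₁ t h0 h1) c
      = (1 - t) * combVal M q s k T σ₀ c + t * combVal M q s k T σ₁ c := by
  unfold combVal
  rw [Finset.mul_sum, Finset.mul_sum, ← Finset.sum_add_distrib]
  refine Finset.sum_congr rfl fun i _ => ?_
  rw [mix_Pr]
  ring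

lemma attain_t (c : S × Fin n) (t : ℝ) (h0 : 0 ≤ t) (h1 : t ≤ 1) :
    ∃ σ : Scheduler M, combVal M q s k T σ c
      = (1 - t) * sInf (Vset M q s k T c) + t * sSup (Vset M q s k T c) := by
  obtain ⟨σm, hm⟩ := sInf_attained M q s k T c
  obtain ⟨σM, hM⟩ := sSup_attained M q s k T c
  exact ⟨mixSched σm σM t h0 h1, by rw [mix_combVal, hm, hM]⟩

lemma group_sum (σf : Fin n → Scheduler M) :
    ∑ i, (q i : ℝ) * Pr M (σf (k i)) (s i) (T i)
      = ∑ c ∈ combSet s k, combVal M q s k T (σf c.2) c := by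
  rw [show (∑ c ∈ combSet s k, combVal M q s k T (σf c.2) c)
      = ∑ c ∈ combSet s k, ∑ i ∈ Finset.univ.filter (fun i => (s i, k i) = c),
        (q i : ℝ) * Pr M (σf (k i)) (s i) (T i) from ?_]
  · exact (Finset.sum_fiberwise_of_maps_to (fun i _ => Finset.mem_image.2
      ⟨i, Finset.mem_univ i, rfl⟩) _).symm
  · refine Finset.sum_congr rfl fun c hc => ?_
    unfold combVal
    refine Finset.sum_congr rfl fun i hi => ?_
    have h : (s i, k i) = c := (Finset.mem_filter.1 hi).2
    rw [← h]

lemma bounds_ach (σf : Fin n → Scheduler M) :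
    vMin M q s k T ≤ ∑ i, (q i : ℝ) * Pr M (σf (k i)) (s i) (T i)
      ∧ ∑ i, (q i : ℝ) * Pr M (σf (k i)) (s i) (T i) ≤ vMax M q s k T := by
  rw [group_sum, vMin_eq, vMax_eq]
  constructor
  · exact Finset.sum_le_sum fun c _ =>
      csInf_le (Vset_bddBelow M q s k T c) ⟨σf c.2, rfl⟩
  · exact Finset.sum_le_sum fun c _ =>
      le_csSup (Vset_bddAbove M q s k T c) ⟨σf c.2, rfl⟩

lemma vMin_le_vMax : vMin M q s k T ≤ vMax M q s k T := by
  rw [vMin_eq, vMax_eq]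
  exact Finset.sum_le_sum fun c _ => sInf_le_sSup_V M q s k T c

lemma achieve_t (t : ℝ) (h0 : 0 ≤ t) (h1 : t ≤ 1) :
    ∃ σf : Fin n → Scheduler M,
      ∑ i, (q i : ℝ) * Pr M (σf (k i)) (s i) (T i)
        = (1 - t) * vMin M q s k T + t * vMax M q s k T := by
  have hall : ∀ c : S × Fin n, ∃ σ : Scheduler M, combVal M q s k T σ c
      = (1 - t) * sInf (Vset M q s k T c) + t * sSup (Vset M q s k T c) :=
    fun c => attain_t M q s k T c t h0 h1
  choose g hg using hall
  refine ⟨fun j => glueSched (fun st => g (st, j)), ?_⟩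
  rw [group_sum M q s k T (fun j => glueSched (fun st => g (st, j)))]
  have hc : ∀ c ∈ combSet s k, combVal M q s k T (glueSched (fun st => g (st, c.2))) c
      = (1 - t) * sInf (Vset M q s k T c) + t * sSup (Vset M q s k T c) := by
    intro c _
    have he : combVal M q s k T (glueSched (fun st => g (st, c.2))) c
        = combVal M q s k T (g c) c := by
      unfold combVal
      refine Finset.sum_congr rfl fun i _ => ?_
      rw [Pr_glue]
    rw [he, hg]
  rw [Finset.sum_congr rfl hc, Finset.sum_add_distrib, ← Finset.mul_sum, ← Finset.mul_sum,
    vMin_eq, vMax_eq]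

lemma achieve (v : ℝ) (hv : v ∈ Set.Icc (vMin M q s k T) (vMax M q s k T)) :
    ∃ σf : Fin n → Scheduler M,
      ∑ i, (q i : ℝ) * Pr M (σf (k i)) (s i) (T i) = v := by
  obtain ⟨h1, h2⟩ := hv
  by_cases hD : vMax M q s k T - vMin M q s k T = 0
  · obtain ⟨σf, hσf⟩ := achieve_t M q s k T 0 le_rfl zero_le_one
    refine ⟨σf, ?_⟩
    rw [hσf]
    have : v = vMin M q s k T := by linarith
    rw [this]
    ring
  · have hDpos : 0 < vMax M q s k T - vMin M q s k T :=
      lt_of_le_of_ne (by linarith [vMin_le_vMax M q s k T]) (Ne.symm hD)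
    set t := (v - vMin M q s k T) / (vMax M q s k T - vMin M q s k T) with ht
    have h0t : 0 ≤ t := div_nonneg (by linarith) (le_of_lt hDpos)
    have h1t : t ≤ 1 := by
      rw [ht, div_le_one hDpos]
      linarith
    obtain ⟨σf, hσf⟩ := achieve_t M q s k T t h0t h1t
    refine ⟨σf, ?_⟩
    rw [hσf, ht]
    field_simp
    ring

end Assemble

end RR
/-- For every rational `q₀` and every `ε ≥ 0`, there are schedulers
`σ₁,…,σₙ` with `|Σᵢ qᵢ · Pr^{σ_{k(i)}}_{sᵢ}(◇Tᵢ) − q₀| ≤ ε` if and only if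
`q₀ ∈ [v^min − ε, v^max + ε]`. -/
theorem approx_equality_iff_in_interval
    {S A : Type*} [Fintype S] [Fintype A] [Nonempty S] [Nonempty A]
    (M : MDP S A) {m n : ℕ} (hn : 1 ≤ n) (hmn : n ≤ m)
    (q : Fin m → ℚ) (s : Fin m → S) (k : Fin m → Fin n)
    (hk : Function.Surjective k) (T : Fin m → Set S)
    (q₀ : ℚ) (ε : ℝ) (hε : 0 ≤ ε) :
    (∃ σ : Fin n → Scheduler M,
        |(∑ i, (q i : ℝ) * Pr M (σ (k i)) (s i) (T i)) - (q₀ : ℝ)| ≤ ε) ↔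
      (q₀ : ℝ) ∈ Set.Icc (vMin M q s k T - ε) (vMax M q s k T + ε) := by
  constructor
  · rintro ⟨σf, habs⟩
    obtain ⟨hb1, hb2⟩ := RR.bounds_ach M q s k T σf
    rw [abs_le] at habs
    exact ⟨by linarith [habs.1, habs.2], by linarith [habs.1, habs.2]⟩
  · rintro ⟨h1, h2⟩
    have hmm := RR.vMin_le_vMax M q s k T
    set v := max (vMin M q s k T) (min (vMax M q s k T) (q₀ : ℝ)) with hv
    have hvIcc : v ∈ Set.Icc (vMin M q s k T) (vMax M q s k T) :=
      ⟨le_max_left _ _, max_le hmm (min_le_left _ _)⟩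
    obtain ⟨σf, hσf⟩ := RR.achieve M q s k T v hvIcc
    refine ⟨σf, ?_⟩
    rw [hσf, abs_le]
    constructor
    · rcases le_total (q₀ : ℝ) (vMax M q s k T) with hq | hq
      · have e : min (vMax M q s k T) (q₀ : ℝ) = (q₀ : ℝ) := min_eq_right hq
        have hvq : (q₀ : ℝ) ≤ v := by rw [hv, e]; exact le_max_right _ _
        linarith
      · have e : min (vMax M q s k T) (q₀ : ℝ) = vMax M q s k T := min_eq_left hq
        have hvq : v = vMax M q s k T := by rw [hv, e]; exact max_eq_right hmm
        linarith
    · rcases le_total (q₀ : ℝ) (vMin M q s k T) with hq | hq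
      · have e : min (vMax M q s k T) (q₀ : ℝ) = (q₀ : ℝ) := min_eq_right (le_trans hq hmm)
        have hvq : v = vMin M q s k T := by rw [hv, e]; exact max_eq_left hq
        linarith
      · have hvq : v ≤ (q₀ : ℝ) := max_le hq (min_le_right _ _)
        linarith
end
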